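/- arXiv:2212.12473 — 9 statements merged into one kernel-verified Lean document; each statement's English description precedes it below -/
import Mathlib

section
/- Let k ≥ 3 be an integer. Let F ⊆ ℕ with 0 ∉ F, let f'(n) = |F ∩ {0,1,…,n}| be the counting function of F, and suppose there is a real number α with α < (k-2)/k such that f'(n) = o(n^α) (i.e., f'(n)/n^α → 0 as n → ∞). Let A = ℕ \ F. Then the sequence (r(k,A,n))_{n≥0} is eventually strictly increasing: there exists N such that r(k,A,n) < r(k,A,n+1) for all n ≥ N. -/
open Finset Filter
open scoped Classical

/-- `r k A n` is the number of `k`-tuples `(c₁, …, c_k)` of elements of `A`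
with `c₁ + ⋯ + c_k = n`. -/
noncomputable def r (k : ℕ) (A : Set ℕ) (n : ℕ) : ℕ :=
  Set.ncard {c : Fin k → ℕ | (∀ i, c i ∈ A) ∧ ∑ i, c i = n}

noncomputable def cnt (A : Set ℕ) (j n : ℕ) : ℕ :=
  ((Finset.Nat.antidiagonalTuple j n).filter (fun c => ∀ i, c i ∈ A)).card

noncomputable def fc (F : Set ℕ) (n : ℕ) : ℕ := ((Finset.range (n+1)).filter (· ∈ F)).card

noncomputable def G (F : Set ℕ) : ℕ → ℕ → ℕ
  | 0, _ => 1
  | (s+1), n => (n+2)^s + fc F (n+1) * (G F s n + 1)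

noncomputable def Bb (F : Set ℕ) : ℕ → ℕ → ℕ
  | 0, n => if n ∈ F then 1 else 0
  | (s+1), n => fc F n * (n+1)^s + ∑ m ∈ Finset.range (n+1), Bb F s m

def tt (d n : ℕ) : ℕ := (n + d).choose d

lemma r_eq_cnt (k : ℕ) (A : Set ℕ) (n : ℕ) : r k A n = cnt A k n := by
  have : {c : Fin k → ℕ | (∀ i, c i ∈ A) ∧ ∑ i, c i = n}
      = ↑((Finset.Nat.antidiagonalTuple k n).filter (fun c => ∀ i, c i ∈ A)) := by
    ext c
    simp [Finset.Nat.mem_antidiagonalTuple, and_comm]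
  rw [r, this, Set.ncard_coe_finset, cnt]

lemma cnt_zero (A : Set ℕ) (n : ℕ) : cnt A 0 n = if n = 0 then 1 else 0 := by
  rcases n with _ | n
  · rw [cnt]
    simp [Finset.Nat.antidiagonalTuple_zero_zero]
  · rw [cnt]
    simp [Finset.Nat.antidiagonalTuple_zero_succ]

lemma cnt_succ (A : Set ℕ) (j n : ℕ) :
    cnt A (j+1) n = ∑ m ∈ Finset.range (n+1), if m ∈ A then cnt A j (n - m) else 0 := by
  rw [cnt, Finset.card_eq_sum_card_fiberwise (f := fun c => c 0) (t := Finset.range (n+1))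
    (fun c hc => by
      simp only [Finset.mem_coe, Finset.mem_filter, Finset.Nat.mem_antidiagonalTuple] at hc
      have : c 0 ≤ n := hc.1 ▸ Finset.single_le_sum (fun i _ => Nat.zero_le _) (Finset.mem_univ 0)
      simpa using Nat.lt_succ_of_le this)]
  apply Finset.sum_congr rfl
  intro m hm
  have hmn : m ≤ n := Nat.lt_succ_iff.mp (Finset.mem_range.mp hm)
  by_cases hmA : m ∈ A
  · rw [if_pos hmA, cnt]
    refine Finset.card_bij' (fun c _ => Fin.tail c) (fun d _ => Fin.cons m d) ?_ ?_ ?_ ?_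
    ·
      intro c hc
      simp only [Finset.mem_filter, Finset.Nat.mem_antidiagonalTuple] at hc ⊢
      obtain ⟨⟨hsum, hgood⟩, h0⟩ := hc
      rw [Fin.sum_univ_succ] at hsum
      refine ⟨?_, fun i => hgood i.succ⟩
      unfold Fin.tail
      omega
    ·
      intro d hd
      simp only [Finset.mem_filter, Finset.Nat.mem_antidiagonalTuple] at hd ⊢
      refine ⟨⟨?_, ?_⟩, ?_⟩
      · rw [Fin.sum_univ_succ]
        simp only [Fin.cons_zero, Fin.cons_succ]
        rw [hd.1]
        omega
      · intro i
        refine Fin.cases ?_ ?_ i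
        · simpa using hmA
        · intro i'; simpa using hd.2 i'
      · simp
    ·
      intro c hc
      simp only [Finset.mem_filter] at hc
      have h0 : c 0 = m := hc.2
      subst h0
      exact Fin.cons_self_tail c
    ·
      intro d hd
      simp [Fin.tail_cons]
  · rw [if_neg hmA]
    rw [Finset.card_eq_zero]
    apply Finset.filter_eq_empty_iff.mpr
    intro c hc
    simp only [Finset.mem_filter] at hc
    intro h0
    exact hmA (h0 ▸ hc.2 0)

lemma cnt_one (A : Set ℕ) (n : ℕ) : cnt A 1 n = if n ∈ A then 1 else 0 := by
  rw [cnt_succ]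
  rw [Finset.sum_eq_single n]
  · simp [cnt_zero]
  · intro m hm hne
    have : n - m ≠ 0 := by
      simp only [Finset.mem_range, Nat.lt_succ_iff] at hm
      omega
    simp [cnt_zero, this]
  · intro h
    exact absurd (Finset.self_mem_range_succ n) h

lemma cnt_le_pow (A : Set ℕ) (s n : ℕ) : cnt A (s+1) n ≤ (n+1)^s := by
  induction s generalizing n with
  | zero => rw [cnt_one]; split <;> simp
  | succ s ih =>
    rw [cnt_succ]
    calc ∑ m ∈ Finset.range (n+1), (if m ∈ A then cnt A (s+1) (n - m) else 0)
        ≤ ∑ m ∈ Finset.range (n+1), (n+1)^s := by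
          apply Finset.sum_le_sum
          intro m hm
          split
          · exact le_trans (ih (n-m)) (Nat.pow_le_pow_left (by omega) s)
          · exact Nat.zero_le _
      _ = (n+1) * (n+1)^s := by rw [Finset.sum_const, Finset.card_range, smul_eq_mul]
      _ = (n+1)^(s+1) := (pow_succ' _ _).symm

lemma fc_mono (F : Set ℕ) {n m : ℕ} (h : n ≤ m) : fc F n ≤ fc F m :=
  Finset.card_le_card (Finset.filter_subset_filter _ (Finset.range_subset_range.mpr (by omega)))

lemma fc_succ (F : Set ℕ) (n : ℕ) :
    fc F (n+1) = fc F n + (if n+1 ∈ F then 1 else 0) := by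
  rw [fc, fc, Finset.range_add_one, Finset.filter_insert]
  split
  · rw [Finset.card_insert_of_notMem (by simp)]
  · simp

lemma sum_ind_mul (F : Set ℕ) (n : ℕ) (v : ℕ) :
    ∑ m ∈ Finset.range (n+1), (if m ∈ F then v else 0) = fc F n * v := by
  rw [← Finset.sum_filter, Finset.sum_const, smul_eq_mul, fc]

lemma tt_succ (d n : ℕ) : tt (d+1) n = ∑ m ∈ Finset.range (n+1), tt d m := by
  induction n with
  | zero => simp [tt]
  | succ n ih =>
    rw [Finset.sum_range_succ, ← ih, tt, tt, tt]
    have : n + 1 + (d + 1) = (n + 1 + d) + 1 := by ring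
    rw [this, Nat.choose_succ_succ' (n+1+d) d, Nat.add_comm]
    congr 2 <;> omega

lemma pow_le_desc (d n : ℕ) : (n+1)^d ≤ (n + d).descFactorial d := by
  induction d with
  | zero => simp
  | succ d ih =>
    have : n + (d+1) = (n + d) + 1 := by ring
    rw [this, Nat.succ_descFactorial_succ]
    calc (n+1)^(d+1) = (n+1) * (n+1)^d := by rw [pow_succ']
    _ ≤ (n + d + 1) * (n+d).descFactorial d :=
      Nat.mul_le_mul (by omega) ih

lemma pow_le_tt_mul_fact (d n : ℕ) : (n+1)^d ≤ tt d n * d.factorial := by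
  have h : tt d n * d.factorial = (n + d).descFactorial d := by
    rw [tt, Nat.descFactorial_eq_factorial_mul_choose, mul_comm]
  rw [h]
  exact pow_le_desc d n

lemma G_mono (F : Set ℕ) (s : ℕ) {n m : ℕ} (h : n ≤ m) : G F s n ≤ G F s m := by
  induction s generalizing n m with
  | zero => simp [G]
  | succ s ih =>
    simp only [G]
    have h1 : (n+2)^s ≤ (m+2)^s := Nat.pow_le_pow_left (by omega) s
    have h2 : fc F (n+1) ≤ fc F (m+1) := fc_mono F (by omega)
    have h3 : G F s n + 1 ≤ G F s m + 1 := by have := ih h; omega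
    exact Nat.add_le_add h1 (Nat.mul_le_mul h2 h3)

section Main
variable (F A : Set ℕ) (hAF : ∀ m, m ∈ A ↔ m ∉ F)

noncomputable def badsum (s n : ℕ) : ℕ :=
  ∑ m ∈ Finset.range (n+1), if m ∈ F then cnt A (s+1) (n - m) else 0

include hAF in
lemma iden (s n : ℕ) :
    cnt A (s+1+1) n + badsum F A s n = ∑ m ∈ Finset.range (n+1), cnt A (s+1) m := by
  have : cnt A (s+1+1) n + badsum F A s n
      = ∑ m ∈ Finset.range (n+1), cnt A (s+1) (n - m) := by
    rw [cnt_succ, badsum, ← Finset.sum_add_distrib]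
    apply Finset.sum_congr rfl
    intro m _
    by_cases hm : m ∈ F
    · rw [if_neg (by rw [hAF]; exact fun h => h hm), if_pos hm, zero_add]
    · rw [if_pos ((hAF m).mpr hm), if_neg hm, add_zero]
  rw [this]
  have := Finset.sum_range_reflect (fun m => cnt A (s+1) m) (n+1)
  simp only [Nat.add_sub_cancel] at this
  rw [← this]

lemma badsum_le_succ (s n : ℕ)
    (hΔ : ∀ m, cnt A (s+1) (m+1) ≤ cnt A (s+1) m + G F s m) :
    badsum F A s (n+1) ≤ badsum F A s n + fc F (n+1) * (G F s n + 1) := by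
  have h1 : badsum F A s (n+1)
      = (∑ m ∈ Finset.range (n+1), if m ∈ F then cnt A (s+1) (n + 1 - m) else 0)
        + (if n+1 ∈ F then cnt A (s+1) 0 else 0) := by
    rw [badsum, Finset.sum_range_succ]
    simp
  have h2 : (∑ m ∈ Finset.range (n+1), if m ∈ F then cnt A (s+1) (n + 1 - m) else 0)
      ≤ badsum F A s n + fc F n * G F s n := by
    have step : (∑ m ∈ Finset.range (n+1), if m ∈ F then cnt A (s+1) (n + 1 - m) else 0)
        ≤ ∑ m ∈ Finset.range (n+1),
            ((if m ∈ F then cnt A (s+1) (n - m) else 0) + (if m ∈ F then G F s n else 0)) := by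
      apply Finset.sum_le_sum
      intro m hm
      simp only [Finset.mem_range, Nat.lt_succ_iff] at hm
      by_cases hmF : m ∈ F
      · simp only [if_pos hmF]
        have e : n + 1 - m = (n - m) + 1 := by omega
        rw [e]
        exact le_trans (hΔ (n-m)) (by have := G_mono F s (show n - m ≤ n by omega); omega)
      · simp [hmF]
    rw [Finset.sum_add_distrib, sum_ind_mul F n (G F s n)] at step
    exact step
  have h3 : cnt A (s+1) 0 ≤ 1 := by have := cnt_le_pow A s 0; simpa using this
  have h4 : fc F n ≤ fc F (n+1) := fc_mono F (by omega)
  have h5 : (if n+1 ∈ F then cnt A (s+1) 0 else 0) + fc F n ≤ fc F (n+1) := by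
    rw [fc_succ]
    split <;> omega
  have h6 : fc F n * G F s n ≤ fc F (n+1) * G F s n := Nat.mul_le_mul_right _ h4
  -- combine
  nlinarith [Nat.mul_le_mul_right (G F s n) h4]

lemma badsum_ge_succ (s n : ℕ)
    (hΔ : ∀ m, cnt A (s+1) m ≤ cnt A (s+1) (m+1) + G F s m) :
    badsum F A s n ≤ badsum F A s (n+1) + fc F (n+1) * G F s n := by
  have h1 : badsum F A s n
      ≤ (∑ m ∈ Finset.range (n+1), if m ∈ F then cnt A (s+1) (n + 1 - m) else 0)
        + fc F n * G F s n := by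
    have step : badsum F A s n ≤ ∑ m ∈ Finset.range (n+1),
        ((if m ∈ F then cnt A (s+1) (n + 1 - m) else 0) + (if m ∈ F then G F s n else 0)) := by
      rw [badsum]
      apply Finset.sum_le_sum
      intro m hm
      simp only [Finset.mem_range, Nat.lt_succ_iff] at hm
      by_cases hmF : m ∈ F
      · simp only [if_pos hmF]
        have e : n + 1 - m = (n - m) + 1 := by omega
        rw [e]
        have hmono := G_mono F s (show n - m ≤ n by omega)
        have h := hΔ (n-m)
        omega
      · simp [hmF]
    rw [Finset.sum_add_distrib, sum_ind_mul F n (G F s n)] at step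
    exact step
  have h2 : (∑ m ∈ Finset.range (n+1), if m ∈ F then cnt A (s+1) (n + 1 - m) else 0)
      ≤ badsum F A s (n+1) := by
    rw [badsum]
    exact Finset.sum_le_sum_of_subset (Finset.range_subset_range.mpr (by omega))
  have h4 : fc F n ≤ fc F (n+1) := fc_mono F (by omega)
  have h6 : fc F n * G F s n ≤ fc F (n+1) * G F s n := Nat.mul_le_mul_right _ h4
  omega

include hAF in
lemma delta_bound (s : ℕ) : ∀ n,
    cnt A (s+1) (n+1) ≤ cnt A (s+1) n + G F s n ∧
    cnt A (s+1) n ≤ cnt A (s+1) (n+1) + G F s n := by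
  induction s with
  | zero =>
    intro n
    rw [cnt_one, cnt_one]
    constructor <;> (split <;> split <;> simp [G])
  | succ s ih =>
    intro n
    have hΔu : ∀ m, cnt A (s+1) (m+1) ≤ cnt A (s+1) m + G F s m := fun m => (ih m).1
    have hΔl : ∀ m, cnt A (s+1) m ≤ cnt A (s+1) (m+1) + G F s m := fun m => (ih m).2
    have In : cnt A (s+1+1) n + badsum F A s n = ∑ m ∈ Finset.range (n+1), cnt A (s+1) m :=
      iden F A hAF s n
    have In1 : cnt A (s+1+1) (n+1) + badsum F A s (n+1)
        = (∑ m ∈ Finset.range (n+1), cnt A (s+1) m) + cnt A (s+1) (n+1) := by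
      rw [iden F A hAF s (n+1), Finset.sum_range_succ]
    have bu := badsum_le_succ F A s n hΔu
    have bl := badsum_ge_succ F A s n hΔl
    have hc : cnt A (s+1) (n+1) ≤ (n+2)^s := cnt_le_pow A s (n+1)
    have e1 : fc F (n+1) * (G F s n + 1) = fc F (n+1) * G F s n + fc F (n+1) := by ring
    simp only [G]
    constructor <;> omega

include hAF in
lemma lower_bound (s : ℕ) : ∀ n, tt s n ≤ cnt A (s+1) n + Bb F s n := by
  induction s with
  | zero =>
    intro n
    rw [cnt_one]
    simp only [tt, Nat.choose_zero_right, Bb]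
    by_cases hn : n ∈ F
    · rw [if_neg (by rw [hAF]; exact fun h => h hn), if_pos hn]
    · rw [if_pos ((hAF n).mpr hn)]; omega
  | succ s ih =>
    intro n
    have In : cnt A (s+1+1) n + badsum F A s n = ∑ m ∈ Finset.range (n+1), cnt A (s+1) m :=
      iden F A hAF s n
    have h1 : tt (s+1) n ≤ ∑ m ∈ Finset.range (n+1), (cnt A (s+1) m + Bb F s m) := by
      rw [tt_succ]
      exact Finset.sum_le_sum (fun m _ => ih m)
    rw [Finset.sum_add_distrib] at h1
    have h2 : badsum F A s n ≤ fc F n * (n+1)^s := by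
      rw [badsum, ← sum_ind_mul F n ((n+1)^s)]
      apply Finset.sum_le_sum
      intro m hm
      simp only [Finset.mem_range, Nat.lt_succ_iff] at hm
      by_cases hmF : m ∈ F
      · simp only [if_pos hmF]
        exact le_trans (cnt_le_pow A s (n-m)) (Nat.pow_le_pow_left (by omega) s)
      · simp [hmF]
    simp only [Bb]
    omega

include hAF in
lemma main_nat (s n : ℕ)
    (h : fc F (n+1) * (G F s n + 1) + Bb F s (n+1) < tt s (n+1)) :
    cnt A (s+1+1) n < cnt A (s+1+1) (n+1) := by
  have hΔu : ∀ m, cnt A (s+1) (m+1) ≤ cnt A (s+1) m + G F s m :=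
    fun m => (delta_bound F A hAF s m).1
  have In : cnt A (s+1+1) n + badsum F A s n = ∑ m ∈ Finset.range (n+1), cnt A (s+1) m :=
    iden F A hAF s n
  have In1 : cnt A (s+1+1) (n+1) + badsum F A s (n+1)
      = (∑ m ∈ Finset.range (n+1), cnt A (s+1) m) + cnt A (s+1) (n+1) := by
    rw [iden F A hAF s (n+1), Finset.sum_range_succ]
  have bu := badsum_le_succ F A s n hΔu
  have lo := lower_bound F A hAF s (n+1)
  omega

end Main

section Anal
variable (F : Set ℕ) (β : ℝ) (hβ0 : 0 ≤ β) (hβ1 : β < 1)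

/-- global bound on fc from the eventual one -/
lemma fc_glob (N : ℕ) (hN : ∀ n ≥ N, (fc F n : ℝ) ≤ ((n:ℝ)+2)^β) (hβ0 : 0 ≤ β) :
    ∃ C : ℝ, 0 < C ∧ ∀ n : ℕ, (fc F n : ℝ) ≤ C * ((n:ℝ)+2)^β := by
  refine ⟨(fc F N : ℝ) + 1, by positivity, fun n => ?_⟩
  have hpow1 : (1:ℝ) ≤ ((n:ℝ)+2)^β := by
    rw [show (1:ℝ) = ((n:ℝ)+2)^(0:ℝ) by rw [Real.rpow_zero]]
    exact Real.rpow_le_rpow_of_exponent_le (by push_cast; linarith [Nat.cast_nonneg (α := ℝ) n]) hβ0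
  rcases le_or_gt N n with h | h
  · calc (fc F n : ℝ) ≤ ((n:ℝ)+2)^β := hN n h
      _ ≤ ((fc F N : ℝ) + 1) * ((n:ℝ)+2)^β := by
          nlinarith [Real.rpow_pos_of_pos (show (0:ℝ) < (n:ℝ)+2 by positivity) β,
            Nat.cast_nonneg (α := ℝ) (fc F N)]
  · have : (fc F n : ℝ) ≤ (fc F N : ℝ) := by exact_mod_cast fc_mono F (le_of_lt h)
    calc (fc F n : ℝ) ≤ (fc F N : ℝ) + 1 := by linarith
      _ = ((fc F N : ℝ) + 1) * 1 := by ring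
      _ ≤ ((fc F N : ℝ) + 1) * ((n:ℝ)+2)^β := by
          apply mul_le_mul_of_nonneg_left hpow1 (by positivity)

end Anal

section Anal2
variable {F : Set ℕ} {β : ℝ} {C₀ : ℝ}

lemma one_le_X (n : ℕ) : (1:ℝ) ≤ (n:ℝ)+2 := by
  linarith [Nat.cast_nonneg (α := ℝ) n]

lemma X_pos (n : ℕ) : (0:ℝ) < (n:ℝ)+2 := by linarith [one_le_X n]

lemma one_le_rpow_X (n : ℕ) {e : ℝ} (he : 0 ≤ e) : (1:ℝ) ≤ ((n:ℝ)+2)^e := by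
  rw [show (1:ℝ) = ((n:ℝ)+2)^(0:ℝ) by rw [Real.rpow_zero]]
  exact Real.rpow_le_rpow_of_exponent_le (one_le_X n) he

lemma X_succ_le (n : ℕ) {e : ℝ} (he : 0 ≤ e) :
    (((n+1:ℕ):ℝ)+2)^e ≤ 2^e * ((n:ℝ)+2)^e := by
  have h1 : (((n+1:ℕ):ℝ)+2) ≤ 2*((n:ℝ)+2) := by push_cast; linarith [Nat.cast_nonneg (α := ℝ) n]
  calc (((n+1:ℕ):ℝ)+2)^e ≤ (2*((n:ℝ)+2))^e :=
        Real.rpow_le_rpow (by positivity) h1 he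
    _ = 2^e * ((n:ℝ)+2)^e := Real.mul_rpow (by norm_num) (le_of_lt (X_pos n))

lemma G_bound (hC₀pos : 0 < C₀) (hC₀ : ∀ n, (fc F n : ℝ) ≤ C₀ * ((n:ℝ)+2)^β)
    (hβ0 : 0 ≤ β) (hβ1 : β ≤ 1) (s : ℕ) :
    ∃ C : ℝ, 0 < C ∧ ∀ n, ((G F s n : ℝ) + 1) ≤ C * ((n:ℝ)+2) ^ (max ((s:ℝ)-1) (s*β)) := by
  induction s with
  | zero =>
    refine ⟨2, by norm_num, fun n => ?_⟩
    simp only [G, Nat.cast_zero, zero_mul, Nat.cast_one]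
    rw [show max ((0:ℝ)-1) (0:ℝ) = 0 by norm_num, Real.rpow_zero]
    norm_num
  | succ s ih =>
    obtain ⟨C, hCpos, hC⟩ := ih
    refine ⟨C₀*C*2^β + 2, by positivity, fun n => ?_⟩
    set Γ' : ℝ := max (((s+1:ℕ):ℝ)-1) ((s+1:ℕ)*β) with hΓ'
    have hΓ's : (s:ℝ) ≤ Γ' := by
      apply le_max_of_le_left; push_cast; linarith
    have hΓ'0 : (0:ℝ) ≤ Γ' := le_trans (Nat.cast_nonneg s) hΓ's
    have hβΓ : β + max ((s:ℝ)-1) (s*β) ≤ Γ' := by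
      rcases max_cases ((s:ℝ)-1) (s*β) with ⟨h, _⟩ | ⟨h, _⟩ <;> rw [h]
      · apply le_max_of_le_left; push_cast; linarith
      · apply le_max_of_le_right; push_cast; ring_nf; linarith
    have e1 : ((G F (s+1) n : ℝ) + 1)
        = ((n:ℝ)+2)^(s:ℕ) + (fc F (n+1) : ℝ) * ((G F s n : ℝ) + 1) + 1 := by
      simp only [G]; push_cast; ring
    rw [e1]
    have t1 : ((n:ℝ)+2)^(s:ℕ) ≤ ((n:ℝ)+2)^Γ' := by
      rw [← Real.rpow_natCast ((n:ℝ)+2) s]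
      exact Real.rpow_le_rpow_of_exponent_le (one_le_X n) hΓ's
    have t2 : (fc F (n+1) : ℝ) * ((G F s n : ℝ) + 1)
        ≤ (C₀*C*2^β) * ((n:ℝ)+2)^Γ' := by
      have a1 : (fc F (n+1) : ℝ) ≤ C₀ * (2^β * ((n:ℝ)+2)^β) := by
        calc (fc F (n+1) : ℝ) ≤ C₀ * (((n+1:ℕ):ℝ)+2)^β := hC₀ (n+1)
          _ ≤ C₀ * (2^β * ((n:ℝ)+2)^β) :=
            mul_le_mul_of_nonneg_left (X_succ_le n hβ0) (le_of_lt hC₀pos)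
      have a2 : ((G F s n : ℝ) + 1) ≤ C * ((n:ℝ)+2)^(max ((s:ℝ)-1) (s*β)) := hC n
      have a3 : (0:ℝ) ≤ (fc F (n+1) : ℝ) := Nat.cast_nonneg _
      calc (fc F (n+1) : ℝ) * ((G F s n : ℝ) + 1)
          ≤ (C₀ * (2^β * ((n:ℝ)+2)^β)) * (C * ((n:ℝ)+2)^(max ((s:ℝ)-1) (s*β))) := by
            apply mul_le_mul a1 a2 (by positivity) (by positivity)
        _ = (C₀*C*2^β) * (((n:ℝ)+2)^β * ((n:ℝ)+2)^(max ((s:ℝ)-1) (s*β))) := by ring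
        _ = (C₀*C*2^β) * ((n:ℝ)+2)^(β + max ((s:ℝ)-1) (s*β)) := by
            rw [← Real.rpow_add (X_pos n)]
        _ ≤ (C₀*C*2^β) * ((n:ℝ)+2)^Γ' := by
            apply mul_le_mul_of_nonneg_left
              (Real.rpow_le_rpow_of_exponent_le (one_le_X n) hβΓ) (by positivity)
    have t3 : (1:ℝ) ≤ ((n:ℝ)+2)^Γ' := one_le_rpow_X n hΓ'0
    have hXpos : (0:ℝ) < ((n:ℝ)+2)^Γ' := by positivity
    nlinarith [t1, t2, t3]

lemma Bb_bound (hC₀pos : 0 < C₀) (hC₀ : ∀ n, (fc F n : ℝ) ≤ C₀ * ((n:ℝ)+2)^β)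
    (hβ0 : 0 ≤ β) (s : ℕ) :
    ∃ C : ℝ, 0 < C ∧ ∀ n, (Bb F (s+1) n : ℝ) ≤ C * ((n:ℝ)+2) ^ ((s:ℝ)+β) := by
  induction s with
  | zero =>
    refine ⟨2*C₀, by positivity, fun n => ?_⟩
    have e1 : Bb F 1 n = fc F n * 1 + fc F n * 1 := by
      simp only [Bb, pow_zero]
      congr 1
      calc ∑ m ∈ Finset.range (n+1), Bb F 0 m
          = ∑ m ∈ Finset.range (n+1), (if m ∈ F then 1 else 0) := by
            apply Finset.sum_congr rfl; intro m _; simp [Bb]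
        _ = fc F n * 1 := sum_ind_mul F n 1
    rw [e1]
    push_cast
    rw [zero_add]
    have := hC₀ n
    linarith
  | succ s ih =>
    obtain ⟨C, hCpos, hC⟩ := ih
    refine ⟨C₀ + C, by positivity, fun n => ?_⟩
    have e1 : (Bb F (s+1+1) n : ℝ)
        = (fc F n : ℝ) * ((n+1:ℕ):ℝ)^(s+1:ℕ) + ∑ m ∈ Finset.range (n+1), (Bb F (s+1) m : ℝ) := by
      simp only [Bb]; push_cast; ring
    rw [e1]
    have t1 : (fc F n : ℝ) * ((n+1:ℕ):ℝ)^(s+1:ℕ) ≤ C₀ * ((n:ℝ)+2)^(((s+1:ℕ):ℝ)+β) := by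
      have a1 : ((n+1:ℕ):ℝ)^(s+1:ℕ) ≤ ((n:ℝ)+2)^(((s+1:ℕ)):ℝ) := by
        rw [Real.rpow_natCast]
        apply pow_le_pow_left₀ (by positivity) (by push_cast; linarith)
      calc (fc F n : ℝ) * ((n+1:ℕ):ℝ)^(s+1:ℕ)
          ≤ (C₀ * ((n:ℝ)+2)^β) * ((n:ℝ)+2)^(((s+1:ℕ)):ℝ) := by
            apply mul_le_mul (hC₀ n) a1 (by positivity) (by positivity)
        _ = C₀ * ((n:ℝ)+2)^(β + ((s+1:ℕ):ℝ)) := by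
            rw [mul_assoc, ← Real.rpow_add (X_pos n)]
        _ = C₀ * ((n:ℝ)+2)^(((s+1:ℕ):ℝ)+β) := by rw [add_comm β]
    have t2 : ∑ m ∈ Finset.range (n+1), (Bb F (s+1) m : ℝ)
        ≤ C * ((n:ℝ)+2)^(((s+1:ℕ):ℝ)+β) := by
      have a1 : ∀ m ∈ Finset.range (n+1), (Bb F (s+1) m : ℝ) ≤ C * ((n:ℝ)+2)^((s:ℝ)+β) := by
        intro m hm
        simp only [Finset.mem_range, Nat.lt_succ_iff] at hm
        calc (Bb F (s+1) m : ℝ) ≤ C * ((m:ℝ)+2)^((s:ℝ)+β) := hC m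
          _ ≤ C * ((n:ℝ)+2)^((s:ℝ)+β) := by
            apply mul_le_mul_of_nonneg_left _ (le_of_lt hCpos)
            apply Real.rpow_le_rpow (le_of_lt (X_pos m))
              (by have : (m:ℝ) ≤ (n:ℝ) := Nat.cast_le.mpr hm; linarith) (by positivity)
      calc ∑ m ∈ Finset.range (n+1), (Bb F (s+1) m : ℝ)
          ≤ ∑ _m ∈ Finset.range (n+1), C * ((n:ℝ)+2)^((s:ℝ)+β) := Finset.sum_le_sum a1
        _ = ((n+1:ℕ):ℝ) * (C * ((n:ℝ)+2)^((s:ℝ)+β)) := by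
            rw [Finset.sum_const, Finset.card_range]; push_cast; ring
        _ ≤ ((n:ℝ)+2) * (C * ((n:ℝ)+2)^((s:ℝ)+β)) := by
            apply mul_le_mul_of_nonneg_right (by push_cast; linarith) (by positivity)
        _ = C * (((n:ℝ)+2)^(1:ℝ) * ((n:ℝ)+2)^((s:ℝ)+β)) := by rw [Real.rpow_one]; ring
        _ = C * ((n:ℝ)+2)^(((s+1:ℕ):ℝ)+β) := by
            rw [← Real.rpow_add (X_pos n)]; push_cast; ring_nf
    linarith [t1, t2]

end Anal2

section FinalEv
variable {F : Set ℕ} {β C₀ : ℝ}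

lemma final_ev (hC₀pos : 0 < C₀) (hC₀ : ∀ n, (fc F n : ℝ) ≤ C₀ * ((n:ℝ)+2)^β)
    (hβ0 : 0 ≤ β) (hβ1 : β < 1) (u : ℕ) (hβs : (((u+1:ℕ):ℝ)+1)*β < ((u+1:ℕ):ℝ)) :
    ∃ N : ℕ, ∀ n ≥ N,
      fc F (n+1) * (G F (u+1) n + 1) + Bb F (u+1) (n+1) < tt (u+1) (n+1) := by
  set s : ℕ := u+1 with hsdef
  obtain ⟨CG, hCGpos, hCG⟩ := G_bound hC₀pos hC₀ hβ0 (le_of_lt hβ1) s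
  obtain ⟨CB, hCBpos, hCB⟩ := Bb_bound hC₀pos hC₀ hβ0 u
  set Γ : ℝ := max ((s:ℝ)-1) (s*β) with hΓdef
  set δ : ℝ := max (β + Γ) ((u:ℝ)+β) with hδdef
  have hΓ0 : 0 ≤ Γ := le_max_of_le_left (by push_cast [hsdef]; linarith [Nat.cast_nonneg (α := ℝ) u])
  have hδ0 : 0 ≤ δ := le_max_of_le_left (by linarith)
  have hδs : δ < (s:ℝ) := by
    have hβs' : ((s:ℝ)+1)*β < (s:ℝ) := by
      have e : ((s:ℕ):ℝ) = ((u+1:ℕ):ℝ) := by rw [hsdef]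
      rw [e]
      exact hβs
    have e2 : ((s:ℝ)+1)*β = (s:ℝ)*β + β := by ring
    have h1 : (s:ℝ)-1 < (s:ℝ) - β := by linarith
    have h2 : (s:ℝ)*β < (s:ℝ) - β := by linarith
    apply max_lt
    · have h3 : Γ < (s:ℝ) - β := max_lt h1 h2
      linarith
    · push_cast [hsdef]; linarith [Nat.cast_nonneg (α := ℝ) u]
  set D : ℝ := (s.factorial : ℝ) * (C₀ * 2^β * CG + CB * 2^((u:ℝ)+β)) with hDdef
  have hDpos : 0 < D := by
    apply mul_pos (by exact_mod_cast s.factorial_pos)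
    positivity
  have htend : Tendsto (fun n : ℕ => ((n:ℝ)+2)^((s:ℝ)-δ)) atTop atTop := by
    apply (tendsto_rpow_atTop (by linarith)).comp
    exact tendsto_atTop_add_const_right atTop 2 tendsto_natCast_atTop_atTop
  obtain ⟨N, hN⟩ := Filter.eventually_atTop.mp (htend.eventually_gt_atTop D)
  refine ⟨N, fun n hn => ?_⟩
  have hXδpos : (0:ℝ) < ((n:ℝ)+2)^δ := Real.rpow_pos_of_pos (X_pos n) δ
  -- real bound on LHS
  have b1 : (fc F (n+1) : ℝ) ≤ C₀ * 2^β * ((n:ℝ)+2)^β := by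
    calc (fc F (n+1) : ℝ) ≤ C₀ * (((n+1:ℕ):ℝ)+2)^β := hC₀ (n+1)
      _ ≤ C₀ * (2^β * ((n:ℝ)+2)^β) := mul_le_mul_of_nonneg_left (X_succ_le n hβ0) (le_of_lt hC₀pos)
      _ = C₀ * 2^β * ((n:ℝ)+2)^β := by ring
  have b2 : ((G F s n : ℝ) + 1) ≤ CG * ((n:ℝ)+2)^Γ := hCG n
  have b3 : (Bb F s (n+1) : ℝ) ≤ CB * 2^((u:ℝ)+β) * ((n:ℝ)+2)^((u:ℝ)+β) := by
    calc (Bb F s (n+1) : ℝ) ≤ CB * (((n+1:ℕ):ℝ)+2)^((u:ℝ)+β) := hCB (n+1)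
      _ ≤ CB * (2^((u:ℝ)+β) * ((n:ℝ)+2)^((u:ℝ)+β)) :=
          mul_le_mul_of_nonneg_left (X_succ_le n (by positivity)) (le_of_lt hCBpos)
      _ = CB * 2^((u:ℝ)+β) * ((n:ℝ)+2)^((u:ℝ)+β) := by ring
  have m1 : (fc F (n+1) : ℝ) * ((G F s n : ℝ) + 1)
      ≤ C₀ * 2^β * CG * ((n:ℝ)+2)^δ := by
    calc (fc F (n+1) : ℝ) * ((G F s n : ℝ) + 1)
        ≤ (C₀ * 2^β * ((n:ℝ)+2)^β) * (CG * ((n:ℝ)+2)^Γ) := by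
          apply mul_le_mul b1 b2 (by positivity) (by positivity)
      _ = C₀ * 2^β * CG * (((n:ℝ)+2)^β * ((n:ℝ)+2)^Γ) := by ring
      _ = C₀ * 2^β * CG * ((n:ℝ)+2)^(β+Γ) := by rw [← Real.rpow_add (X_pos n)]
      _ ≤ C₀ * 2^β * CG * ((n:ℝ)+2)^δ := by
          apply mul_le_mul_of_nonneg_left
            (Real.rpow_le_rpow_of_exponent_le (one_le_X n) (le_max_left _ _)) (by positivity)
  have m2 : (Bb F s (n+1) : ℝ) ≤ CB * 2^((u:ℝ)+β) * ((n:ℝ)+2)^δ := by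
    apply le_trans b3
    apply mul_le_mul_of_nonneg_left
      (Real.rpow_le_rpow_of_exponent_le (one_le_X n) (le_max_right _ _)) (by positivity)
  have mD : ((s.factorial : ℕ) : ℝ) * ((fc F (n+1) : ℝ) * ((G F s n : ℝ) + 1) + (Bb F s (n+1) : ℝ))
      ≤ D * ((n:ℝ)+2)^δ := by
    rw [hDdef]
    have hsf : (0:ℝ) ≤ (s.factorial : ℝ) := Nat.cast_nonneg _
    nlinarith [m1, m2]
  have hDX : D * ((n:ℝ)+2)^δ < ((n:ℝ)+2)^((s:ℝ)) := by
    have := hN n hn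
    calc D * ((n:ℝ)+2)^δ < ((n:ℝ)+2)^((s:ℝ)-δ) * ((n:ℝ)+2)^δ :=
        mul_lt_mul_of_pos_right this hXδpos
      _ = ((n:ℝ)+2)^((s:ℝ)) := by rw [← Real.rpow_add (X_pos n)]; ring_nf
  have hXtt : ((n:ℝ)+2)^((s:ℝ)) ≤ ((s.factorial : ℕ) : ℝ) * (tt s (n+1) : ℝ) := by
    have h := pow_le_tt_mul_fact s (n+1)
    have hcast : (((n+1+1:ℕ))^s : ℝ) ≤ ((tt s (n+1) * s.factorial : ℕ) : ℝ) := by exact_mod_cast h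
    push_cast at hcast
    rw [show ((n:ℝ)+1+1) = ((n:ℝ)+2) by ring] at hcast
    rw [← Real.rpow_natCast ((n:ℝ)+2) s] at hcast
    linarith
  -- conclude in ℕ
  have hR : ((s.factorial * (fc F (n+1) * (G F s n + 1) + Bb F s (n+1)) : ℕ) : ℝ)
      < ((s.factorial * tt s (n+1) : ℕ) : ℝ) := by
    push_cast
    calc ((s.factorial : ℕ):ℝ) * ((fc F (n+1) : ℝ) * ((G F s n : ℝ) + 1) + (Bb F s (n+1) : ℝ))
        ≤ D * ((n:ℝ)+2)^δ := mD
      _ < ((n:ℝ)+2)^((s:ℝ)) := hDX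
      _ ≤ ((s.factorial : ℕ) : ℝ) * (tt s (n+1) : ℝ) := hXtt
  have hRn : s.factorial * (fc F (n+1) * (G F s n + 1) + Bb F s (n+1))
      < s.factorial * tt s (n+1) := by exact_mod_cast hR
  exact Nat.lt_of_mul_lt_mul_left hRn

end FinalEv

theorem stmt_0 (k : ℕ) (hk : 3 ≤ k) (F : Set ℕ) (hF : 0 ∉ F)
    (f' : ℕ → ℕ) (hf' : ∀ n, f' n = (F ∩ Set.Iic n).ncard)
    (α : ℝ) (hα : α < ((k : ℝ) - 2) / k)
    (ho : Filter.Tendsto (fun n : ℕ => (f' n : ℝ) / (n : ℝ) ^ α)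
      Filter.atTop (nhds 0))
    (A : Set ℕ) (hA : A = Set.univ \ F) :
    ∃ N : ℕ, ∀ n ≥ N, r k A n < r k A (n + 1) := by
  obtain ⟨u, rfl⟩ : ∃ u, k = (u+1) + 2 := ⟨k - 3, by omega⟩
  set s : ℕ := u + 1 with hsdef
  have hAF : ∀ m, m ∈ A ↔ m ∉ F := by
    intro m; rw [hA]; simp
  -- f' equals fc
  have hffc : ∀ n, f' n = fc F n := by
    intro n
    rw [hf' n]
    have : F ∩ Set.Iic n = ↑((Finset.range (n+1)).filter (· ∈ F)) := by
      ext x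
      simp only [Set.mem_inter_iff, Set.mem_Iic, Finset.coe_filter, Finset.mem_range,
        Set.mem_setOf_eq, Nat.lt_succ_iff]
      tauto
    rw [this, Set.ncard_coe_finset, fc]
  -- beta
  set β : ℝ := max α 0 with hβdef
  have hkpos : (0:ℝ) < ((s+2:ℕ):ℝ) := by positivity
  have hfrac : ((((s+2:ℕ)):ℝ) - 2) / ((s+2:ℕ):ℝ) = ((s:ℕ):ℝ) / ((s+2:ℕ):ℝ) := by
    push_cast; ring_nf
  have hfracpos : 0 < (((s+2:ℕ):ℝ) - 2) / ((s+2:ℕ):ℝ) := by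
    rw [hfrac]
    apply div_pos (by positivity) hkpos
  have hβlt : β < (((s+2:ℕ):ℝ) - 2) / ((s+2:ℕ):ℝ) := max_lt hα hfracpos
  have hβ0 : 0 ≤ β := le_max_right _ _
  have hβ1 : β < 1 := by
    apply lt_of_lt_of_le hβlt
    rw [hfrac, div_le_one hkpos]
    push_cast; linarith
  have hβs : (((s:ℕ):ℝ)+1)*β < ((s:ℕ):ℝ) := by
    have h1 : (((s+2:ℕ)):ℝ) * β < ((s:ℕ):ℝ) := by
      rw [hfrac] at hβlt
      calc (((s+2:ℕ)):ℝ) * β < (((s+2:ℕ)):ℝ) * (((s:ℕ):ℝ) / ((s+2:ℕ):ℝ)) := by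
            apply mul_lt_mul_of_pos_left hβlt hkpos
        _ = ((s:ℕ):ℝ) := by field_simp
    have h2 : (((s:ℕ):ℝ)+1)*β ≤ (((s+2:ℕ)):ℝ) * β := by
      apply mul_le_mul_of_nonneg_right _ hβ0
      push_cast; linarith
    linarith
  -- eventual bound on fc
  have hev : ∀ᶠ n in atTop, (f' n : ℝ) / (n:ℝ)^α < 1 :=
    ho.eventually_lt_const (by norm_num)
  obtain ⟨N₀, hN₀⟩ := Filter.eventually_atTop.mp hev
  have hfcN : ∀ n ≥ max N₀ 1, (fc F n : ℝ) ≤ ((n:ℝ)+2)^β := by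
    intro n hn
    have hn1 : 1 ≤ n := le_trans (le_max_right _ _) hn
    have hn0 : (1:ℝ) ≤ (n:ℝ) := by exact_mod_cast hn1
    have hXα : (0:ℝ) < (n:ℝ)^α := Real.rpow_pos_of_pos (by linarith) α
    have hd := hN₀ n (le_trans (le_max_left _ _) hn)
    have hfa : (f' n : ℝ) < (n:ℝ)^α := by
      rw [div_lt_one hXα] at hd
      exact hd
    have c1 : (n:ℝ)^α ≤ (n:ℝ)^β := Real.rpow_le_rpow_of_exponent_le hn0 (le_max_left _ _)
    have c2 : (n:ℝ)^β ≤ ((n:ℝ)+2)^β := Real.rpow_le_rpow (by linarith) (by linarith) hβ0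
    rw [← hffc n]
    linarith
  obtain ⟨C₀, hC₀pos, hC₀⟩ := fc_glob F β (max N₀ 1) hfcN hβ0
  obtain ⟨N, hN⟩ := final_ev hC₀pos hC₀ hβ0 hβ1 u (by exact_mod_cast hβs)
  refine ⟨N, fun n hn => ?_⟩
  rw [r_eq_cnt, r_eq_cnt]
  exact main_nat F A hAF s n (hN n hn)
end

section
/- Let F = {2^{m+2} − 1 : m ∈ ℕ} = {3, 7, 15, 31, …} and A = ℕ \ F. Then the sequence (r(3,A,n))_{n≥0} is strictly increasing right from the start: r(3,A,0) ≥ 1 and r(3,A,n) < r(3,A,n+1) for all n ≥ 0. -/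
open Finset

def isF (x : ℕ) : Prop := ∃ m : ℕ, x = 2 ^ (m + 2) - 1

open scoped Classical in
noncomputable def vv (x : ℕ) : ℤ := if isF x then 1 else 0

noncomputable def uu (x : ℕ) : ℤ := 1 - vv x

noncomputable def LL (m : ℕ) : ℤ := ∑ a ∈ range (m+1), vv a
noncomputable def P2 (m : ℕ) : ℤ := ∑ a ∈ range (m+1), vv a * vv (m - a)
noncomputable def Q3 (m : ℕ) : ℤ := ∑ a ∈ range (m+1), vv a * P2 (m - a)
noncomputable def s2 (m : ℕ) : ℤ := ∑ a ∈ range (m+1), uu a * uu (m - a)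
noncomputable def s3 (m : ℕ) : ℤ := ∑ a ∈ range (m+1), uu a * s2 (m - a)
noncomputable def C1 (m : ℕ) : ℤ := ∑ a ∈ range (m+1), vv a * ((m - a : ℕ) + 1 : ℤ)
noncomputable def C2 (m : ℕ) : ℤ := ∑ a ∈ range (m+1), vv a * LL (m - a)
noncomputable def VS (m : ℕ) : ℤ := ∑ a ∈ range (m+1), vv a * s2 (m - a)

lemma isF_ge_three {x : ℕ} (h : isF x) : 3 ≤ x := by
  obtain ⟨m, rfl⟩ := h
  have : (2:ℕ)^2 ≤ 2 ^ (m+2) := Nat.pow_le_pow_right (by norm_num) (by omega)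
  omega

lemma vv_nonneg (x : ℕ) : 0 ≤ vv x := by unfold vv; split <;> norm_num

lemma vv_le_one (x : ℕ) : vv x ≤ 1 := by unfold vv; split <;> norm_num

lemma vv_of_lt_three {x : ℕ} (h : x < 3) : vv x = 0 := by
  unfold vv; rw [if_neg]; intro hf; exact absurd (isF_ge_three hf) (by omega)

lemma LL_nonneg (m : ℕ) : 0 ≤ LL m := Finset.sum_nonneg fun a _ => vv_nonneg a

lemma LL_succ (m : ℕ) : LL (m+1) = LL m + vv (m+1) := Finset.sum_range_succ _ _

lemma LL_mono {m m' : ℕ} (h : m ≤ m') : LL m ≤ LL m' :=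
  Finset.sum_le_sum_of_subset_of_nonneg (Finset.range_subset_range.mpr (by omega)) (fun a _ _ => vv_nonneg a)

lemma LL_two : LL 2 = 0 := by
  show ∑ a ∈ range 3, vv a = 0
  rw [Finset.sum_range_succ, Finset.sum_range_succ, Finset.sum_range_one]
  rw [vv_of_lt_three (by norm_num), vv_of_lt_three (by norm_num), vv_of_lt_three (by norm_num)]
  ring

lemma P2_nonneg (m : ℕ) : 0 ≤ P2 m :=
  Finset.sum_nonneg fun a _ => mul_nonneg (vv_nonneg a) (vv_nonneg _)

lemma Q3_nonneg (m : ℕ) : 0 ≤ Q3 m :=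
  Finset.sum_nonneg fun a _ => mul_nonneg (vv_nonneg a) (P2_nonneg _)

lemma sum_reflect (f : ℕ → ℤ) (m : ℕ) :
    ∑ a ∈ range (m+1), f (m - a) = ∑ a ∈ range (m+1), f a := by
  have := Finset.sum_range_reflect f (m+1)
  simpa using this

lemma s2_eq (m : ℕ) : s2 m = (m + 1 : ℤ) - 2 * LL m + P2 m := by
  unfold s2 uu
  have h : ∀ a ∈ range (m+1), (1 - vv a) * (1 - vv (m - a))
      = 1 - vv a - vv (m-a) + vv a * vv (m-a) := fun a _ => by ring
  rw [Finset.sum_congr rfl h]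
  rw [Finset.sum_add_distrib, Finset.sum_sub_distrib, Finset.sum_sub_distrib,
    sum_reflect vv m, Finset.sum_const, Finset.card_range]
  show ((m+1 : ℕ) : ℤ) • (1:ℤ) - LL m - LL m + P2 m = _
  push_cast
  rw [smul_eq_mul]
  ring

lemma C1_succ (m : ℕ) : C1 (m+1) = C1 m + LL (m+1) := by
  unfold C1
  rw [Finset.sum_range_succ]
  have h : ∀ a ∈ range (m+1), vv a * ((m + 1 - a : ℕ) + 1 : ℤ)
      = vv a * ((m - a : ℕ) + 1 : ℤ) + vv a := by
    intro a ha
    rw [Finset.mem_range] at ha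
    have : (m + 1 - a : ℕ) = (m - a) + 1 := by omega
    rw [this]; push_cast; ring
  rw [Finset.sum_congr rfl h, Finset.sum_add_distrib, LL_succ]
  simp [LL]
  ring

lemma C2_succ (m : ℕ) : C2 (m+1) = C2 m + P2 (m+1) := by
  unfold C2
  rw [Finset.sum_range_succ]
  have h : ∀ a ∈ range (m+1), vv a * LL (m + 1 - a)
      = vv a * LL (m - a) + vv a * vv (m + 1 - a) := by
    intro a ha
    rw [Finset.mem_range] at ha
    have h1 : (m + 1 - a : ℕ) = (m - a) + 1 := by omega
    rw [h1, LL_succ, ← h1]; ring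
  rw [Finset.sum_congr rfl h, Finset.sum_add_distrib]
  have hL0 : LL 0 = vv 0 := by simp [LL]
  have hP : P2 (m+1) = ∑ a ∈ range (m+1), vv a * vv (m + 1 - a) + vv (m+1) * vv 0 := by
    unfold P2
    rw [Finset.sum_range_succ]
    simp
  simp only [Nat.sub_self]
  rw [hP, hL0]
  ring

lemma VS_eq (m : ℕ) : VS m = C1 m - 2 * C2 m + Q3 m := by
  unfold VS
  have h : ∀ a ∈ range (m+1), vv a * s2 (m - a)
      = vv a * ((m - a : ℕ) + 1 : ℤ) - 2 * (vv a * LL (m - a)) + vv a * P2 (m - a) := by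
    intro a _
    rw [s2_eq]; ring
  rw [Finset.sum_congr rfl h, Finset.sum_add_distrib, Finset.sum_sub_distrib]
  unfold C1 C2 Q3
  rw [Finset.mul_sum]

lemma s3_eq (m : ℕ) : s3 m = (∑ a ∈ range (m+1), s2 a) - VS m := by
  unfold s3 uu
  have h : ∀ a ∈ range (m+1), (1 - vv a) * s2 (m - a)
      = s2 (m - a) - vv a * s2 (m - a) := fun a _ => by ring
  rw [Finset.sum_congr rfl h, Finset.sum_sub_distrib, sum_reflect s2 m]
  rfl

lemma s3_diff (n : ℕ) :
    s3 (n+1) = s3 n + (n + 2 : ℤ) - 3 * LL (n+1) + 3 * P2 (n+1) - Q3 (n+1) + Q3 n := by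
  have h1 : s3 (n+1) - s3 n = s2 (n+1) - (VS (n+1) - VS n) := by
    rw [s3_eq, s3_eq, Finset.sum_range_succ]
    ring
  have h2 : VS (n+1) - VS n = LL (n+1) - 2 * P2 (n+1) + Q3 (n+1) - Q3 n := by
    rw [VS_eq, VS_eq, C1_succ, C2_succ]
    ring
  have h3 := s2_eq (n+1)
  push_cast at h3 ⊢
  rw [h2, h3] at h1
  linarith

lemma P2_le (k : ℕ) : P2 k ≤ LL (k - 3) := by
  unfold P2
  have hsub : range ((k-3)+1) ⊆ range (k+1) := Finset.range_subset_range.mpr (by omega)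
  rw [← Finset.sum_subset hsub ?h0]
  · apply Finset.sum_le_sum
    intro a _
    calc vv a * vv (k - a) ≤ vv a * 1 :=
          mul_le_mul_of_nonneg_left (vv_le_one _) (vv_nonneg a)
      _ = vv a := mul_one _
  · intro x hx hx'
    rw [Finset.mem_range] at hx hx'
    have : k - x < 3 := by omega
    simp [vv_of_lt_three this]

lemma P2_zero {k : ℕ} (h : k ≤ 5) : P2 k = 0 := by
  have h1 := P2_le k
  have h2 : LL (k-3) ≤ LL 2 := LL_mono (by omega)
  have := P2_nonneg k
  rw [LL_two] at h2
  omega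

lemma Q3_le (m : ℕ) : Q3 m ≤ LL (m - 6) * LL (m - 6) := by
  unfold Q3
  have hsub : range ((m-6)+1) ⊆ range (m+1) := Finset.range_subset_range.mpr (by omega)
  rw [← Finset.sum_subset hsub ?h0]
  · calc ∑ a ∈ range ((m-6)+1), vv a * P2 (m - a)
        ≤ ∑ a ∈ range ((m-6)+1), vv a * LL (m - 6) := by
          apply Finset.sum_le_sum
          intro a _
          by_cases hva : isF a
          · have ha3 : 3 ≤ a := isF_ge_three hva
            have : P2 (m - a) ≤ LL (m - 6) :=
              le_trans (P2_le _) (LL_mono (by omega))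
            exact mul_le_mul_of_nonneg_left this (vv_nonneg a)
          · simp [vv, hva]
      _ = (∑ a ∈ range ((m-6)+1), vv a) * LL (m - 6) := by rw [Finset.sum_mul]
      _ = LL (m - 6) * LL (m - 6) := by rw [mul_comm]; rfl
  · intro x hx hx'
    rw [Finset.mem_range] at hx hx'
    have : m - x ≤ 5 := by omega
    rw [P2_zero this, mul_zero]

open scoped Classical in
noncomputable def Lc (m : ℕ) : ℕ := ((range (m+1)).filter isF).card

open scoped Classical in
lemma LL_eq_Lc (m : ℕ) : LL m = (Lc m : ℤ) := by
  unfold LL Lc vv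
  rw [Finset.card_filter]
  push_cast
  exact Finset.sum_congr rfl fun a _ => by split <;> simp

open scoped Classical in
lemma Lc_mono {m m' : ℕ} (h : m ≤ m') : Lc m ≤ Lc m' :=
  Finset.card_le_card (Finset.filter_subset_filter _ (Finset.range_subset_range.mpr (by omega)))

open scoped Classical in
lemma Lc_pow_le {m : ℕ} (h : 1 ≤ Lc m) : 2 ^ (Lc m + 1) ≤ m + 1 := by
  -- there is an element of F that is ≤ m
  obtain ⟨x, hx⟩ := Finset.card_pos.mp (h : 0 < ((range (m+1)).filter isF).card)
  rw [Finset.mem_filter, Finset.mem_range] at hx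
  have hm3 : 3 ≤ m := by have := isF_ge_three hx.2; omega
  have hlog2 : 2 ≤ Nat.log 2 (m+1) := by
    rw [Nat.le_log_iff_pow_le (by norm_num) (by omega)]
    omega
  have hsub : (range (m+1)).filter isF ⊆
      (range (Nat.log 2 (m+1) - 1)).image (fun p => 2 ^ (p+2) - 1) := by
    intro x hx'
    rw [Finset.mem_filter, Finset.mem_range] at hx'
    obtain ⟨p, rfl⟩ := hx'.2
    have hpow : 2 ^ (p+2) ≤ m + 1 := by
      have : (1:ℕ) ≤ 2 ^ (p+2) := Nat.one_le_two_pow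
      omega
    have hp : p + 2 ≤ Nat.log 2 (m+1) := (Nat.le_log_iff_pow_le (by norm_num) (by omega)).mpr hpow
    exact Finset.mem_image.mpr ⟨p, Finset.mem_range.mpr (by omega), rfl⟩
  have hcard : Lc m ≤ Nat.log 2 (m+1) - 1 := by
    calc Lc m ≤ _ := Finset.card_le_card hsub
      _ ≤ (range (Nat.log 2 (m+1) - 1)).card := Finset.card_image_le
      _ = Nat.log 2 (m+1) - 1 := Finset.card_range _
  calc 2 ^ (Lc m + 1) ≤ 2 ^ (Nat.log 2 (m+1)) :=
        Nat.pow_le_pow_right (by norm_num) (by omega)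
    _ ≤ m + 1 := Nat.pow_log_le_self 2 (by omega)

lemma two_mul_le_pow {k : ℕ} (h : 1 ≤ k) : 2*k + 2 ≤ 2 ^ (k+1) := by
  induction k with
  | zero => omega
  | succ n ih =>
    rcases Nat.eq_or_lt_of_le h with h1 | h1
    · simp [← h1]
    · have hn : 1 ≤ n := by omega
      have := ih hn
      have : 2 ^ (n+1) ≤ 2 ^ (n+2) := Nat.pow_le_pow_right (by norm_num) (by omega)
      omega

lemma two_mul_le_pow' {k : ℕ} (h : 2 ≤ k) : 2*k + 4 ≤ 2 ^ (k+1) := by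
  induction k with
  | zero => omega
  | succ n ih =>
    rcases Nat.eq_or_lt_of_le h with h1 | h1
    · rw [← h1]; norm_num
    · have := ih (by omega)
      have h2 : 2 ^ (n+1) + 2 ^ (n+1) = 2 ^ (n+2) := by ring
      omega

lemma lemA (k : ℕ) : 3*k + k*k ≤ 2 ^ (k+1) + 5 := by
  induction k with
  | zero => simp
  | succ n ih =>
    rcases Nat.lt_or_ge n 3 with h | h
    · interval_cases n <;> norm_num
    · have h1 : 2*n + 4 ≤ 2 ^ (n+1) := two_mul_le_pow' (by omega)
      have hpow : 2 ^ (n+2) = 2 * 2 ^ (n+1) := by ring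
      nlinarith

lemma lemB {k : ℕ} (h : 1 ≤ k) : 3*k + (k-1)*(k-1) + 1 ≤ 2 ^ (k+1) := by
  induction k with
  | zero => omega
  | succ n ih =>
    rcases Nat.eq_or_lt_of_le h with h1 | h1
    · rw [← h1]; norm_num
    · have hn : 1 ≤ n := by omega
      have h2 := ih hn
      have h3 := two_mul_le_pow hn
      have h4 : 2 ^ (n+1) + 2 ^ (n+1) = 2 ^ (n+2) := by ring
      have h5 : (n+1-1)*(n+1-1) = (n-1)*(n-1) + 2*n - 1 := by
        have : n + 1 - 1 = n := rfl
        rw [this]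
        cases n with
        | zero => omega
        | succ p => simp [Nat.succ_sub_one]; ring_nf; omega
      omega

lemma arith {k j m : ℕ} (hjk : j ≤ k)
    (hk : 1 ≤ k → 2 ^ (k+1) ≤ m + 1)
    (hj : 1 ≤ j → 2 ^ (j+1) + 5 ≤ m) :
    3*k + j*j ≤ m := by
  rcases Nat.eq_zero_or_pos k with hk0 | hk1
  · subst hk0
    have hj0 : j = 0 := Nat.le_zero.mp hjk
    subst hj0
    simp
  · rcases Nat.eq_or_lt_of_le hjk with hjeq | hjlt
    · subst hjeq
      have := hj hk1
      have := lemA j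
      omega
    · have h1 := hk hk1
      have h2 := lemB hk1
      have h3 : j*j ≤ (k-1)*(k-1) := Nat.mul_le_mul (by omega) (by omega)
      omega

open scoped Classical in
lemma Lc_pos_ge {m : ℕ} (h : 1 ≤ Lc m) : 3 ≤ m := by
  obtain ⟨x, hx⟩ := Finset.card_pos.mp (h : 0 < ((range (m+1)).filter isF).card)
  rw [Finset.mem_filter, Finset.mem_range] at hx
  have := isF_ge_three hx.2
  omega

lemma s3_succ_ge (n : ℕ) : s3 n + 1 ≤ s3 (n+1) := by
  have hd := s3_diff n
  set k := Lc (n+1) with hk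
  set j := Lc (n+1-6) with hj
  have hLL : LL (n+1) = (k : ℤ) := LL_eq_Lc _
  have hQ : Q3 (n+1) ≤ (j : ℤ) * j := by
    have := Q3_le (n+1)
    rwa [LL_eq_Lc] at this
  have hjk : j ≤ k := Lc_mono (by omega)
  have harith : 3*k + j*j ≤ n + 1 := by
    apply arith hjk
    · intro h1
      have h2 := Lc_pow_le (m := n+1) (by rw [← hk]; exact h1)
      rw [← hk] at h2
      omega
    · intro h1
      have h2 := Lc_pow_le (m := n+1-6) (by rw [← hj]; exact h1)
      have h3 := Lc_pos_ge (m := n+1-6) (by rw [← hj]; exact h1)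
      rw [← hj] at h2
      omega
  have hP := P2_nonneg (n+1)
  have hQn := Q3_nonneg n
  have : (3*k + j*j : ℤ) ≤ (n:ℤ) + 1 := by exact_mod_cast harith
  rw [hd, hLL]
  nlinarith [hQ]

open scoped Classical in
lemma ite_and_eq (x y z : ℕ) :
    (if (¬isF x ∧ ¬isF y ∧ ¬isF z) then (1:ℤ) else 0) = uu x * (uu y * uu z) := by
  unfold uu vv
  by_cases hx : isF x <;> by_cases hy : isF y <;> by_cases hz : isF z <;>
    simp [hx, hy, hz]

open scoped Classical in
noncomputable def Tfin (n : ℕ) : Finset (ℕ × ℕ) :=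
  (range (n+1) ×ˢ range (n+1)).filter
    (fun p => p.1 + p.2 ≤ n ∧ ¬isF p.1 ∧ ¬isF p.2 ∧ ¬isF (n - p.1 - p.2))

open scoped Classical in
lemma Tfin_card (n : ℕ) : ((Tfin n).card : ℤ) = s3 n := by
  unfold Tfin
  rw [Finset.card_filter]
  push_cast
  rw [Finset.sum_product]
  have inner : ∀ a ∈ range (n+1),
      (∑ b ∈ range (n+1),
        if (a + b ≤ n ∧ ¬isF a ∧ ¬isF b ∧ ¬isF (n - a - b)) then (1:ℤ) else 0)
      = uu a * s2 (n - a) := by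
    intro a ha
    rw [Finset.mem_range] at ha
    have hsub : range ((n-a)+1) ⊆ range (n+1) := Finset.range_subset_range.mpr (by omega)
    rw [← Finset.sum_subset hsub ?van]
    · have hcong : ∀ b ∈ range ((n-a)+1),
          (if (a + b ≤ n ∧ ¬isF a ∧ ¬isF b ∧ ¬isF (n - a - b)) then (1:ℤ) else 0)
          = uu a * (uu b * uu (n - a - b)) := by
        intro b hb
        rw [Finset.mem_range] at hb
        have hab : a + b ≤ n := by omega
        have hstep : (if (a + b ≤ n ∧ ¬isF a ∧ ¬isF b ∧ ¬isF (n - a - b)) then (1:ℤ) else 0)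
            = (if (¬isF a ∧ ¬isF b ∧ ¬isF (n - a - b)) then (1:ℤ) else 0) := by
          simp [hab]
        rw [hstep]
        exact ite_and_eq a b (n - a - b)
      rw [Finset.sum_congr rfl hcong, ← Finset.mul_sum]
      rfl
    · intro b hb hb'
      rw [Finset.mem_range] at hb hb'
      rw [if_neg]
      intro hcon
      omega
  rw [Finset.sum_congr rfl inner]
  rfl

open scoped Classical in
lemma ncard_link (n : ℕ) :
    {c : Fin 3 → ℕ | (∀ i, ¬ isF (c i)) ∧ ∑ i, c i = n}.ncard = (Tfin n).card := by
  have hset : {c : Fin 3 → ℕ | (∀ i, ¬ isF (c i)) ∧ ∑ i, c i = n}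
      = (fun p : ℕ × ℕ => ![p.1, p.2, n - p.1 - p.2]) '' ↑(Tfin n) := by
    ext c
    simp only [Set.mem_setOf_eq, Set.mem_image, Finset.mem_coe]
    constructor
    · rintro ⟨h1, h2⟩
      rw [Fin.sum_univ_three] at h2
      have hc2 : n - c 0 - c 1 = c 2 := by omega
      refine ⟨(c 0, c 1), ?_, ?_⟩
      · unfold Tfin
        rw [Finset.mem_filter, Finset.mem_product, Finset.mem_range, Finset.mem_range]
        refine ⟨⟨by omega, by omega⟩, by omega, h1 0, h1 1, ?_⟩
        rw [hc2]
        exact h1 2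
      · funext i
        fin_cases i <;> simp [hc2]
    · rintro ⟨p, hp, rfl⟩
      unfold Tfin at hp
      rw [Finset.mem_filter, Finset.mem_product] at hp
      obtain ⟨⟨_, _⟩, hle, hp1, hp2, hp3⟩ := hp
      constructor
      · intro i
        fin_cases i <;> simpa
      · rw [Fin.sum_univ_three]
        simp only [Matrix.cons_val_zero, Matrix.cons_val_one, Matrix.head_cons,
          Matrix.cons_val_two, Matrix.tail_cons]
        omega
  rw [hset, Set.ncard_image_of_injOn, Set.ncard_coe_finset]
  intro p hp q hq heq
  have h0 := congrFun heq 0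
  have h1 := congrFun heq 1
  simp only [Matrix.cons_val_zero, Matrix.cons_val_one, Matrix.head_cons] at h0 h1
  exact Prod.ext h0 h1

lemma s3_zero : s3 0 = 1 := by
  have hu : uu 0 = 1 := by rw [uu, vv_of_lt_three (by norm_num)]; ring
  have hs2 : s2 0 = 1 := by
    unfold s2
    rw [Finset.sum_range_one]
    simp [hu]
  unfold s3
  rw [Finset.sum_range_one]
  simp [hu, hs2]

theorem stmt_1 (F : Set ℕ) (hF : F = {x : ℕ | ∃ m : ℕ, x = 2 ^ (m + 2) - 1})
    (A : Set ℕ) (hA : A = Set.univ \ F) :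
    1 ≤ r 3 A 0 ∧ ∀ n : ℕ, r 3 A n < r 3 A (n + 1) := by
  have hr : ∀ n : ℕ, ((r 3 A n : ℕ) : ℤ) = s3 n := by
    intro n
    rw [hA, hF]
    unfold r
    have hseteq : {c : Fin 3 → ℕ |
        (∀ i, c i ∈ Set.univ \ {x : ℕ | ∃ m : ℕ, x = 2 ^ (m + 2) - 1}) ∧ ∑ i, c i = n}
        = {c : Fin 3 → ℕ | (∀ i, ¬ isF (c i)) ∧ ∑ i, c i = n} := by
      ext c
      simp [isF, Set.mem_diff]
    rw [hseteq, ncard_link n, Tfin_card]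
  constructor
  · have h0 := hr 0
    rw [s3_zero] at h0
    omega
  · intro n
    have h1 := s3_succ_ge n
    rw [← hr n, ← hr (n+1)] at h1
    exact_mod_cast (by omega : ((r 3 A n : ℕ) : ℤ) < ((r 3 A (n+1) : ℕ) : ℤ))
end

section
/- There exists a set A ⊆ ℕ such that ℕ \ A is infinite and the sequence (r(3,A,n))_{n≥0} is strictly increasing: r(3,A,n) < r(3,A,n+1) for all n ≥ 0. (This disproves Dombi's 2002 conjecture that no co-infinite set A has (r(3,A,n)) eventually increasing.) -/
open Finset

def Pr (x : ℕ) : Prop := ∃ k ∈ Finset.range x, x = 4 ^ (k + 2)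

instance : DecidablePred Pr := fun x =>
  inferInstanceAs (Decidable (∃ k ∈ Finset.range x, x = 4 ^ (k + 2)))

def Aset : Set ℕ := {x | ¬ Pr x}

instance : DecidablePred (· ∈ Aset) := fun x => inferInstanceAs (Decidable (¬ Pr x))

noncomputable def χ (x : ℕ) : ℤ := if Pr x then 0 else 1
noncomputable def β (x : ℕ) : ℤ := if Pr x then 1 else 0

noncomputable def r2 (m : ℕ) : ℤ := ∑ b ∈ range (m+1), χ b * χ (m - b)
noncomputable def r3 (n : ℕ) : ℤ := ∑ a ∈ range (n+1), χ a * r2 (n - a)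
noncomputable def E (t : ℕ) : ℤ := ∑ x ∈ range t, β x

lemma beta_nonneg (x : ℕ) : 0 ≤ β x := by unfold β; split_ifs <;> norm_num
lemma beta_le_one (x : ℕ) : β x ≤ 1 := by unfold β; split_ifs <;> norm_num
lemma chi_nonneg (x : ℕ) : 0 ≤ χ x := by unfold χ; split_ifs <;> norm_num
lemma chi_le_one (x : ℕ) : χ x ≤ 1 := by unfold χ; split_ifs <;> norm_num
lemma chi_eq (x : ℕ) : χ x = 1 - β x := by unfold χ β; split_ifs <;> norm_num

lemma Pr_zero : ¬ Pr 0 := by simp [Pr]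
lemma chi_zero : χ 0 = 1 := by simp [χ, Pr_zero]
lemma beta_zero : β 0 = 0 := by simp [β, Pr_zero]

lemma E_nonneg (t : ℕ) : 0 ≤ E t := Finset.sum_nonneg fun x _ => beta_nonneg x

lemma E_mono {t t' : ℕ} (h : t ≤ t') : E t ≤ E t' :=
  Finset.sum_le_sum_of_subset_of_nonneg (by simpa using h) fun x _ _ => beta_nonneg x

lemma r2_zero : r2 0 = 1 := by simp [r2, chi_zero]

lemma r2_le (m : ℕ) : r2 m ≤ (m : ℤ) + 1 := by
  have : r2 m ≤ ∑ _b ∈ range (m+1), (1:ℤ) := by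
    apply Finset.sum_le_sum
    intro b _
    calc χ b * χ (m - b) ≤ 1 * 1 := by
          apply mul_le_mul (chi_le_one b) (chi_le_one _) (chi_nonneg _) (by norm_num)
      _ = 1 := by ring
  simpa using this

lemma sum_beta_reflect (m : ℕ) : ∑ b ∈ range (m+1), β (m - b) = E (m+1) := by
  rw [E, ← Finset.sum_range_reflect (fun b => β b) (m+1)]
  simp

lemma r2_ge (m : ℕ) : (m : ℤ) + 1 - 2 * E (m+1) ≤ r2 m := by
  have h : ∑ b ∈ range (m+1), (1 - β b - β (m - b)) ≤ r2 m := by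
    apply Finset.sum_le_sum
    intro b _
    have h1 := beta_nonneg b
    have h2 := beta_nonneg (m - b)
    have e1 := chi_eq b
    have e2 := chi_eq (m - b)
    nlinarith [mul_nonneg h1 h2]
  calc (m : ℤ) + 1 - 2 * E (m+1)
      = ∑ b ∈ range (m+1), (1 - β b - β (m - b)) := by
        rw [Finset.sum_sub_distrib, Finset.sum_sub_distrib, sum_beta_reflect]
        simp [E]
        ring
    _ ≤ r2 m := h

lemma r2_succ_sub (m : ℕ) : r2 (m+1) - r2 m ≤ 1 + E (m+1) := by
  have hs : r2 (m+1) = (∑ b ∈ range (m+1), χ (b+1) * χ (m - b)) + χ 0 * χ (m+1) := by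
    rw [r2, Finset.sum_range_succ']
    simp [Nat.succ_sub_succ]
  have key : r2 (m+1) - r2 m = χ 0 * χ (m+1) + ∑ b ∈ range (m+1), (χ (b+1) - χ b) * χ (m - b) := by
    rw [hs, r2]
    have hd : ∑ b ∈ range (m+1), (χ (b+1) - χ b) * χ (m - b) =
        (∑ b ∈ range (m+1), χ (b+1) * χ (m - b)) - ∑ b ∈ range (m+1), χ b * χ (m - b) := by
      rw [← Finset.sum_sub_distrib]
      apply Finset.sum_congr rfl
      intro b _
      ring
    rw [hd]
    ring
  rw [key]
  have h1 : χ 0 * χ (m+1) ≤ 1 := by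
    calc χ 0 * χ (m+1) ≤ 1 * 1 := by
          apply mul_le_mul (chi_le_one 0) (chi_le_one _) (chi_nonneg _) (by norm_num)
      _ = 1 := by ring
  have h2 : ∑ b ∈ range (m+1), (χ (b+1) - χ b) * χ (m - b) ≤ E (m+1) := by
    rw [E]
    apply Finset.sum_le_sum
    intro b _
    have hb1 : χ (b+1) - χ b ≤ β b := by
      rw [chi_eq, chi_eq]
      have := beta_nonneg (b+1)
      linarith
    rcases le_or_gt (χ (b+1) - χ b) 0 with hle | hgt
    · calc (χ (b+1) - χ b) * χ (m - b) ≤ 0 := mul_nonpos_of_nonpos_of_nonneg hle (chi_nonneg _)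
        _ ≤ β b := beta_nonneg b
    · calc (χ (b+1) - χ b) * χ (m - b) ≤ (χ (b+1) - χ b) * 1 :=
            mul_le_mul_of_nonneg_left (chi_le_one _) (le_of_lt hgt)
        _ = χ (b+1) - χ b := by ring
        _ ≤ β b := hb1
  linarith

lemma sum_beta_shift (n : ℕ) : ∑ a ∈ range n, β (a+1) = E (n+1) := by
  rw [E, Finset.sum_range_succ', beta_zero, add_zero]

lemma delta_eq (n : ℕ) : r3 (n+1) - r3 n =
    r2 (n+1) + (∑ a ∈ range n, β (a+1) * (r2 (n-1-a) - r2 (n-a))) - β (n+1) := by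
  have hs : r3 (n+1) = (∑ a ∈ range (n+1), χ (a+1) * r2 (n - a)) + r2 (n+1) := by
    rw [r3, Finset.sum_range_succ']
    rw [chi_zero, Nat.sub_zero, one_mul]
    congr 1
    apply Finset.sum_congr rfl
    intro a _
    congr 2
    omega
  have key : r3 (n+1) - r3 n = r2 (n+1) + ∑ a ∈ range (n+1), (χ (a+1) - χ a) * r2 (n - a) := by
    rw [hs, r3]
    have hd : ∑ a ∈ range (n+1), (χ (a+1) - χ a) * r2 (n - a) =
        (∑ a ∈ range (n+1), χ (a+1) * r2 (n - a)) - ∑ a ∈ range (n+1), χ a * r2 (n - a) := by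
      rw [← Finset.sum_sub_distrib]
      apply Finset.sum_congr rfl
      intro a _
      ring
    rw [hd]
    ring
  rw [key]
  have split : ∑ a ∈ range (n+1), (χ (a+1) - χ a) * r2 (n - a) =
      (∑ a ∈ range (n+1), β a * r2 (n - a)) - ∑ a ∈ range (n+1), β (a+1) * r2 (n - a) := by
    rw [← Finset.sum_sub_distrib]
    apply Finset.sum_congr rfl
    intro a _
    rw [chi_eq, chi_eq]
    ring
  have first : ∑ a ∈ range (n+1), β a * r2 (n - a) = ∑ a ∈ range n, β (a+1) * r2 (n-1-a) := by
    rw [Finset.sum_range_succ', beta_zero, zero_mul, add_zero]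
    apply Finset.sum_congr rfl
    intro a _
    congr 2
    omega
  have second : ∑ a ∈ range (n+1), β (a+1) * r2 (n - a) =
      (∑ a ∈ range n, β (a+1) * r2 (n - a)) + β (n+1) := by
    rw [Finset.sum_range_succ, Nat.sub_self, r2_zero, mul_one]
  rw [split, first, second]
  have hd : ∑ a ∈ range n, β (a+1) * (r2 (n-1-a) - r2 (n-a)) =
      (∑ a ∈ range n, β (a+1) * r2 (n-1-a)) - ∑ a ∈ range n, β (a+1) * r2 (n - a) := by
    rw [← Finset.sum_sub_distrib]
    apply Finset.sum_congr rfl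
    intro a _
    ring
  rw [hd]
  ring

lemma delta_ge (n : ℕ) : r3 (n+1) - r3 n ≥
    (n : ℤ) + 1 - 3 * E (n+2) - E (n+2) * E (n+2) := by
  have e0 := E_nonneg (n+2)
  have hmain : ∑ a ∈ range n, β (a+1) * (r2 (n-1-a) - r2 (n-a)) ≥
      -((1 + E (n+2)) * E (n+2)) := by
    have step : ∀ a ∈ range n, β (a+1) * (r2 (n-1-a) - r2 (n-a)) ≥
        -(β (a+1) * (1 + E (n+2))) := by
      intro a ha
      have han : a < n := mem_range.mp ha
      have hd : r2 (n-a) - r2 (n-1-a) ≤ 1 + E (n+2) := by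
        have heq : n - a = (n-1-a) + 1 := by omega
        rw [heq]
        calc r2 ((n-1-a)+1) - r2 (n-1-a) ≤ 1 + E ((n-1-a)+1) := r2_succ_sub _
          _ ≤ 1 + E (n+2) := by
              have := E_mono (show (n-1-a)+1 ≤ n+2 by omega)
              linarith
      have hb := beta_nonneg (a+1)
      nlinarith
    calc ∑ a ∈ range n, β (a+1) * (r2 (n-1-a) - r2 (n-a))
        ≥ ∑ a ∈ range n, -(β (a+1) * (1 + E (n+2))) := Finset.sum_le_sum step
      _ = -(∑ a ∈ range n, β (a+1) * (1 + E (n+2))) := by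
          rw [← Finset.sum_neg_distrib]
      _ = -((∑ a ∈ range n, β (a+1)) * (1 + E (n+2))) := by
          rw [← Finset.sum_mul]
      _ = -(E (n+1) * (1 + E (n+2))) := by rw [sum_beta_shift]
      _ ≥ -((1 + E (n+2)) * E (n+2)) := by
          have h1 : E (n+1) ≤ E (n+2) := E_mono (by omega)
          nlinarith [E_nonneg (n+1)]
  have h2 : r2 (n+1) ≥ (n : ℤ) + 2 - 2 * E (n+2) := by
    have := r2_ge (n+1)
    push_cast at this ⊢
    linarith
  have h3 : β (n+1) ≤ 1 := beta_le_one _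
  have := delta_eq n
  nlinarith

lemma cnt_le (k t : ℕ) (h : t ≤ 4^(k+2)) : ((range t).filter Pr).card ≤ k := by
  have hsub : (range t).filter Pr ⊆ (range k).image (fun j => 4^(j+2)) := by
    intro x hx
    rw [mem_filter, mem_range] at hx
    obtain ⟨hxt, j, hj, hxe⟩ := hx
    rw [Finset.mem_image]
    refine ⟨j, ?_, hxe.symm⟩
    rw [mem_range]
    by_contra hjk
    push_neg at hjk
    have : 4^(k+2) ≤ 4^(j+2) := Nat.pow_le_pow_right (by norm_num) (by omega)
    omega
  calc ((range t).filter Pr).card ≤ ((range k).image (fun j => 4^(j+2))).card :=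
        Finset.card_le_card hsub
    _ ≤ k := le_trans Finset.card_image_le (by simp)

lemma pow_gt (e : ℕ) : e^2 + 3*e < 4^(e+1) := by
  induction e with
  | zero => norm_num
  | succ e ih =>
    have h4 : 4 ≤ 4^(e+1) := by
      have : (4:ℕ)^1 ≤ 4^(e+1) := Nat.pow_le_pow_right (by norm_num) (by omega)
      simpa using this
    have he : e < 4^(e+1) := by nlinarith
    have hstep : (4:ℕ)^(e+1+1) = 4^(e+1) * 4 := pow_succ 4 (e+1)
    nlinarith

lemma E_card (t : ℕ) : E t = (((range t).filter Pr).card : ℤ) := by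
  simp [E, β, Finset.sum_boole]

lemma final_ineq (n : ℕ) : (0:ℤ) < (n : ℤ) + 1 - 3 * E (n+2) - E (n+2) * E (n+2) := by
  set e := ((range (n+2)).filter Pr).card with he
  rw [E_card]
  rcases Nat.eq_zero_or_pos e with h0 | hpos
  · rw [← he, h0]
    push_cast
    linarith [Nat.cast_nonneg (α := ℤ) n]
  · have hgt : 4^(e+1) < n + 2 := by
      by_contra hle
      push_neg at hle
      have hexp : (e-1)+2 = e+1 := by omega
      have := cnt_le (e-1) (n+2) (by rw [hexp]; exact hle)
      omega
    have hp := pow_gt e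
    have : e^2 + 3*e < n + 1 := by omega
    rw [← he]
    push_cast
    nlinarith [this]

lemma r_eq_r3 (n : ℕ) : (r 3 Aset n : ℤ) = r3 n := by
  have h1 : {c : Fin 3 → ℕ | (∀ i, c i ∈ Aset) ∧ ∑ i, c i = n} =
      ↑((Finset.Nat.antidiagonalTuple 3 n).filter (fun c => ∀ i, c i ∈ Aset)) := by
    ext c
    simp [Finset.Nat.mem_antidiagonalTuple, and_comm]
  have h2 : r 3 Aset n =
      ((Finset.Nat.antidiagonalTuple 3 n).filter (fun c => ∀ i, c i ∈ Aset)).card := by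
    rw [r, h1, Set.ncard_coe_finset]
  rw [h2, Finset.card_filter]
  clear h1 h2
  rw [Nat.cast_sum]
  simp only [Nat.cast_ite, Nat.cast_one, Nat.cast_zero]
  have key : r3 n = ∑ p ∈ (range (n+1)).sigma (fun a => range (n+1-a)),
      χ p.1 * (χ p.2 * χ (n - p.1 - p.2)) := by
    rw [Finset.sum_sigma, r3]
    apply Finset.sum_congr rfl
    intro a ha
    rw [r2, Finset.mul_sum]
    have han : a ≤ n := Nat.lt_succ_iff.mp (mem_range.mp ha)
    have hra : n - a + 1 = n + 1 - a := by omega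
    rw [hra]
  rw [key]
  refine Finset.sum_nbij' (fun c => (⟨c 0, c 1⟩ : Σ _ : ℕ, ℕ))
    (fun p => ![p.1, p.2, n - p.1 - p.2]) ?_ ?_ ?_ ?_ ?_
  · intro c hc
    have hsum := Finset.Nat.mem_antidiagonalTuple.mp hc
    rw [Fin.sum_univ_three] at hsum
    simp only [Finset.mem_sigma, mem_range]
    omega
  · intro p hp
    simp only [Finset.mem_sigma, mem_range] at hp
    rw [Finset.Nat.mem_antidiagonalTuple, Fin.sum_univ_three]
    simp only [Matrix.cons_val_zero, Matrix.cons_val_one, Matrix.head_cons,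
      Matrix.cons_val_two, Matrix.tail_cons]
    omega
  · intro c hc
    have hsum := Finset.Nat.mem_antidiagonalTuple.mp hc
    rw [Fin.sum_univ_three] at hsum
    funext i
    fin_cases i <;> simp <;> omega
  · intro p hp
    rfl
  · intro c hc
    have hsum := Finset.Nat.mem_antidiagonalTuple.mp hc
    rw [Fin.sum_univ_three] at hsum
    have h0 : n - c 0 - c 1 = c 2 := by omega
    rw [h0]
    have hiff : (∀ i, c i ∈ Aset) ↔ (¬ Pr (c 0) ∧ ¬ Pr (c 1) ∧ ¬ Pr (c 2)) := by
      constructor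
      · intro h; exact ⟨h 0, h 1, h 2⟩
      · rintro ⟨ha, hb, hcc⟩ i; fin_cases i <;> assumption
    rw [χ, χ, χ]
    split_ifs with h hp0 hp1 hp2 <;> simp_all [hiff]

theorem stmt_2 :
    ∃ A : Set ℕ, (Set.univ \ A).Infinite ∧ ∀ n : ℕ, r 3 A n < r 3 A (n + 1) := by
  refine ⟨Aset, ?_, ?_⟩
  · apply Set.infinite_of_injective_forall_mem (f := fun k : ℕ => 4^(k+2))
    · intro a b hab
      simp only at hab
      have := Nat.pow_right_injective (show 2 ≤ 4 by norm_num) hab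
      omega
    · intro k
      simp only [Set.mem_diff, Set.mem_univ, true_and]
      intro hA
      apply hA
      refine ⟨k, ?_, rfl⟩
      rw [mem_range]
      calc k < 2^k := (Nat.lt_two_pow_self (n := k))
        _ ≤ 4^(k+2) := by
            calc (2:ℕ)^k ≤ 4^k := Nat.pow_le_pow_left (by norm_num) k
              _ ≤ 4^(k+2) := Nat.pow_le_pow_right (by norm_num) (by omega)
  · intro n
    have h1 := delta_ge n
    have h2 := final_ineq n
    have h3 := r_eq_r3 n
    have h4 := r_eq_r3 (n+1)
    have : (r 3 Aset n : ℤ) < (r 3 Aset (n+1) : ℤ) := by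
      rw [h3, h4]
      linarith
    exact_mod_cast this
end

section
/- Let A ⊆ ℕ and let k ≥ 1 be an integer. Suppose r(k,A,0) ≥ 1 and r(k,A,n) < r(k,A,n+1) for all n ≥ 0 (i.e., the sequence (r(k,A,n)) is strictly increasing from the start). Then for every integer k' ≥ k, the sequence (r(k',A,n))_{n≥0} also satisfies r(k',A,0) ≥ 1 and r(k',A,n) < r(k',A,n+1) for all n ≥ 0. -/
open Finset in
lemma r_eq_card (k : ℕ) (A : Set ℕ) (n : ℕ) [DecidablePred (· ∈ A)] :
    r k A n = ((Finset.Nat.antidiagonalTuple k n).filter (fun c => ∀ i, c i ∈ A)).card := by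
  rw [r, ← Set.ncard_coe_finset]
  congr 1
  ext c
  simp only [Finset.coe_filter, Set.mem_setOf_eq, Finset.Nat.mem_antidiagonalTuple]
  tauto

open Finset in
lemma r_succ (k : ℕ) (A : Set ℕ) (n : ℕ) [DecidablePred (· ∈ A)] :
    r (k + 1) A n = ∑ a ∈ Finset.range (n + 1), if a ∈ A then r k A (n - a) else 0 := by
  classical
  rw [r_eq_card]
  rw [Finset.card_eq_sum_card_fiberwise (f := fun c => c 0) (t := Finset.range (n + 1))
    (fun c hc => ?_)]
  · refine Finset.sum_congr rfl fun a ha => ?_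
    rw [Finset.mem_range, Nat.lt_succ_iff] at ha
    by_cases hA : a ∈ A
    · rw [if_pos hA, r_eq_card]
      refine Finset.card_nbij' (fun c => Fin.tail c) (fun d => Fin.cons a d) ?_ ?_ ?_ ?_
      · intro c hc
        simp only [Finset.mem_coe, Finset.mem_filter, Finset.Nat.mem_antidiagonalTuple] at hc ⊢
        obtain ⟨⟨hsum, hmem⟩, hc0⟩ := hc
        rw [Fin.sum_univ_succ] at hsum
        exact ⟨show ∑ i : Fin k, c i.succ = n - a by omega, fun i => hmem i.succ⟩
      · intro d hd
        simp only [Finset.mem_coe, Finset.mem_filter, Finset.Nat.mem_antidiagonalTuple] at hd ⊢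
        obtain ⟨hsum, hmem⟩ := hd
        refine ⟨⟨?_, fun i => i.cases hA hmem⟩, rfl⟩
        rw [Fin.sum_univ_succ, Fin.cons_zero]
        simp only [Fin.cons_succ]
        omega
      · intro c hc
        simp only [Finset.mem_coe, Finset.mem_filter] at hc
        rw [← hc.2]
        exact Fin.cons_self_tail c
      · intro d _
        simp
    · rw [if_neg hA, Finset.card_eq_zero, Finset.filter_eq_empty_iff]
      rintro c hc rfl
      simp only [Finset.mem_filter] at hc
      exact hA (hc.2 0)
  · simp only [Finset.mem_coe, Finset.mem_filter, Finset.Nat.mem_antidiagonalTuple] at hc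
    rw [Finset.mem_coe, Finset.mem_range, Nat.lt_succ_iff]
    calc c 0 ≤ ∑ i, c i := Finset.single_le_sum (fun i _ => Nat.zero_le _) (Finset.mem_univ 0)
    _ = n := hc.1

theorem stmt_3 (A : Set ℕ) (k : ℕ) (hk : 1 ≤ k)
    (h0 : 1 ≤ r k A 0) (hinc : ∀ n : ℕ, r k A n < r k A (n + 1)) :
    ∀ k' : ℕ, k ≤ k' →
      1 ≤ r k' A 0 ∧ ∀ n : ℕ, r k' A n < r k' A (n + 1) := by
  classical
  -- First, 0 ∈ A.
  have h0A : (0 : ℕ) ∈ A := by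
    have hne : {c : Fin k → ℕ | (∀ i, c i ∈ A) ∧ ∑ i, c i = 0}.Nonempty := by
      apply Set.nonempty_of_ncard_ne_zero
      have h0' : 1 ≤ Set.ncard {c : Fin k → ℕ | (∀ i, c i ∈ A) ∧ ∑ i, c i = 0} := h0
      exact Nat.one_le_iff_ne_zero.mp h0'
    obtain ⟨c, hmem, hsum⟩ := hne
    have : c ⟨0, hk⟩ = 0 := by
      have := Finset.sum_eq_zero_iff.mp hsum ⟨0, hk⟩ (Finset.mem_univ _)
      exact this
    rw [← this]; exact hmem _
  intro k' hk'
  induction k' , hk' using Nat.le_induction with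
  | base => exact ⟨h0, hinc⟩
  | succ m hm ih =>
    obtain ⟨ih0, ihinc⟩ := ih
    have hmono : Monotone (r m A) := (strictMono_nat_of_lt_succ ihinc).monotone
    constructor
    · rw [r_succ]
      simpa [h0A] using ih0
    · intro n
      rw [r_succ, r_succ]
      calc ∑ a ∈ Finset.range (n + 1), (if a ∈ A then r m A (n - a) else 0)
          < ∑ a ∈ Finset.range (n + 1), (if a ∈ A then r m A (n + 1 - a) else 0) := by
            apply Finset.sum_lt_sum
            · intro a ha
              by_cases hA : a ∈ A
              · simpa [hA] using hmono (show n - a ≤ n + 1 - a by omega)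
              · simp [hA]
            · refine ⟨0, Finset.mem_range.mpr (by omega), ?_⟩
              simpa [h0A] using ihinc n
        _ ≤ ∑ a ∈ Finset.range (n + 2), (if a ∈ A then r m A (n + 1 - a) else 0) :=
            Finset.sum_le_sum_of_subset (Finset.range_subset_range.mpr (by omega))
end

section
/- Let F = {2^{m+2} − 1 : m ∈ ℕ}. Then for every n ∈ ℕ, r(3,F,n) ≤ 6; that is, the number of ordered triples (a,b,c) ∈ F × F × F with a + b + c = n is at most 6. -/
private lemma pow2_pos (a : ℕ) : 0 < 2 ^ a := Nat.two_pow_pos a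
private lemma pow2_inj {a b : ℕ} (h : (2:ℕ)^a = 2^b) : a = b :=
  Nat.pow_right_injective (le_refl 2) h
private lemma pow_succ2 (n : ℕ) : (2:ℕ)^(n+1) = 2^n + 2^n := by rw [pow_succ]; omega
private lemma p2e {k : ℕ} (hk : k ≠ 0) : (2:ℕ)^k % 2 = 0 := by
  rcases k with _ | k
  · exact absurd rfl hk
  · simp [pow_succ, Nat.mul_mod_left]
private lemma p2ge {k : ℕ} (hk : k ≠ 0) : 2 ≤ (2:ℕ)^k := by
  calc (2:ℕ) = 2^1 := (pow_one 2).symm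
  _ ≤ 2^k := Nat.pow_le_pow_right (by norm_num) (by omega)

private lemma l0 : ∀ a b c : ℕ, 2^a + 2^b = 2^c → a = b := by
  intro a
  induction a with
  | zero =>
    intro b c h
    by_cases hb : b = 0
    · omega
    exfalso
    by_cases hc : c = 0
    · subst hc; simp only [pow_zero] at h; have := pow2_pos b; omega
    · have h1 := p2e hb; have h2 := p2e hc; simp only [pow_zero] at h; omega
  | succ a ih =>
    intro b c h
    by_cases hb : b = 0
    · exfalso; subst hb
      by_cases hc : c = 0
      · subst hc; simp only [pow_zero] at h; have := pow2_pos (a+1); omega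
      · have h1 := p2e (Nat.succ_ne_zero a); have h2 := p2e hc
        simp only [pow_zero] at h; omega
    · by_cases hc : c = 0
      · exfalso; subst hc
        have := p2ge (Nat.succ_ne_zero a); have := p2ge hb
        simp only [pow_zero] at h; omega
      · obtain ⟨b', rfl⟩ : ∃ b', b = b' + 1 := ⟨b - 1, by omega⟩
        obtain ⟨c', rfl⟩ : ∃ c', c = c' + 1 := ⟨c - 1, by omega⟩
        simp only [pow_succ2] at h
        have := ih b' c' (by omega)
        omega

private lemma l1 : ∀ a b c d : ℕ, 2^a + 2^b = 2^c + 2^d →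
    (a = c ∧ b = d) ∨ (a = d ∧ b = c) := by
  intro a
  induction a with
  | zero =>
    intro b c d h
    by_cases hb : b = 0
    · subst hb
      by_cases hc : c = 0 <;> by_cases hd : d = 0
      · omega
      · exfalso; subst hc; have := p2ge hd; simp only [pow_zero] at h; omega
      · exfalso; subst hd; have := p2ge hc; simp only [pow_zero] at h; omega
      · exfalso; have := p2ge hc; have := p2ge hd; simp only [pow_zero] at h; omega
    · by_cases hc : c = 0 <;> by_cases hd : d = 0
      · exfalso; subst hc; subst hd; have := p2ge hb; simp only [pow_zero] at h; omega
      · subst hc; simp only [pow_zero] at h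
        exact Or.inl ⟨rfl, pow2_inj (by omega)⟩
      · subst hd; simp only [pow_zero] at h
        exact Or.inr ⟨rfl, pow2_inj (by omega)⟩
      · exfalso
        have := p2e hb; have := p2e hc; have := p2e hd; simp only [pow_zero] at h; omega
  | succ a ih =>
    intro b c d h
    by_cases hb : b = 0
    · subst hb
      by_cases hc : c = 0 <;> by_cases hd : d = 0
      · exfalso; subst hc; subst hd
        have := p2ge (Nat.succ_ne_zero a); simp only [pow_zero] at h; omega
      · subst hc; simp only [pow_zero] at h
        exact Or.inr ⟨pow2_inj (by omega), rfl⟩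
      · subst hd; simp only [pow_zero] at h
        exact Or.inl ⟨pow2_inj (by omega), rfl⟩
      · exfalso
        have := p2e (Nat.succ_ne_zero a); have := p2e hc; have := p2e hd
        simp only [pow_zero] at h; omega
    · by_cases hc : c = 0 <;> by_cases hd : d = 0
      · exfalso; subst hc; subst hd
        have := p2ge (Nat.succ_ne_zero a); have := p2ge hb
        simp only [pow_zero] at h; omega
      · exfalso; subst hc
        have := p2e (Nat.succ_ne_zero a); have := p2e hb; have := p2e hd
        simp only [pow_zero] at h; omega
      · exfalso; subst hd
        have := p2e (Nat.succ_ne_zero a); have := p2e hb; have := p2e hc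
        simp only [pow_zero] at h; omega
      · obtain ⟨b', rfl⟩ : ∃ b', b = b' + 1 := ⟨b - 1, by omega⟩
        obtain ⟨c', rfl⟩ : ∃ c', c = c' + 1 := ⟨c - 1, by omega⟩
        obtain ⟨d', rfl⟩ : ∃ d', d = d' + 1 := ⟨d - 1, by omega⟩
        simp only [pow_succ2] at h
        rcases ih b' c' d' (by omega) with ⟨h1, h2⟩ | ⟨h1, h2⟩
        · left; omega
        · right; omega

/-- a sum of three powers of two with pairwise distinct exponents is never a sum of two powers -/
private lemma l2 : ∀ n a b c p q : ℕ, a + b + c ≤ n → a ≠ b → a ≠ c → b ≠ c →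
    2^a + 2^b + 2^c ≠ 2^p + 2^q := by
  intro n
  induction n with
  | zero => intro a b c p q hn hab _ _ _; omega
  | succ n ih =>
    intro a b c p q hn hab hac hbc h
    by_cases ha : a = 0 <;> by_cases hb : b = 0 <;> by_cases hc : c = 0
    · omega
    · omega
    · omega
    · -- a = 0, b c ≠ 0
      subst ha; simp only [pow_zero] at h
      by_cases hp : p = 0 <;> by_cases hq : q = 0
      · subst hp; subst hq; simp only [pow_zero] at h
        have := p2ge hb; have := p2ge hc; omega
      · subst hp; simp only [pow_zero] at h
        exact hbc (l0 b c q (by omega))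
      · subst hq; simp only [pow_zero] at h
        exact hbc (l0 b c p (by omega))
      · have := p2e hb; have := p2e hc; have := p2e hp; have := p2e hq; omega
    · omega
    · -- b = 0, a c ≠ 0
      subst hb; simp only [pow_zero] at h
      by_cases hp : p = 0 <;> by_cases hq : q = 0
      · subst hp; subst hq; simp only [pow_zero] at h
        have := p2ge ha; have := p2ge hc; omega
      · subst hp; simp only [pow_zero] at h
        exact hac (l0 a c q (by omega))
      · subst hq; simp only [pow_zero] at h
        exact hac (l0 a c p (by omega))
      · have := p2e ha; have := p2e hc; have := p2e hp; have := p2e hq; omega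
    · -- c = 0, a b ≠ 0
      subst hc; simp only [pow_zero] at h
      by_cases hp : p = 0 <;> by_cases hq : q = 0
      · subst hp; subst hq; simp only [pow_zero] at h
        have := p2ge ha; have := p2ge hb; omega
      · subst hp; simp only [pow_zero] at h
        exact hab (l0 a b q (by omega))
      · subst hq; simp only [pow_zero] at h
        exact hab (l0 a b p (by omega))
      · have := p2e ha; have := p2e hb; have := p2e hp; have := p2e hq; omega
    · -- all nonzero
      by_cases hp : p = 0 <;> by_cases hq : q = 0
      · subst hp; subst hq; simp only [pow_zero] at h
        have := p2ge ha; have := p2ge hb; have := p2ge hc; omega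
      · subst hp
        have := p2e ha; have := p2e hb; have := p2e hc; have := p2e hq
        simp only [pow_zero] at h; omega
      · subst hq
        have := p2e ha; have := p2e hb; have := p2e hc; have := p2e hp
        simp only [pow_zero] at h; omega
      · obtain ⟨a', rfl⟩ : ∃ a', a = a' + 1 := ⟨a - 1, by omega⟩
        obtain ⟨b', rfl⟩ : ∃ b', b = b' + 1 := ⟨b - 1, by omega⟩
        obtain ⟨c', rfl⟩ : ∃ c', c = c' + 1 := ⟨c - 1, by omega⟩
        obtain ⟨p', rfl⟩ : ∃ p', p = p' + 1 := ⟨p - 1, by omega⟩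
        obtain ⟨q', rfl⟩ : ∃ q', q = q' + 1 := ⟨q - 1, by omega⟩
        simp only [pow_succ2] at h
        exact ih a' b' c' p' q' (by omega) (by omega) (by omega) (by omega) (by omega)

/-- strictly sorted triples of exponents are determined by the sum of powers -/
private lemma l3 : ∀ n a b c d e f : ℕ, a + b + c ≤ n → a < b → b < c → d < e → e < f →
    2^a + 2^b + 2^c = 2^d + 2^e + 2^f → a = d ∧ b = e ∧ c = f := by
  intro n
  induction n with
  | zero => intro a b c d e f h1 h2 h3 _ _ _; omega
  | succ n ih =>
    intro a b c d e f hn hab hbc hde hef h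
    by_cases ha : a = 0 <;> by_cases hd : d = 0
    · subst ha; subst hd; simp only [pow_zero] at h
      rcases l1 b c e f (by omega) with ⟨h1, h2⟩ | ⟨h1, h2⟩ <;> omega
    · exfalso; subst ha; simp only [pow_zero] at h
      have := p2e (show b ≠ 0 by omega); have := p2e (show c ≠ 0 by omega)
      have := p2e hd; have := p2e (show e ≠ 0 by omega); have := p2e (show f ≠ 0 by omega)
      omega
    · exfalso; subst hd; simp only [pow_zero] at h
      have := p2e (show e ≠ 0 by omega); have := p2e (show f ≠ 0 by omega)
      have := p2e ha; have := p2e (show b ≠ 0 by omega); have := p2e (show c ≠ 0 by omega)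
      omega
    · obtain ⟨a', rfl⟩ : ∃ a', a = a' + 1 := ⟨a - 1, by omega⟩
      obtain ⟨b', rfl⟩ : ∃ b', b = b' + 1 := ⟨b - 1, by omega⟩
      obtain ⟨c', rfl⟩ : ∃ c', c = c' + 1 := ⟨c - 1, by omega⟩
      obtain ⟨d', rfl⟩ : ∃ d', d = d' + 1 := ⟨d - 1, by omega⟩
      obtain ⟨e', rfl⟩ : ∃ e', e = e' + 1 := ⟨e - 1, by omega⟩
      obtain ⟨f', rfl⟩ : ∃ f', f = f' + 1 := ⟨f - 1, by omega⟩
      simp only [pow_succ2] at h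
      have := ih a' b' c' d' e' f' (by omega) (by omega) (by omega) (by omega) (by omega)
        (by omega)
      omega

private lemma u1 {x y u v : ℕ} (hxy : x < y) (huv : u < v)
    (h : 2^x + 2^x + 2^y = 2^u + 2^u + 2^v) : x = u ∧ y = v := by
  have h' : (2:ℕ)^(x+1) + 2^y = 2^(u+1) + 2^v := by
    rw [pow_succ2, pow_succ2]; omega
  rcases l1 (x+1) y (u+1) v h' with ⟨h1, h2⟩ | ⟨h1, h2⟩ <;> omega

private lemma u2 {x y u v : ℕ} (hxy : y < x) (huv : v < u)
    (h : 2^x + 2^x + 2^y = 2^u + 2^u + 2^v) : x = u ∧ y = v := by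
  have h' : (2:ℕ)^(x+1) + 2^y = 2^(u+1) + 2^v := by
    rw [pow_succ2, pow_succ2]; omega
  rcases l1 (x+1) y (u+1) v h' with ⟨h1, h2⟩ | ⟨h1, h2⟩ <;> omega

private lemma u3 {x u : ℕ} (h : (2:ℕ)^x + 2^x + 2^x = 2^u + 2^u + 2^u) : x = u :=
  pow2_inj (by omega)

private lemma u4 {x y u : ℕ} (hxy : y < x)
    (h : (2:ℕ)^u + 2^u + 2^u = 2^x + 2^x + 2^y) : False := by
  have h' : (2:ℕ)^(u+1) + 2^u = 2^(x+1) + 2^y := by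
    rw [pow_succ2, pow_succ2]; omega
  rcases l1 (u+1) u (x+1) y h' with ⟨h1, h2⟩ | ⟨h1, h2⟩ <;> omega

private def Spow (M : ℕ) : Set (Fin 3 → ℕ) := {e | 2^(e 0) + 2^(e 1) + 2^(e 2) = M}

private lemma inj3 {t : Fin 3 → ℕ} (h01 : t 0 ≠ t 1) (h02 : t 0 ≠ t 2) (h12 : t 1 ≠ t 2) :
    Function.Injective t := by
  intro i j hij
  fin_cases i <;> fin_cases j <;> simp_all

private lemma caseA (M : ℕ) (s : Fin 3 → ℕ) (hs : s ∈ Spow M)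
    (h01 : s 0 ≠ s 1) (h02 : s 0 ≠ s 2) (h12 : s 1 ≠ s 2) :
    Nat.card (Spow M) ≤ 6 := by
  have hd : ∀ t ∈ Spow M, t 0 ≠ t 1 ∧ t 0 ≠ t 2 ∧ t 1 ≠ t 2 := by
    intro t ht
    refine ⟨?_, ?_, ?_⟩ <;> intro he
    · have he2 : (2:ℕ)^(t 0) = 2^(t 1) := by rw [he]
      exact l2 (s 0 + s 1 + s 2) (s 0) (s 1) (s 2) (t 0 + 1) (t 2) le_rfl h01 h02 h12
        (by rw [pow_succ2]; have h1 : _ = M := hs; have h2 : _ = M := ht; omega)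
    · have he2 : (2:ℕ)^(t 0) = 2^(t 2) := by rw [he]
      exact l2 (s 0 + s 1 + s 2) (s 0) (s 1) (s 2) (t 0 + 1) (t 1) le_rfl h01 h02 h12
        (by rw [pow_succ2]; have h1 : _ = M := hs; have h2 : _ = M := ht; omega)
    · have he2 : (2:ℕ)^(t 1) = 2^(t 2) := by rw [he]
      exact l2 (s 0 + s 1 + s 2) (s 0) (s 1) (s 2) (t 1 + 1) (t 0) le_rfl h01 h02 h12
        (by rw [pow_succ2]; have h1 : _ = M := hs; have h2 : _ = M := ht; omega)
  -- the sorted version of any solution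
  have sorted : ∀ t : ↥(Spow M), StrictMono (t.1 ∘ Tuple.sort t.1) ∧
      2^((t.1 ∘ Tuple.sort t.1) 0) + 2^((t.1 ∘ Tuple.sort t.1) 1)
        + 2^((t.1 ∘ Tuple.sort t.1) 2) = M := by
    intro t
    obtain ⟨d01, d02, d12⟩ := hd t.1 t.2
    have hinj : Function.Injective t.1 := inj3 d01 d02 d12
    have hsm : StrictMono (t.1 ∘ Tuple.sort t.1) :=
      (Tuple.monotone_sort t.1).strictMono_of_injective
        (hinj.comp (Tuple.sort t.1).injective)
    refine ⟨hsm, ?_⟩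
    have hsum : ∑ i, (2:ℕ)^(t.1 (Tuple.sort t.1 i)) = ∑ i, (2:ℕ)^(t.1 i) :=
      Equiv.sum_comp (Tuple.sort t.1) (fun i => (2:ℕ)^(t.1 i))
    have hmem : (2:ℕ)^(t.1 0) + 2^(t.1 1) + 2^(t.1 2) = M := t.2
    simp only [Fin.sum_univ_three] at hsum
    simpa [Function.comp] using hsum.trans (by omega)
  have hf : Function.Injective (fun t : ↥(Spow M) => Tuple.sort t.1) := by
    intro t t' hff
    simp only at hff
    obtain ⟨hsm, hsum⟩ := sorted t
    obtain ⟨hsm', hsum'⟩ := sorted t'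
    set g := t.1 ∘ Tuple.sort t.1 with hg
    set g' := t'.1 ∘ Tuple.sort t'.1 with hg'
    have e3 : g 0 = g' 0 ∧ g 1 = g' 1 ∧ g 2 = g' 2 := by
      apply l3 (g 0 + g 1 + g 2) _ _ _ _ _ _ le_rfl
        (hsm (show (0:Fin 3) < 1 by decide)) (hsm (show (1:Fin 3) < 2 by decide))
        (hsm' (show (0:Fin 3) < 1 by decide)) (hsm' (show (1:Fin 3) < 2 by decide))
      omega
    have comp : ∀ i : Fin 3, t.1 (Tuple.sort t.1 i) = t'.1 (Tuple.sort t.1 i) := by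
      intro i
      have : ∀ j : Fin 3, g j = t'.1 (Tuple.sort t.1 j) := by
        intro j
        rw [hff]
        fin_cases j
        · exact e3.1
        · exact e3.2.1
        · exact e3.2.2
      exact this i
    apply Subtype.ext
    funext i
    have := comp ((Tuple.sort t.1).symm i)
    rwa [Equiv.apply_symm_apply] at this
  calc Nat.card (Spow M) ≤ Nat.card (Equiv.Perm (Fin 3)) :=
        Nat.card_le_card_of_injective _ hf
  _ = 6 := by rw [Nat.card_eq_fintype_card]; decide

private lemma fin3_ext {t t' : Fin 3 → ℕ} (h0 : t 0 = t' 0) (h1 : t 1 = t' 1)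
    (h2 : t 2 = t' 2) : t = t' := by
  funext i; fin_cases i <;> assumption

private def key (t : Fin 3 → ℕ) : Bool × Fin 3 :=
  if t 0 = t 1 then (if t 0 = t 2 then (false, 0) else (decide (t 0 < t 2), 2))
  else if t 0 = t 2 then (decide (t 0 < t 1), 1)
  else (decide (t 1 < t 0), 0)

private lemma key_spec (t : Fin 3 → ℕ) (hrep : t 0 = t 1 ∨ t 0 = t 2 ∨ t 1 = t 2) :
    (t 0 = t 1 ∧ t 1 = t 2 ∧ key t = (false, 0)) ∨
    (∃ x y, x ≠ y ∧ t 0 = x ∧ t 1 = x ∧ t 2 = y ∧ key t = (decide (x < y), 2)) ∨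
    (∃ x y, x ≠ y ∧ t 0 = x ∧ t 2 = x ∧ t 1 = y ∧ key t = (decide (x < y), 1)) ∨
    (∃ x y, x ≠ y ∧ t 1 = x ∧ t 2 = x ∧ t 0 = y ∧ key t = (decide (x < y), 0)) := by
  by_cases e1 : t 0 = t 1 <;> by_cases e2 : t 0 = t 2
  · exact Or.inl ⟨e1, e1 ▸ e2, by simp only [key, if_pos e1, if_pos e2]⟩
  · refine Or.inr (Or.inl ⟨t 0, t 2, e2, rfl, e1.symm, rfl, ?_⟩)
    simp only [key, if_pos e1, if_neg e2]
  · refine Or.inr (Or.inr (Or.inl ⟨t 0, t 1, e1, rfl, e2.symm, rfl, ?_⟩))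
    simp only [key, if_neg e1, if_pos e2]
  · have e3 : t 1 = t 2 := by tauto
    refine Or.inr (Or.inr (Or.inr ⟨t 1, t 0, fun hh => e1 hh.symm, rfl, e3.symm, rfl, ?_⟩))
    simp only [key, if_neg e1, if_neg e2]

private lemma caseB (M : ℕ) (hB : ∀ t ∈ Spow M, t 0 = t 1 ∨ t 0 = t 2 ∨ t 1 = t 2) :
    Nat.card (Spow M) ≤ 6 := by
  have hf : Function.Injective (fun t : ↥(Spow M) => key t.1) := by
    intro t t' h
    simp only at h
    have m1 : (2:ℕ)^(t.1 0) + 2^(t.1 1) + 2^(t.1 2) = M := t.2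
    have m2 : (2:ℕ)^(t'.1 0) + 2^(t'.1 1) + 2^(t'.1 2) = M := t'.2
    apply Subtype.ext
    rcases key_spec t.1 (hB t.1 t.2) with ⟨a1, a2, hk⟩ |
        ⟨x, y, hxy, a0, a1, a2, hk⟩ | ⟨x, y, hxy, a0, a2, a1, hk⟩ | ⟨x, y, hxy, a1, a2, a0, hk⟩ <;>
      rcases key_spec t'.1 (hB t'.1 t'.2) with ⟨b1, b2, hk'⟩ |
        ⟨u, v, huv, b0, b1, b2, hk'⟩ | ⟨u, v, huv, b0, b2, b1, hk'⟩ | ⟨u, v, huv, b1, b2, b0, hk'⟩ <;>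
      rw [hk, hk', Prod.mk.injEq] at h <;> obtain ⟨hb, hi⟩ := h
    -- (1,1)
    · rw [a1] at m1; rw [a2] at m1
      rw [b1] at m2; rw [b2] at m2
      have := u3 (m1.trans m2.symm)
      exact fin3_ext (by omega) (by omega) (by omega)
    -- (1,2)
    · exact absurd hi (by decide)
    -- (1,3)
    · exact absurd hi (by decide)
    -- (1,4)
    · -- t all equal, t' pattern at 0 with ¬ u < v
      exfalso
      have hvu : v < u := by
        have : ¬ u < v := by
          intro hh; rw [show (decide (u < v)) = true from by simpa using hh] at hb; simp at hb
        omega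
      rw [a1] at m1; rw [a2] at m1
      rw [b0, b1, b2] at m2
      exact u4 (u := t.1 2) hvu (by omega)
    -- (2,1)
    · exact absurd hi (by decide)
    -- (2,2)
    · rw [decide_eq_decide] at hb
      rw [a0, a1, a2] at m1; rw [b0, b1, b2] at m2
      have he : (2:ℕ)^x + 2^x + 2^y = 2^u + 2^u + 2^v := by omega
      by_cases hxy2 : x < y
      · obtain ⟨h1, h2⟩ := u1 hxy2 (hb.mp hxy2) he
        exact fin3_ext (by omega) (by omega) (by omega)
      · have h2 : ¬ u < v := fun hh => hxy2 (hb.mpr hh)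
        obtain ⟨h1, h2⟩ := u2 (by omega) (by omega) he
        exact fin3_ext (by omega) (by omega) (by omega)
    -- (2,3)
    · exact absurd hi (by decide)
    -- (2,4)
    · exact absurd hi (by decide)
    -- (3,1)
    · exact absurd hi (by decide)
    -- (3,2)
    · exact absurd hi (by decide)
    -- (3,3)
    · rw [decide_eq_decide] at hb
      rw [a0, a1, a2] at m1; rw [b0, b1, b2] at m2
      have he : (2:ℕ)^x + 2^x + 2^y = 2^u + 2^u + 2^v := by omega
      by_cases hxy2 : x < y
      · obtain ⟨h1, h2⟩ := u1 hxy2 (hb.mp hxy2) he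
        exact fin3_ext (by omega) (by omega) (by omega)
      · have h2 : ¬ u < v := fun hh => hxy2 (hb.mpr hh)
        obtain ⟨h1, h2⟩ := u2 (by omega) (by omega) he
        exact fin3_ext (by omega) (by omega) (by omega)
    -- (3,4)
    · exact absurd hi (by decide)
    -- (4,1)
    · exfalso
      have hyx : y < x := by
        have : ¬ x < y := by
          intro hh; rw [show (decide (x < y)) = true from by simpa using hh] at hb; simp at hb
        omega
      rw [a0, a1, a2] at m1
      rw [b1] at m2; rw [b2] at m2
      exact u4 (u := t'.1 2) hyx (by omega)
    -- (4,2)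
    · exact absurd hi (by decide)
    -- (4,3)
    · exact absurd hi (by decide)
    -- (4,4)
    · rw [decide_eq_decide] at hb
      rw [a0, a1, a2] at m1; rw [b0, b1, b2] at m2
      have he : (2:ℕ)^x + 2^x + 2^y = 2^u + 2^u + 2^v := by omega
      by_cases hxy2 : x < y
      · obtain ⟨h1, h2⟩ := u1 hxy2 (hb.mp hxy2) he
        exact fin3_ext (by omega) (by omega) (by omega)
      · have h2 : ¬ u < v := fun hh => hxy2 (hb.mpr hh)
        obtain ⟨h1, h2⟩ := u2 (by omega) (by omega) he
        exact fin3_ext (by omega) (by omega) (by omega)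
  calc Nat.card (Spow M) ≤ Nat.card (Bool × Fin 3) :=
        Nat.card_le_card_of_injective _ hf
  _ = 6 := by rw [Nat.card_eq_fintype_card]; decide

private lemma main_pow (M : ℕ) : Nat.card (Spow M) ≤ 6 := by
  by_cases hA : ∃ s, s ∈ Spow M ∧ s 0 ≠ s 1 ∧ s 0 ≠ s 2 ∧ s 1 ≠ s 2
  · obtain ⟨s, hs, h1, h2, h3⟩ := hA
    exact caseA M s hs h1 h2 h3
  · push_neg at hA
    apply caseB
    intro t ht
    by_cases e1 : t 0 = t 1
    · exact Or.inl e1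
    by_cases e2 : t 0 = t 2
    · exact Or.inr (Or.inl e2)
    exact Or.inr (Or.inr (hA t ht e1 e2))

private lemma spow_fin (M : ℕ) : (Spow M).Finite := by
  apply Set.Finite.subset (Set.Finite.pi (fun _ : Fin 3 => Set.finite_Iio M))
  intro e he
  have h : (2:ℕ)^(e 0) + 2^(e 1) + 2^(e 2) = M := he
  rw [Set.mem_pi]
  intro i _
  simp only [Set.mem_Iio]
  have p0 := pow2_pos (e 0); have p1 := pow2_pos (e 1); have p2 := pow2_pos (e 2)
  fin_cases i
  · show e 0 < M
    have := Nat.lt_two_pow_self (n := e 0); omega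
  · show e 1 < M
    have := Nat.lt_two_pow_self (n := e 1); omega
  · show e 2 < M
    have := Nat.lt_two_pow_self (n := e 2); omega

theorem stmt_6' (F : Set ℕ) (hF : F = {x : ℕ | ∃ m : ℕ, x = 2 ^ (m + 2) - 1}) :
    ∀ n : ℕ, Set.ncard {c : Fin 3 → ℕ | (∀ i, c i ∈ F) ∧ ∑ i, c i = n} ≤ 6 := by
  intro n
  set T := {c : Fin 3 → ℕ | (∀ i, c i ∈ F) ∧ ∑ i, c i = n} with hT
  have key : ∀ c ∈ T, ∀ i : Fin 3, (2:ℕ)^(Nat.log 2 (c i + 1)) = c i + 1 := by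
    intro c hc i
    have hmem : c i ∈ F := hc.1 i
    rw [hF] at hmem
    obtain ⟨m, hm⟩ := hmem
    have h1 : c i + 1 = 2^(m+2) := by have := pow2_pos (m+2); omega
    rw [h1, Nat.log_pow (by norm_num)]
  have hg : ∀ c : ↥T, (fun i => Nat.log 2 (c.1 i + 1)) ∈ Spow (n + 3) := by
    intro c
    have k0 := key c.1 c.2 0; have k1 := key c.1 c.2 1; have k2 := key c.1 c.2 2
    have hsum : c.1 0 + c.1 1 + c.1 2 = n := by
      have := c.2.2
      rwa [Fin.sum_univ_three] at this
    show (2:ℕ)^(Nat.log 2 (c.1 0 + 1)) + 2^(Nat.log 2 (c.1 1 + 1))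
        + 2^(Nat.log 2 (c.1 2 + 1)) = n + 3
    omega
  have hinj : Function.Injective (fun c : ↥T => (⟨_, hg c⟩ : ↥(Spow (n + 3)))) := by
    intro c c' h
    have h' : ∀ i : Fin 3, Nat.log 2 (c.1 i + 1) = Nat.log 2 (c'.1 i + 1) := by
      intro i
      exact congrFun (congrArg Subtype.val h) i
    apply Subtype.ext
    funext i
    have k1 := key c.1 c.2 i
    have k2 := key c'.1 c'.2 i
    rw [h' i] at k1
    omega
  have hfin : Finite ↥(Spow (n + 3)) := (spow_fin (n + 3)).to_subtype
  calc Set.ncard T = Nat.card ↥T := (Nat.card_coe_set_eq T).symm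
  _ ≤ Nat.card ↥(Spow (n + 3)) := Nat.card_le_card_of_injective _ hinj
  _ ≤ 6 := main_pow (n + 3)

theorem stmt_6 (F : Set ℕ) (hF : F = {x : ℕ | ∃ m : ℕ, x = 2 ^ (m + 2) - 1}) :
    ∀ n : ℕ, r 3 F n ≤ 6 := by
  intro n
  exact stmt_6' F hF n
end

section
/- Let F = {2^{m+2} − 1 : m ∈ ℕ} and A = ℕ \ F. Then for every integer n ≥ 1, r(3,A,n) − r(3,A,n−1) = (n + 1) − 3⌊log₂(n+1)⌋ + 3 + 3·r(2,F,n) − (r(3,F,n) − r(3,F,n−1)), where ⌊log₂ m⌋ denotes the integer part of the base-2 logarithm of m. -/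
open Finset Finset.Nat

/-- Decompose a sum over `(k+1)`-tuples along the first coordinate. -/
lemma sum_AD_succ {M : Type*} [AddCommMonoid M] (k n : ℕ) (g : (Fin (k+1) → ℕ) → M) :
    ∑ c ∈ antidiagonalTuple (k+1) n, g c
      = ∑ j ∈ range (n+1), ∑ d ∈ antidiagonalTuple k (n - j), g (Fin.cons j d) := by
  rw [Finset.sum_sigma' (range (n+1)) (fun j => antidiagonalTuple k (n-j))
    (fun j d => g (Fin.cons j d))]
  refine Finset.sum_nbij' (fun c => ⟨c 0, Fin.tail c⟩) (fun p => Fin.cons p.1 p.2) ?_ ?_ ?_ ?_ ?_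
  · intro c hc
    rw [mem_antidiagonalTuple] at hc
    rw [Fin.sum_univ_succ] at hc
    simp only [Finset.mem_sigma, Finset.mem_range, mem_antidiagonalTuple]
    constructor
    · omega
    · show ∑ i, Fin.tail c i = n - c 0
      unfold Fin.tail
      omega
  · intro p hp
    simp only [Finset.mem_sigma, Finset.mem_range, mem_antidiagonalTuple] at hp ⊢
    rw [Fin.sum_univ_succ]
    simp only [Fin.cons_zero, Fin.cons_succ]
    omega
  · intro c _; exact Fin.cons_self_tail c
  · intro p hp; simp
  · intro c _; simp [Fin.cons_self_tail]

/-- Permutation invariance of sums over antidiagonal tuples. -/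
lemma sum_AD_perm {M : Type*} [AddCommMonoid M] (k n : ℕ) (σ : Equiv.Perm (Fin k))
    (g : (Fin k → ℕ) → M) :
    ∑ c ∈ antidiagonalTuple k n, g c = ∑ c ∈ antidiagonalTuple k n, g (c ∘ σ) := by
  refine (Finset.sum_nbij' (fun c => c ∘ σ) (fun c => c ∘ σ.symm) ?_ ?_ ?_ ?_ ?_).symm
  · intro c hc
    rw [mem_antidiagonalTuple] at hc ⊢
    rw [← hc]
    exact Equiv.sum_comp σ c
  · intro c hc
    rw [mem_antidiagonalTuple] at hc ⊢
    rw [← hc]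
    exact Equiv.sum_comp σ.symm c
  · intro c _; funext i; simp
  · intro c _; funext i; simp
  · intro c _; rfl

lemma card_AD_two (m : ℕ) : (antidiagonalTuple 2 m).card = m + 1 := by
  rw [antidiagonalTuple_two, Finset.card_map, Nat.card_antidiagonal]

/-- Sum over 3-tuples of a function of one coordinate. -/
lemma sum_AD3_single (χ : ℕ → ℤ) (n : ℕ) (i : Fin 3) :
    ∑ c ∈ antidiagonalTuple 3 n, χ (c i)
      = ∑ j ∈ range (n+1), ((n : ℤ) + 1 - j) * χ j := by
  have h0 : ∑ c ∈ antidiagonalTuple 3 n, χ (c 0)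
      = ∑ j ∈ range (n+1), ((n : ℤ) + 1 - j) * χ j := by
    rw [sum_AD_succ 2 n (fun c => χ (c 0))]
    refine Finset.sum_congr rfl fun j hj => ?_
    simp only [Fin.cons_zero]
    rw [Finset.sum_const, card_AD_two, Finset.mem_range] at *
    have : j ≤ n := by omega
    rw [nsmul_eq_mul, Nat.cast_add, Nat.cast_sub this]
    push_cast
    ring
  rw [← h0, sum_AD_perm 3 n (Equiv.swap 0 i) (fun c => χ (c 0))]
  refine Finset.sum_congr rfl fun c _ => ?_
  simp

/-- Sum over 3-tuples of a product over two coordinates. -/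
lemma sum_AD3_pair (χ : ℕ → ℤ) (n : ℕ) (σ : Equiv.Perm (Fin 3)) :
    ∑ c ∈ antidiagonalTuple 3 n, χ (c (σ 1)) * χ (c (σ 2))
      = ∑ m ∈ range (n+1), ∑ d ∈ antidiagonalTuple 2 m, χ (d 0) * χ (d 1) := by
  have h0 : ∑ c ∈ antidiagonalTuple 3 n, χ (c 1) * χ (c 2)
      = ∑ m ∈ range (n+1), ∑ d ∈ antidiagonalTuple 2 m, χ (d 0) * χ (d 1) := by
    rw [sum_AD_succ 2 n (fun c => χ (c 1) * χ (c 2))]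
    rw [← Finset.sum_range_reflect
      (fun m => ∑ d ∈ antidiagonalTuple 2 m, χ (d 0) * χ (d 1)) (n+1)]
    refine Finset.sum_congr rfl fun j hj => ?_
    rw [Finset.mem_range] at hj
    have hj' : n + 1 - 1 - j = n - j := by omega
    rw [hj']
    refine Finset.sum_congr rfl fun d _ => ?_
    have h1 : (Fin.cons j d : Fin 3 → ℕ) 1 = d 0 := rfl
    have h2 : (Fin.cons j d : Fin 3 → ℕ) 2 = d 1 := rfl
    rw [h1, h2]
  rw [← h0, sum_AD_perm 3 n σ (fun c => χ (c 1) * χ (c 2))]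
  refine Finset.sum_congr rfl fun c _ => ?_
  rfl

/-- The key algebraic (inclusion–exclusion) identity. -/
lemma key_identity (χ : ℕ → ℤ) (n : ℕ) :
    ∑ c ∈ antidiagonalTuple 3 n, ∏ i, (1 - χ (c i))
      = ((antidiagonalTuple 3 n).card : ℤ)
        - 3 * (∑ j ∈ range (n+1), ((n : ℤ) + 1 - j) * χ j)
        + 3 * (∑ m ∈ range (n+1), ∑ d ∈ antidiagonalTuple 2 m, χ (d 0) * χ (d 1))
        - ∑ c ∈ antidiagonalTuple 3 n, ∏ i, χ (c i) := by
  have expand : ∀ c : Fin 3 → ℕ, ∏ i, (1 - χ (c i))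
      = 1 - (χ (c 0) + χ (c 1) + χ (c 2))
        + (χ (c 0) * χ (c 1) + χ (c 0) * χ (c 2) + χ (c 1) * χ (c 2))
        - ∏ i, χ (c i) := by
    intro c
    simp only [Fin.prod_univ_three]
    ring
  rw [Finset.sum_congr rfl fun c _ => expand c]
  simp only [Finset.sum_sub_distrib, Finset.sum_add_distrib, Finset.sum_const,
    nsmul_eq_mul, mul_one]
  have e1 := sum_AD3_single χ n 0
  have e2 := sum_AD3_single χ n 1
  have e3 := sum_AD3_single χ n 2
  have p1 : ∑ c ∈ antidiagonalTuple 3 n, χ (c 0) * χ (c 1)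
      = ∑ m ∈ range (n+1), ∑ d ∈ antidiagonalTuple 2 m, χ (d 0) * χ (d 1) := by
    have h := sum_AD3_pair χ n (Equiv.swap 0 2 * Equiv.swap 1 2)
    have h1 : ((Equiv.swap 0 2 * Equiv.swap 1 2 : Equiv.Perm (Fin 3))) 1 = 0 := by decide
    have h2 : ((Equiv.swap 0 2 * Equiv.swap 1 2 : Equiv.Perm (Fin 3))) 2 = 1 := by decide
    rw [h1, h2] at h; exact h
  have p2 : ∑ c ∈ antidiagonalTuple 3 n, χ (c 0) * χ (c 2)
      = ∑ m ∈ range (n+1), ∑ d ∈ antidiagonalTuple 2 m, χ (d 0) * χ (d 1) := by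
    have h := sum_AD3_pair χ n (Equiv.swap 0 1)
    have h1 : ((Equiv.swap 0 1 : Equiv.Perm (Fin 3))) 1 = 0 := by decide
    have h2 : ((Equiv.swap 0 1 : Equiv.Perm (Fin 3))) 2 = 2 := by decide
    rw [h1, h2] at h; exact h
  have p3 : ∑ c ∈ antidiagonalTuple 3 n, χ (c 1) * χ (c 2)
      = ∑ m ∈ range (n+1), ∑ d ∈ antidiagonalTuple 2 m, χ (d 0) * χ (d 1) := by
    have h := sum_AD3_pair χ n (Equiv.refl _)
    simpa using h
  linarith [e1, e2, e3, p1, p2, p3]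

lemma cardAD3 (n : ℕ) : ((antidiagonalTuple 3 n).card : ℤ) = ∑ m ∈ range (n+1), ((m:ℤ)+1) := by
  rw [Finset.card_eq_sum_ones]
  push_cast
  rw [sum_AD_succ 2 n (fun _ => (1:ℤ))]
  rw [← Finset.sum_range_reflect (fun m => ((m:ℤ)+1)) (n+1)]
  refine Finset.sum_congr rfl fun j hj => ?_
  rw [Finset.mem_range] at hj
  have hjn : j ≤ n := by omega
  rw [Finset.sum_const, card_AD_two, nsmul_eq_mul, mul_one]
  have h1 : n + 1 - 1 - j = n - j := by omega
  rw [h1, Nat.cast_add, Nat.cast_sub hjn]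
  push_cast
  ring

lemma L1_diff (χ : ℕ → ℤ) (m : ℕ) :
    (∑ j ∈ range (m+1+1), ((↑(m+1) : ℤ)+1-j) * χ j)
      - (∑ j ∈ range (m+1), ((m:ℤ)+1-j) * χ j)
      = ∑ j ∈ range (m+1+1), χ j := by
  rw [Finset.sum_range_succ (fun j => ((↑(m+1) : ℤ)+1-j) * χ j) (m+1),
      Finset.sum_range_succ (fun j => χ j) (m+1)]
  have h : ∑ j ∈ range (m+1), ((↑(m+1) : ℤ)+1-j) * χ j
      = ∑ j ∈ range (m+1), (((m:ℤ)+1-j) * χ j + χ j) := by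
    refine Finset.sum_congr rfl fun j _ => ?_
    push_cast
    ring
  rw [h, Finset.sum_add_distrib]
  push_cast
  ring

lemma count_F (F : Set ℕ) (hF : F = {x : ℕ | ∃ m : ℕ, x = 2 ^ (m + 2) - 1})
    [DecidablePred (· ∈ F)] (n : ℕ) (hn : 1 ≤ n) :
    (∑ j ∈ range (n+1), if j ∈ F then (1:ℤ) else 0) = (Nat.log 2 (n+1) : ℤ) - 1 := by
  have h2 : (1:ℕ) < 2 := one_lt_two
  have hne : n + 1 ≠ 0 := by omega
  have hL : 1 ≤ Nat.log 2 (n+1) := by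
    have : 2 ^ 1 ≤ n + 1 := by omega
    exact (Nat.le_log_iff_pow_le h2 hne).mpr this
  rw [Finset.sum_boole]
  have hset : (range (n+1)).filter (fun j => j ∈ F)
      = (range (Nat.log 2 (n+1) - 1)).image (fun m => 2 ^ (m + 2) - 1) := by
    ext j
    simp only [Finset.mem_filter, Finset.mem_range, Finset.mem_image, hF, Set.mem_setOf_eq]
    constructor
    · rintro ⟨hjn, m, rfl⟩
      refine ⟨m, ?_, rfl⟩
      have hp : 1 ≤ 2 ^ (m + 2) := Nat.one_le_two_pow
      have hle : 2 ^ (m + 2) ≤ n + 1 := by omega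
      have := (Nat.le_log_iff_pow_le h2 hne).mpr hle
      omega
    · rintro ⟨m, hm, rfl⟩
      have hmle : m + 2 ≤ Nat.log 2 (n+1) := by omega
      have hle : 2 ^ (m + 2) ≤ n + 1 := (Nat.le_log_iff_pow_le h2 hne).mp hmle
      exact ⟨by omega, m, rfl⟩
  rw [hset, Finset.card_image_of_injective _ ?inj, Finset.card_range]
  · rw [Nat.cast_sub hL]
    push_cast
    ring
  case inj =>
    intro a b hab
    simp only at hab
    have ha : 1 ≤ 2 ^ (a + 2) := Nat.one_le_two_pow
    have hb : 1 ≤ 2 ^ (b + 2) := Nat.one_le_two_pow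
    have : 2 ^ (a + 2) = 2 ^ (b + 2) := by omega
    have := Nat.pow_right_injective (le_refl 2) this
    omega

lemma r_cast (B : Set ℕ) [DecidablePred (· ∈ B)] (k n : ℕ) :
    (r k B n : ℤ) = ∑ c ∈ antidiagonalTuple k n, (if ∀ i, c i ∈ B then (1:ℤ) else 0) := by
  rw [r]
  have h : {c : Fin k → ℕ | (∀ i, c i ∈ B) ∧ ∑ i, c i = n}
      = (((antidiagonalTuple k n).filter fun c => ∀ i, c i ∈ B : Finset (Fin k → ℕ)) :
          Set (Fin k → ℕ)) := by
    ext c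
    simp [mem_antidiagonalTuple, and_comm]
  rw [h, Set.ncard_coe_finset, Finset.card_filter]
  push_cast
  rfl

lemma rF_cast (F : Set ℕ) [DecidablePred (· ∈ F)] (k n : ℕ) :
    (r k F n : ℤ) = ∑ c ∈ antidiagonalTuple k n,
      ∏ i, (if c i ∈ F then (1:ℤ) else 0) := by
  rw [r_cast]
  refine Finset.sum_congr rfl fun c _ => ?_
  rw [Finset.prod_boole]
  simp

lemma rA_cast (F : Set ℕ) [DecidablePred (· ∈ F)] (A : Set ℕ) (hA : A = Set.univ \ F)
    (k n : ℕ) :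
    (r k A n : ℤ) = ∑ c ∈ antidiagonalTuple k n,
      ∏ i, (1 - if c i ∈ F then (1:ℤ) else 0) := by
  classical
  rw [r_cast]
  refine Finset.sum_congr rfl fun c _ => ?_
  have h : ∀ x : ℕ, (1 - if x ∈ F then (1:ℤ) else 0) = (if x ∉ F then (1:ℤ) else 0) := by
    intro x
    by_cases hx : x ∈ F <;> simp [hx]
  calc (if ∀ i, c i ∈ A then (1:ℤ) else 0)
      = if ∀ i, c i ∉ F then (1:ℤ) else 0 := by
        subst hA; simp [Set.mem_diff]
    _ = ∏ i, (if c i ∉ F then (1:ℤ) else 0) := by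
        rw [Finset.prod_boole]; simp
    _ = ∏ i, (1 - if c i ∈ F then (1:ℤ) else 0) := by
        refine Finset.prod_congr rfl fun i _ => (h (c i)).symm

theorem stmt_7 (F : Set ℕ) (hF : F = {x : ℕ | ∃ m : ℕ, x = 2 ^ (m + 2) - 1})
    (A : Set ℕ) (hA : A = Set.univ \ F) :
    ∀ n : ℕ, 1 ≤ n →
      (r 3 A n : ℤ) - (r 3 A (n - 1) : ℤ) =
        ((n : ℤ) + 1) - 3 * (Nat.log 2 (n + 1) : ℤ) + 3 + 3 * (r 2 F n : ℤ)
          - ((r 3 F n : ℤ) - (r 3 F (n - 1) : ℤ)) := by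
  classical
  intro n hn
  obtain ⟨m, rfl⟩ : ∃ m, n = m + 1 := ⟨n - 1, by omega⟩
  simp only [Nat.add_sub_cancel]
  set χ : ℕ → ℤ := fun x => if x ∈ F then (1:ℤ) else 0 with hχ
  have hA1 : (r 3 A (m+1) : ℤ) = ∑ c ∈ antidiagonalTuple 3 (m+1), ∏ i, (1 - χ (c i)) :=
    rA_cast F A hA 3 (m+1)
  have hA2 : (r 3 A m : ℤ) = ∑ c ∈ antidiagonalTuple 3 m, ∏ i, (1 - χ (c i)) :=
    rA_cast F A hA 3 m
  have hF1 : (r 3 F (m+1) : ℤ) = ∑ c ∈ antidiagonalTuple 3 (m+1), ∏ i, χ (c i) :=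
    rF_cast F 3 (m+1)
  have hF2 : (r 3 F m : ℤ) = ∑ c ∈ antidiagonalTuple 3 m, ∏ i, χ (c i) :=
    rF_cast F 3 m
  have hF3 : (r 2 F (m+1) : ℤ)
      = ∑ d ∈ antidiagonalTuple 2 (m+1), χ (d 0) * χ (d 1) := by
    rw [rF_cast F 2 (m+1)]
    refine Finset.sum_congr rfl fun d _ => ?_
    rw [Fin.prod_univ_two]
  have k1 := key_identity χ (m+1)
  have k2 := key_identity χ m
  have c1 := cardAD3 (m+1)
  have c2 := cardAD3 m
  have hC := Finset.sum_range_succ (fun m' => ((m':ℤ)+1)) (m+1)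
  have hL := L1_diff χ m
  have hcount := count_F F hF (m+1) (Nat.le_add_left 1 m)
  have hP := Finset.sum_range_succ
    (fun m' => ∑ d ∈ antidiagonalTuple 2 m', χ (d 0) * χ (d 1)) (m+1)
  have hcount' : ∑ j ∈ range (m + 1 + 1), χ j = (Nat.log 2 (m + 1 + 1) : ℤ) - 1 := hcount
  rw [hA1, hA2, hF1, hF2, hF3, k1, k2]
  push_cast at k1 k2 c1 c2 hC hL hcount' hP ⊢
  linarith [hC, hL, hcount', hP, c1, c2]
end

section
/- Let F = {2^{m+2} − 1 : m ∈ ℕ} and A = ℕ \ F. Then for every integer n ≥ 1, r(3,A,n) − r(3,A,n−1) ≥ (n + 1) − 3⌊log₂(n+1)⌋ − 3, where ⌊log₂ m⌋ denotes the integer part of the base-2 logarithm of m. -/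
set_option maxHeartbeats 1000000

/-- If `2^s + 2^t = 2^u` then `s = t`. -/
lemma pow2_L1 : ∀ u s t : ℕ, 2^s + 2^t = 2^u → s = t := by
  intro u
  induction u with
  | zero =>
    intro s t h
    have hs := Nat.one_le_two_pow (n := s)
    have ht := Nat.one_le_two_pow (n := t)
    omega
  | succ u ih =>
    intro s t h
    rcases s with _ | s
    · rcases t with _ | t
      · rfl
      · have := Nat.one_le_two_pow (n := t); omega
    · rcases t with _ | t
      · have := Nat.one_le_two_pow (n := s); omega
      · have h' : 2^s + 2^t = 2^u := by omega
        have := ih s t h'; omega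

/-- Sorted uniqueness for sums of two powers of two. -/
lemma pow2_L2s : ∀ d a b c : ℕ, a ≤ b → c ≤ d → 2^a + 2^b = 2^c + 2^d → a = c ∧ b = d := by
  intro d
  induction d with
  | zero =>
    intro a b c hab hcd h
    interval_cases c
    rcases a with _ | a
    · rcases b with _ | b
      · omega
      · have := Nat.one_le_two_pow (n := b); omega
    · have := Nat.one_le_two_pow (n := a)
      have := Nat.one_le_two_pow (n := b); omega
  | succ d ih =>
    intro a b c hab hcd h
    rcases a with _ | a
    · rcases c with _ | c
      · have hb : (2:ℕ)^b = 2^(d+1) := by omega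
        have := Nat.pow_right_injective (le_refl 2) hb
        omega
      · rcases b with _ | b
        · have h1 := Nat.one_le_two_pow (n := c)
          have h2 := Nat.one_le_two_pow (n := d); omega
        · have := Nat.one_le_two_pow (n := b); omega
    · rcases b with _ | b
      · omega
      · rcases c with _ | c
        · have := Nat.one_le_two_pow (n := a)
          have h2 := Nat.one_le_two_pow (n := b)
          rcases d with _ | d
          · omega
          · have := Nat.one_le_two_pow (n := d); omega
        · have h' : 2^a + 2^b = 2^c + 2^d := by omega
          have := ih a b c (by omega) (by omega) h'
          omega

/-- Multiset uniqueness for sums of two powers of two. -/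
lemma pow2_L2 {a b c d : ℕ} (h : 2^a + 2^b = 2^c + 2^d) :
    (a = c ∧ b = d) ∨ (a = d ∧ b = c) := by
  rcases le_total a b with hab | hab <;> rcases le_total c d with hcd | hcd
  · exact Or.inl (pow2_L2s d a b c hab hcd h)
  · have := pow2_L2s c a b d hab hcd (by omega)
    exact Or.inr ⟨this.1, this.2⟩
  · have := pow2_L2s d b a c hab hcd (by omega)
    exact Or.inr ⟨(pow2_L2s d b a c hab hcd (by omega)).2, this.1⟩
  · have := pow2_L2s c b a d hab hcd (by omega)
    exact Or.inl ⟨this.2, this.1⟩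

/-- A sum of three distinct powers of two is never a sum of two powers of two. -/
lemma pow2_L3 : ∀ r p q s t : ℕ, p < q → q < r → 2^p + 2^q + 2^r ≠ 2^s + 2^t := by
  intro r
  induction r with
  | zero => intro p q s t h1 h2 h; omega
  | succ r ih =>
    intro p q s t h1 h2 h
    rcases p with _ | p
    · rcases q with _ | q
      · omega
      · rcases s with _ | s
        · rcases t with _ | t
          · have := Nat.one_le_two_pow (n := q)
            have := Nat.one_le_two_pow (n := r); omega
          · have h' : 2^q + 2^r = 2^t := by omega
            have := pow2_L1 t q r h'; omega
        · rcases t with _ | t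
          · have h' : 2^q + 2^r = 2^s := by omega
            have := pow2_L1 s q r h'; omega
          · omega
    · rcases q with _ | q
      · omega
      · rcases s with _ | s
        · rcases t with _ | t
          · have := Nat.one_le_two_pow (n := p)
            have := Nat.one_le_two_pow (n := q)
            have := Nat.one_le_two_pow (n := r); omega
          · omega
        · rcases t with _ | t
          · omega
          · exact ih p q s t (by omega) (by omega) (by omega)

/-- Sorted uniqueness for sums of three distinct powers of two. -/
lemma pow2_L4 : ∀ z x y p q r : ℕ, x < y → y < z → p < q → q < r →
    2^x + 2^y + 2^z = 2^p + 2^q + 2^r → x = p ∧ y = q ∧ z = r := by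
  intro z
  induction z with
  | zero => intro x y p q r h1 h2 h3 h4 h; omega
  | succ z ih =>
    intro x y p q r h1 h2 h3 h4 h
    rcases x with _ | x
    · rcases p with _ | p
      · -- cancel the ones
        rcases y with _ | y
        · omega
        · rcases q with _ | q
          · omega
          · have h' : 2^(y+1) + 2^(z+1) = 2^(q+1) + 2^r := by omega
            have := pow2_L2s r (y+1) (z+1) (q+1) (by omega) (by omega) h'
            omega
      · -- parity contradiction: LHS odd, RHS even
        rcases y with _ | y
        · omega
        · rcases q with _ | q
          · omega
          · rcases r with _ | r
            · omega
            · omega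
    · rcases p with _ | p
      · rcases q with _ | q
        · omega
        · rcases r with _ | r
          · omega
          · rcases y with _ | y
            · omega
            · omega
      · rcases y with _ | y
        · omega
        · rcases q with _ | q
          · omega
          · rcases r with _ | r
            · omega
            · have := ih x y p q r (by omega) (by omega) (by omega) (by omega) (by omega)
              omega



lemma card_six {α : Type*} [DecidableEq α] (A B C D E G : α) :
    ({A, B, C, D, E, G} : Finset α).card ≤ 6 := by
  have h1 := Finset.card_insert_le A ({B, C, D, E, G} : Finset α)
  have h2 := Finset.card_insert_le B ({C, D, E, G} : Finset α)
  have h3 := Finset.card_insert_le C ({D, E, G} : Finset α)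
  have h4 := Finset.card_insert_le D ({E, G} : Finset α)
  have h5 := Finset.card_insert_le E ({G} : Finset α)
  have h6 := Finset.card_singleton G
  omega

/-- Any finset of triples of exponents `(a,b,c)` with `2^a + 2^b + 2^c = M` has
at most 6 elements. -/
lemma six (M : ℕ) (s : Finset (ℕ × ℕ × ℕ))
    (hs : ∀ t ∈ s, 2 ^ t.1 + 2 ^ t.2.1 + 2 ^ t.2.2 = M) : s.card ≤ 6 := by
  classical
  rcases s.eq_empty_or_nonempty with rfl | ⟨⟨a, b, c⟩, ht0⟩
  · simp
  have hsum : 2^a + 2^b + 2^c = M := hs _ ht0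
  by_cases hd : a ≠ b ∧ b ≠ c ∧ a ≠ c
  · -- there is a solution with pairwise distinct exponents; sort it
    obtain ⟨p, q, r, hpq, hqr, hM⟩ : ∃ p q r : ℕ, p < q ∧ q < r ∧ 2^p + 2^q + 2^r = M := by
      obtain ⟨h1, h2, h3⟩ := hd
      have h6 : (a<b∧b<c) ∨ (a<c∧c<b) ∨ (b<a∧a<c) ∨ (b<c∧c<a) ∨ (c<a∧a<b) ∨ (c<b∧b<a) := by
        omega
      rcases h6 with ⟨u,v⟩|⟨u,v⟩|⟨u,v⟩|⟨u,v⟩|⟨u,v⟩|⟨u,v⟩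
      · exact ⟨a, b, c, u, v, by omega⟩
      · exact ⟨a, c, b, u, v, by omega⟩
      · exact ⟨b, a, c, u, v, by omega⟩
      · exact ⟨b, c, a, u, v, by omega⟩
      · exact ⟨c, a, b, u, v, by omega⟩
      · exact ⟨c, b, a, u, v, by omega⟩
    have hsub : s ⊆ ({(p,q,r),(p,r,q),(q,p,r),(q,r,p),(r,p,q),(r,q,p)} : Finset (ℕ×ℕ×ℕ)) := by
      intro t htm
      obtain ⟨x, y, z⟩ := t
      have heq : 2^x + 2^y + 2^z = M := hs _ htm
      by_cases hxy : x = y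
      · subst hxy
        exact absurd (show 2^p + 2^q + 2^r = 2^(x+1) + 2^z by omega) (pow2_L3 r p q _ _ hpq hqr)
      by_cases hyz : y = z
      · subst hyz
        exact absurd (show 2^p + 2^q + 2^r = 2^(y+1) + 2^x by omega) (pow2_L3 r p q _ _ hpq hqr)
      by_cases hxz : x = z
      · subst hxz
        exact absurd (show 2^p + 2^q + 2^r = 2^(x+1) + 2^y by omega) (pow2_L3 r p q _ _ hpq hqr)
      have h6 : (x<y∧y<z) ∨ (x<z∧z<y) ∨ (y<x∧x<z) ∨ (y<z∧z<x) ∨ (z<x∧x<y) ∨ (z<y∧y<x) := by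
        omega
      simp only [Finset.mem_insert, Finset.mem_singleton, Prod.mk.injEq]
      rcases h6 with ⟨u,v⟩|⟨u,v⟩|⟨u,v⟩|⟨u,v⟩|⟨u,v⟩|⟨u,v⟩
      · have := pow2_L4 z x y p q r u v hpq hqr (by omega); omega
      · have := pow2_L4 y x z p q r u v hpq hqr (by omega); omega
      · have := pow2_L4 z y x p q r u v hpq hqr (by omega); omega
      · have := pow2_L4 x y z p q r u v hpq hqr (by omega); omega
      · have := pow2_L4 y z x p q r u v hpq hqr (by omega); omega
      · have := pow2_L4 x z y p q r u v hpq hqr (by omega); omega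
    exact le_trans (Finset.card_le_card hsub) (card_six _ _ _ _ _ _)
  · -- the witness has a repeated exponent
    obtain ⟨u, v, hM⟩ : ∃ u v : ℕ, 2^(u+1) + 2^v = M := by
      by_cases h1 : a = b
      · subst h1; exact ⟨a, c, by omega⟩
      by_cases h2 : b = c
      · subst h2; exact ⟨b, a, by omega⟩
      have h3 : a = c := by tauto
      subst h3; exact ⟨a, b, by omega⟩
    have hsub : s ⊆ ({(u,u,v),(u,v,u),(v,u,u),
        (v-1,v-1,u+1),(v-1,u+1,v-1),(u+1,v-1,v-1)} : Finset (ℕ×ℕ×ℕ)) := by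
      intro t htm
      obtain ⟨x, y, z⟩ := t
      have heq : 2^x + 2^y + 2^z = M := hs _ htm
      simp only [Finset.mem_insert, Finset.mem_singleton, Prod.mk.injEq]
      by_cases hxy : x = y
      · subst hxy
        have h' : 2^(x+1) + 2^z = 2^(u+1) + 2^v := by omega
        rcases pow2_L2 h' with ⟨e1, e2⟩ | ⟨e1, e2⟩
        · left; omega
        · right; right; right; left; omega
      by_cases hyz : y = z
      · subst hyz
        have h' : 2^(y+1) + 2^x = 2^(u+1) + 2^v := by omega
        rcases pow2_L2 h' with ⟨e1, e2⟩ | ⟨e1, e2⟩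
        · right; right; left; omega
        · right; right; right; right; right; omega
      by_cases hxz : x = z
      · subst hxz
        have h' : 2^(x+1) + 2^y = 2^(u+1) + 2^v := by omega
        rcases pow2_L2 h' with ⟨e1, e2⟩ | ⟨e1, e2⟩
        · right; left; omega
        · right; right; right; right; left; omega
      · have h6 : (x<y∧y<z) ∨ (x<z∧z<y) ∨ (y<x∧x<z) ∨ (y<z∧z<x) ∨ (z<x∧x<y) ∨ (z<y∧y<x) := by
          omega
        rcases h6 with ⟨hu,hv⟩|⟨hu,hv⟩|⟨hu,hv⟩|⟨hu,hv⟩|⟨hu,hv⟩|⟨hu,hv⟩ <;>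
          exact absurd (by omega : 2^_ + 2^_ + 2^_ = 2^(u+1) + 2^v) (pow2_L3 _ _ _ _ _ hu hv)
    exact le_trans (Finset.card_le_card hsub) (card_six _ _ _ _ _ _)




open Finset

noncomputable section
open scoped Classical

def FS : Set ℕ := {x : ℕ | ∃ m : ℕ, x = 2 ^ (m + 2) - 1}

def Ffin (n : ℕ) : Finset ℕ := (range (n + 1)).filter (· ∈ FS)

def cntF (n : ℕ) : ℕ := (Ffin n).card

def gF (m : ℕ) : ℕ :=
  ((Finset.HasAntidiagonal.antidiagonal m).filter (fun q => q.1 ∈ FS ∧ q.2 ∈ FS)).card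

def qZ (j : ℕ) : ℤ := (j + 1 : ℤ) - 2 * cntF j + gF j

def W1 (n : ℕ) : ℕ := ∑ x ∈ Ffin n, (n - x + 1)
def W2 (n : ℕ) : ℕ := ∑ x ∈ Ffin n, cntF (n - x)
def W3 (n : ℕ) : ℕ := ∑ x ∈ Ffin n, gF (n - x)

lemma card_fst (m : ℕ) :
    ((Finset.HasAntidiagonal.antidiagonal m).filter (fun q => q.1 ∈ FS)).card = cntF m := by
  apply Finset.card_bij (fun q _ => q.1)
  · intro q hq
    have h1 := Finset.mem_filter.1 hq
    have h2 := Finset.HasAntidiagonal.mem_antidiagonal.1 h1.1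
    exact Finset.mem_filter.2 ⟨Finset.mem_range.2 (by omega), h1.2⟩
  · intro q hq q' hq' h
    have h2 := Finset.HasAntidiagonal.mem_antidiagonal.1 (Finset.mem_filter.1 hq).1
    have h2' := Finset.HasAntidiagonal.mem_antidiagonal.1 (Finset.mem_filter.1 hq').1
    exact Prod.ext_iff.2 ⟨h, by omega⟩
  · intro x hx
    have h1 := Finset.mem_filter.1 hx
    have h2 := Finset.mem_range.1 h1.1
    exact ⟨(x, m - x), Finset.mem_filter.2
      ⟨Finset.HasAntidiagonal.mem_antidiagonal.2 (by omega), h1.2⟩, rfl⟩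

lemma card_snd (m : ℕ) :
    ((Finset.HasAntidiagonal.antidiagonal m).filter (fun q => q.2 ∈ FS)).card = cntF m := by
  apply Finset.card_bij (fun q _ => q.2)
  · intro q hq
    have h1 := Finset.mem_filter.1 hq
    have h2 := Finset.HasAntidiagonal.mem_antidiagonal.1 h1.1
    exact Finset.mem_filter.2 ⟨Finset.mem_range.2 (by omega), h1.2⟩
  · intro q hq q' hq' h
    have h2 := Finset.HasAntidiagonal.mem_antidiagonal.1 (Finset.mem_filter.1 hq).1
    have h2' := Finset.HasAntidiagonal.mem_antidiagonal.1 (Finset.mem_filter.1 hq').1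
    exact Prod.ext_iff.2 ⟨by omega, h⟩
  · intro x hx
    have h1 := Finset.mem_filter.1 hx
    have h2 := Finset.mem_range.1 h1.1
    exact ⟨(m - x, x), Finset.mem_filter.2
      ⟨Finset.HasAntidiagonal.mem_antidiagonal.2 (by omega), h1.2⟩, rfl⟩

/-- two-set inclusion-exclusion for pairs -/
lemma r2_card (m : ℕ) :
    ((((Finset.HasAntidiagonal.antidiagonal m).filter (fun q => q.1 ∉ FS ∧ q.2 ∉ FS)).card : ℤ))
      = (m + 1 : ℤ) - 2 * cntF m + gF m := by
  set ad := Finset.HasAntidiagonal.antidiagonal m with had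
  set s1 := ad.filter (fun q => q.1 ∈ FS) with hs1
  set s2 := ad.filter (fun q => q.2 ∈ FS) with hs2
  have hu : ad.filter (fun q => q.1 ∉ FS ∧ q.2 ∉ FS) = ad \ (s1 ∪ s2) := by
    ext q
    simp only [hs1, hs2, Finset.mem_filter, Finset.mem_sdiff, Finset.mem_union]
    tauto
  have hsub : s1 ∪ s2 ⊆ ad :=
    Finset.union_subset (Finset.filter_subset _ _) (Finset.filter_subset _ _)
  have h1 : (ad \ (s1 ∪ s2)).card = ad.card - (s1 ∪ s2).card := Finset.card_sdiff_of_subset hsub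
  have h2 : (s1 ∪ s2).card + (s1 ∩ s2).card = s1.card + s2.card :=
    Finset.card_union_add_card_inter s1 s2
  have h3 : s1 ∩ s2 = ad.filter (fun q => q.1 ∈ FS ∧ q.2 ∈ FS) := by
    ext q
    simp only [hs1, hs2, Finset.mem_filter, Finset.mem_inter]
    tauto
  have h4 : (s1 ∪ s2).card ≤ ad.card := Finset.card_le_card hsub
  have h5 : ad.card = m + 1 := Finset.Nat.card_antidiagonal m
  have h6 : s1.card = cntF m := card_fst m
  have h7 : s2.card = cntF m := card_snd m
  have h8 : (s1 ∩ s2).card = gF m := by rw [h3]; rfl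
  rw [hu, h1]
  omega

def e3 (s : (_ : ℕ) × ℕ × ℕ) : Fin 3 → ℕ := ![s.1, s.2.1, s.2.2]

lemma e3_inj : Function.Injective e3 := by
  rintro ⟨a, b, c⟩ ⟨a', b', c'⟩ h
  have h0 := congrFun h 0
  have h1 := congrFun h 1
  have h2 := congrFun h 2
  simp only [e3, Matrix.cons_val_zero, Matrix.cons_val_one, Matrix.head_cons,
    Matrix.cons_val_two, Matrix.tail_cons] at h0 h1 h2
  subst h0; subst h1; subst h2; rfl

def S3 (n : ℕ) : Finset ((_ : ℕ) × ℕ × ℕ) :=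
  ((range (n + 1)).filter (· ∉ FS)).sigma
    (fun x => (Finset.HasAntidiagonal.antidiagonal (n - x)).filter (fun q => q.1 ∉ FS ∧ q.2 ∉ FS))

lemma r3_eq (A : Set ℕ) (hA : A = Set.univ \ FS) (n : ℕ) :
    r 3 A n = ∑ x ∈ (range (n + 1)).filter (· ∉ FS),
      ((Finset.HasAntidiagonal.antidiagonal (n - x)).filter (fun q => q.1 ∉ FS ∧ q.2 ∉ FS)).card := by
  have hAmem : ∀ x : ℕ, x ∈ A ↔ x ∉ FS := by
    intro x; rw [hA]; simp [Set.mem_diff]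
  have hset : {c : Fin 3 → ℕ | (∀ i, c i ∈ A) ∧ ∑ i, c i = n} = e3 '' ↑(S3 n) := by
    ext c
    constructor
    · rintro ⟨hcA, hcs⟩
      rw [Fin.sum_univ_three] at hcs
      refine ⟨⟨c 0, c 1, c 2⟩, ?_, ?_⟩
      · simp only [Finset.mem_coe, S3, Finset.mem_sigma, Finset.mem_filter,
          Finset.mem_range, Finset.HasAntidiagonal.mem_antidiagonal]
        exact ⟨⟨by omega, (hAmem _).1 (hcA 0)⟩,
          ⟨by omega, (hAmem _).1 (hcA 1), (hAmem _).1 (hcA 2)⟩⟩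
      · funext i; fin_cases i <;> simp [e3]
    · rintro ⟨⟨x, y, z⟩, hmem, rfl⟩
      simp only [Finset.mem_coe, S3, Finset.mem_sigma, Finset.mem_filter,
        Finset.mem_range, Finset.HasAntidiagonal.mem_antidiagonal] at hmem
      obtain ⟨⟨hx1, hx2⟩, hyz, hy2, hz2⟩ := hmem
      constructor
      · intro i; fin_cases i <;> simp [e3] <;> rw [hAmem] <;> assumption
      · rw [Fin.sum_univ_three]
        simp only [e3, Matrix.cons_val_zero, Matrix.cons_val_one, Matrix.head_cons,
          Matrix.cons_val_two, Matrix.tail_cons]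
        omega
  rw [r, hset, Set.ncard_image_of_injective _ e3_inj, Set.ncard_coe_finset, S3,
    Finset.card_sigma]

/-- The master formula. -/
lemma r3_formula (A : Set ℕ) (hA : A = Set.univ \ FS) (n : ℕ) :
    (r 3 A n : ℤ) = (∑ j ∈ range (n + 1), qZ j) - W1 n + 2 * W2 n - W3 n := by
  rw [r3_eq A hA n]
  push_cast
  have step1 : ∑ x ∈ (range (n + 1)).filter (· ∉ FS),
      ((((Finset.HasAntidiagonal.antidiagonal (n - x)).filter (fun q => q.1 ∉ FS ∧ q.2 ∉ FS)).card : ℤ))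
      = ∑ x ∈ (range (n + 1)).filter (· ∉ FS), qZ (n - x) := by
    refine Finset.sum_congr rfl (fun x _ => ?_)
    rw [r2_card (n - x), qZ]
  rw [step1]
  have step2 : ∑ x ∈ (range (n + 1)).filter (· ∉ FS), qZ (n - x)
      = (∑ x ∈ range (n + 1), qZ (n - x)) - ∑ x ∈ Ffin n, qZ (n - x) := by
    have := Finset.sum_filter_add_sum_filter_not (range (n + 1)) (· ∈ FS)
      (fun x => qZ (n - x))
    rw [Ffin]
    omega
  rw [step2]
  have step3 : ∑ x ∈ range (n + 1), qZ (n - x) = ∑ j ∈ range (n + 1), qZ j := by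
    have := Finset.sum_range_reflect qZ (n + 1)
    simpa using this
  rw [step3]
  have step4 : ∑ x ∈ Ffin n, qZ (n - x)
      = (W1 n : ℤ) - 2 * W2 n + W3 n := by
    simp only [qZ]
    rw [Finset.sum_add_distrib, Finset.sum_sub_distrib, ← Finset.mul_sum, W1, W2, W3]
    push_cast
    ring
  rw [step4]
  ring

lemma not_mem_Ffin (m : ℕ) : (m + 1) ∉ Ffin m := by
  intro h
  have := Finset.mem_range.1 (Finset.mem_filter.1 h).1
  omega

lemma Ffin_succ (m : ℕ) :
    Ffin (m + 1) = if (m + 1) ∈ FS then insert (m + 1) (Ffin m) else Ffin m := by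
  rw [Ffin, Finset.range_add_one, Finset.filter_insert]
  rfl

lemma cntF_succ (m : ℕ) :
    cntF (m + 1) = cntF m + if (m + 1) ∈ FS then 1 else 0 := by
  rw [cntF, Ffin_succ]
  by_cases h : (m + 1) ∈ FS <;> simp [h, Finset.card_insert_of_notMem (not_mem_Ffin m), cntF]

lemma W1_succ (m : ℕ) : W1 (m + 1) = W1 m + cntF (m + 1) := by
  have hcong : ∑ x ∈ Ffin m, (m + 1 - x + 1) = W1 m + cntF m := by
    have h1 : ∑ x ∈ Ffin m, (m + 1 - x + 1) = ∑ x ∈ Ffin m, ((m - x + 1) + 1) := by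
      refine Finset.sum_congr rfl (fun x hx => ?_)
      have := Finset.mem_range.1 (Finset.mem_filter.1 hx).1
      omega
    rw [h1, Finset.sum_add_distrib, Finset.sum_const, smul_eq_mul, mul_one]
    rfl
  rw [W1, Ffin_succ, cntF_succ]
  by_cases h : (m + 1) ∈ FS
  · simp only [h, if_true]
    rw [Finset.sum_insert (not_mem_Ffin m)]
    have h2 : m + 1 - (m + 1) + 1 = 1 := by omega
    rw [h2, hcong]
    omega
  · simp only [h, if_false]
    rw [hcong]
    omega

lemma cntF_mono {a b : ℕ} (h : a ≤ b) : cntF a ≤ cntF b := by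
  apply Finset.card_le_card
  apply Finset.filter_subset_filter
  exact Finset.range_subset_range.2 (by omega)

lemma W2_mono (m : ℕ) : W2 m ≤ W2 (m + 1) := by
  calc W2 m = ∑ x ∈ Ffin m, cntF (m - x) := rfl
    _ ≤ ∑ x ∈ Ffin m, cntF (m + 1 - x) :=
        Finset.sum_le_sum (fun x _ => cntF_mono (by omega))
    _ ≤ ∑ x ∈ Ffin (m + 1), cntF (m + 1 - x) := by
        apply Finset.sum_le_sum_of_subset
        apply Finset.filter_subset_filter
        exact Finset.range_subset_range.2 (by omega)
    _ = W2 (m + 1) := rfl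

lemma pow_log_FS {x : ℕ} (hx : x ∈ FS) : 2 ^ Nat.log 2 (x + 1) = x + 1 := by
  obtain ⟨m, rfl⟩ := hx
  have h1 : (1:ℕ) ≤ 2 ^ (m + 2) := Nat.one_le_two_pow
  have h2 : 2 ^ (m + 2) - 1 + 1 = 2 ^ (m + 2) := by omega
  rw [h2, Nat.log_pow (by norm_num)]

lemma W3_le (n : ℕ) : W3 n ≤ 6 := by
  set Sig := (Ffin n).sigma
    (fun x => (Finset.HasAntidiagonal.antidiagonal (n - x)).filter (fun q => q.1 ∈ FS ∧ q.2 ∈ FS)) with hSig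
  have hW3 : W3 n = Sig.card := by rw [hSig, Finset.card_sigma]; rfl
  set φ : ((_ : ℕ) × ℕ × ℕ) → ℕ × ℕ × ℕ :=
    fun s => (Nat.log 2 (s.1 + 1), Nat.log 2 (s.2.1 + 1), Nat.log 2 (s.2.2 + 1)) with hφ
  have hmem : ∀ s ∈ Sig, s.1 ∈ FS ∧ s.2.1 ∈ FS ∧ s.2.2 ∈ FS ∧ s.1 + s.2.1 + s.2.2 = n := by
    rintro ⟨x, y, z⟩ hs
    simp only [hSig, Finset.mem_sigma, Ffin, Finset.mem_filter, Finset.mem_range,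
      Finset.HasAntidiagonal.mem_antidiagonal] at hs
    obtain ⟨⟨hxr, hxF⟩, hyz, hyF, hzF⟩ := hs
    refine ⟨hxF, hyF, hzF, ?_⟩
    show x + y + z = n
    omega
  have hinj : Set.InjOn φ ↑Sig := by
    rintro ⟨x, y, z⟩ hs ⟨x', y', z'⟩ ht h
    obtain ⟨h1, h2, h3, _⟩ := hmem _ (Finset.mem_coe.1 hs)
    obtain ⟨h1', h2', h3', _⟩ := hmem _ (Finset.mem_coe.1 ht)
    simp only [hφ, Prod.mk.injEq] at h
    have e1 : x + 1 = x' + 1 := by rw [← pow_log_FS h1, ← pow_log_FS h1', h.1]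
    have e2 : y + 1 = y' + 1 := by rw [← pow_log_FS h2, ← pow_log_FS h2', h.2.1]
    have e3 : z + 1 = z' + 1 := by rw [← pow_log_FS h3, ← pow_log_FS h3', h.2.2]
    have : x = x' := by omega
    subst this
    have : y = y' := by omega
    subst this
    have : z = z' := by omega
    subst this
    rfl
  have himg : ∀ t ∈ Sig.image φ, 2 ^ t.1 + 2 ^ t.2.1 + 2 ^ t.2.2 = n + 3 := by
    intro t ht
    obtain ⟨⟨x, y, z⟩, hs, rfl⟩ := Finset.mem_image.1 ht
    obtain ⟨h1, h2, h3, h4⟩ := hmem _ hs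
    simp only [hφ]
    rw [pow_log_FS h1, pow_log_FS h2, pow_log_FS h3]
    omega
  have := six (n + 3) (Sig.image φ) himg
  have hc : (Sig.image φ).card = Sig.card := Finset.card_image_of_injOn hinj
  omega

lemma cnt_bound (n : ℕ) (hn : 1 ≤ n) :
    (cntF n : ℤ) ≤ (Nat.log 2 (n + 1) : ℤ) - 1 := by
  have hlog1 : 0 < Nat.log 2 (n + 1) := Nat.log_pos (by norm_num) (by omega)
  have hsub : Ffin n ⊆ (range (Nat.log 2 (n + 1) - 1)).image (fun m => 2 ^ (m + 2) - 1) := by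
    intro x hx
    obtain ⟨hr, m, rfl⟩ := Finset.mem_filter.1 hx
    have hr' := Finset.mem_range.1 hr
    have h1 : (1:ℕ) ≤ 2 ^ (m + 2) := Nat.one_le_two_pow
    have hp : 2 ^ (m + 2) ≤ n + 1 := by omega
    have := (Nat.le_log_iff_pow_le (by norm_num) (by omega : n + 1 ≠ 0)).2 hp
    exact Finset.mem_image.2 ⟨m, Finset.mem_range.2 (by omega), rfl⟩
  have h2 := Finset.card_le_card hsub
  have h3 := Finset.card_image_le (s := range (Nat.log 2 (n + 1) - 1))
    (f := fun m => 2 ^ (m + 2) - 1)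
  rw [Finset.card_range] at h3
  have : cntF n ≤ Nat.log 2 (n + 1) - 1 := le_trans h2 h3
  omega

theorem stmt_8 (F : Set ℕ) (hF : F = {x : ℕ | ∃ m : ℕ, x = 2 ^ (m + 2) - 1})
    (A : Set ℕ) (hA : A = Set.univ \ F) :
    ∀ n : ℕ, 1 ≤ n →
      ((n : ℤ) + 1) - 3 * (Nat.log 2 (n + 1) : ℤ) - 3 ≤
        (r 3 A n : ℤ) - (r 3 A (n - 1) : ℤ) := by
  subst hF
  intro n hn
  obtain ⟨m, rfl⟩ : ∃ m, n = m + 1 := ⟨n - 1, by omega⟩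
  have hA' : A = Set.univ \ FS := hA
  have F1 := r3_formula A hA' (m + 1)
  have F0 := r3_formula A hA' m
  simp only [Nat.add_sub_cancel]
  rw [F1, F0]
  have h1 : ∑ j ∈ range (m + 1 + 1), qZ j = ∑ j ∈ range (m + 1), qZ j + qZ (m + 1) :=
    Finset.sum_range_succ qZ (m + 1)
  have h2 : ((W1 (m + 1) : ℤ)) = (W1 m : ℤ) + (cntF (m + 1) : ℤ) := by
    exact_mod_cast W1_succ m
  have h3 : ((W2 m : ℤ)) ≤ (W2 (m + 1) : ℤ) := by exact_mod_cast W2_mono m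
  have h4 : ((W3 (m + 1) : ℤ)) ≤ 6 := by exact_mod_cast W3_le (m + 1)
  have h5 : (0 : ℤ) ≤ (W3 m : ℤ) := by positivity
  have h6 := cnt_bound (m + 1) (by omega)
  have h7 : qZ (m + 1) = ((m : ℤ) + 2) - 2 * (cntF (m + 1) : ℤ) + (gF (m + 1) : ℤ) := by
    rw [qZ]; push_cast; ring
  have h8 : (0 : ℤ) ≤ (gF (m + 1) : ℤ) := by positivity
  rw [h1]
  push_cast
  push_cast at h6
  linarith
end
end

section
/- Let k ≥ 3 be an integer, let F ⊆ ℕ with 0 ∉ F, and let f'(n) = |F ∩ {0,1,…,n}|. Suppose there exist constants C > 0 and c > 0 such that f'(n) ≤ C·(log n)^c for all sufficiently large n. Then for A = ℕ \ F, the sequence (r(k,A,n))_{n≥0} is eventually strictly increasing: there exists N such that r(k,A,n) < r(k,A,n+1) for all n ≥ N. -/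
open Finset

section Chunks
open Finset

/-- number of `j`-tuples of naturals summing to `m`. -/
def T (j m : ℕ) : ℕ := (Finset.Nat.antidiagonalTuple j m).card

lemma card_fiber (j m a : ℕ) (ham : a ≤ m) (i : Fin (j+1))
    (P : (Fin j → ℕ) → Prop) [DecidablePred P] :
    ((Finset.Nat.antidiagonalTuple (j+1) m).filter fun c => c i = a ∧ P (i.removeNth c)).card
      = ((Finset.Nat.antidiagonalTuple j (m-a)).filter P).card := by
  apply Finset.card_nbij' (fun c => i.removeNth c) (fun d => i.insertNth a d)
  · intro c hc
    simp only [Finset.mem_coe, Finset.mem_filter, Finset.Nat.mem_antidiagonalTuple] at hc ⊢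
    obtain ⟨hsum, hia, hP⟩ := hc
    refine ⟨?_, hP⟩
    have := Fin.sum_univ_succAbove c i
    have hrm : ∀ x, i.removeNth c x = c (i.succAbove x) := fun _ => rfl
    simp only [hrm]
    omega
  · intro d hd
    simp only [Finset.mem_coe, Finset.mem_filter, Finset.Nat.mem_antidiagonalTuple] at hd ⊢
    obtain ⟨hsum, hP⟩ := hd
    refine ⟨?_, by simp, by rw [Fin.removeNth_insertNth]; exact hP⟩
    rw [Fin.sum_univ_succAbove _ i]
    simp [hsum]
    omega
  · intro c hc
    simp only [Finset.mem_coe, Finset.mem_filter] at hc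
    rw [← hc.2.1]
    exact Fin.insertNth_self_removeNth i c
  · intro d hd
    simp

lemma T_succ (j m : ℕ) : T (j+1) (m+1) = T j (m+1) + T (j+1) m := by
  classical
  have h0 : ((Finset.Nat.antidiagonalTuple (j+1) (m+1)).filter fun c => c 0 = 0).card
      = T j (m+1) := by
    have h := card_fiber j (m+1) 0 (by omega) 0 (fun _ => True)
    simpa [T] using h
  have h1 : ((Finset.Nat.antidiagonalTuple (j+1) (m+1)).filter fun c => ¬ c 0 = 0).card
      = T (j+1) m := by
    have hsum : ∀ (c : Fin (j+1) → ℕ) (v : ℕ),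
        ∑ x, Function.update c 0 v x = v + ∑ x : Fin j, c ((0:Fin (j+1)).succAbove x) := by
      intro c v
      rw [Fin.sum_univ_succAbove _ 0, Function.update_self]
      congr 1
    have hsum' : ∀ (c : Fin (j+1) → ℕ),
        ∑ x, c x = c 0 + ∑ x : Fin j, c ((0:Fin (j+1)).succAbove x) :=
      fun c => Fin.sum_univ_succAbove c 0
    apply Finset.card_nbij' (fun c => Function.update c 0 (c 0 - 1))
      (fun d => Function.update d 0 (d 0 + 1))
    · intro c hc
      simp only [Finset.mem_coe, Finset.mem_filter, Finset.Nat.mem_antidiagonalTuple] at hc ⊢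
      rw [hsum]
      rw [hsum'] at hc
      clear hsum hsum' h0
      omega
    · intro d hd
      simp only [Finset.mem_coe, Finset.mem_filter, Finset.Nat.mem_antidiagonalTuple] at hd ⊢
      rw [hsum]
      rw [hsum'] at hd
      refine ⟨by clear hsum hsum' h0; omega, by simp⟩
    · intro c hc
      simp only [Finset.mem_coe, Finset.mem_filter] at hc
      beta_reduce
      rw [Function.update_idem, Function.update_self]
      have : c 0 - 1 + 1 = c 0 := Nat.succ_pred_eq_of_pos (Nat.pos_of_ne_zero hc.2)
      rw [this, Function.update_eq_self]
    · intro d hd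
      beta_reduce
      rw [Function.update_idem, Function.update_self]
      simp [Function.update_eq_self]
  have h2 := Finset.card_filter_add_card_filter_not
    (s := Finset.Nat.antidiagonalTuple (j+1) (m+1)) (p := fun c => c 0 = 0)
  rw [h0, h1] at h2
  exact h2.symm

lemma T_eq (j m : ℕ) : T (j+1) m = (m + j).choose j := by
  induction j generalizing m with
  | zero => simp [T, Finset.Nat.antidiagonalTuple_one]
  | succ j ih =>
    induction m with
    | zero => simp [T, Finset.Nat.antidiagonalTuple_zero_right]
    | succ m ihm =>
      rw [T_succ, ih, ihm]
      have : m + 1 + (j + 1) = (m + j + 1) + 1 := by ring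
      rw [this, Nat.choose_succ_succ' (m + j + 1) j]
      congr 2
      omega

lemma T_mono (j : ℕ) {m m' : ℕ} (h : m ≤ m') : T (j+1) m ≤ T (j+1) m' := by
  rw [T_eq, T_eq]
  exact Nat.choose_le_choose j (by omega)

section FixedF
variable {F : Set ℕ} [DecidablePred (· ∈ F)]

lemma card_coordF (J m : ℕ) (i : Fin (J+1)) :
    ((Finset.Nat.antidiagonalTuple (J+1) m).filter fun c => c i ∈ F).card
      = ∑ a ∈ (Finset.Iic m).filter (· ∈ F), T J (m - a) := by
  classical
  rw [Finset.card_eq_sum_card_fiberwise (f := fun c => c i)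
      (t := (Finset.Iic m).filter (· ∈ F))]
  · refine Finset.sum_congr rfl fun a ha => ?_
    simp only [Finset.mem_filter, Finset.mem_Iic] at ha
    rw [Finset.filter_filter]
    have hset : ((Finset.Nat.antidiagonalTuple (J+1) m).filter
        fun c => c i ∈ F ∧ c i = a)
        = ((Finset.Nat.antidiagonalTuple (J+1) m).filter
        fun c => c i = a ∧ (fun _ : Fin J → ℕ => True) (i.removeNth c)) := by
      apply Finset.filter_congr
      intro c _
      constructor
      · rintro ⟨_, h⟩; exact ⟨h, trivial⟩
      · rintro ⟨h, _⟩; exact ⟨h ▸ ha.2, h⟩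
    rw [hset, card_fiber J m a ha.1 i (fun _ => True)]
    simp [T]
  · intro c hc
    simp only [Finset.mem_coe, Finset.mem_filter, Finset.Nat.mem_antidiagonalTuple] at hc
    simp only [Finset.mem_coe, Finset.mem_filter, Finset.mem_Iic]
    refine ⟨?_, hc.2⟩
    have : c i ≤ ∑ x, c x := Finset.single_le_sum (fun x _ => Nat.zero_le _)
      (Finset.mem_univ i)
    omega

lemma card_twoCoordF (J m : ℕ) (i l : Fin (J+3)) (hil : i ≠ l) :
    ((Finset.Nat.antidiagonalTuple (J+3) m).filter fun c => c i ∈ F ∧ c l ∈ F).card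
      ≤ ((Finset.Iic m).filter (· ∈ F)).card *
        (((Finset.Iic m).filter (· ∈ F)).card * T (J+1) m) := by
  classical
  obtain ⟨jl, hjl⟩ := Fin.exists_succAbove_eq hil.symm
  -- fiberwise over the value of `c i`
  rw [Finset.card_eq_sum_card_fiberwise (f := fun c => c i)
      (t := (Finset.Iic m).filter (· ∈ F))]
  · have hstep : ∀ a ∈ (Finset.Iic m).filter (· ∈ F),
        (((Finset.Nat.antidiagonalTuple (J+3) m).filter
          fun c => c i ∈ F ∧ c l ∈ F).filter fun c => c i = a).card
        ≤ ((Finset.Iic m).filter (· ∈ F)).card * T (J+1) m := by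
      intro a ha
      simp only [Finset.mem_filter, Finset.mem_Iic] at ha
      rw [Finset.filter_filter]
      have hset : ((Finset.Nat.antidiagonalTuple (J+3) m).filter
          fun c => (c i ∈ F ∧ c l ∈ F) ∧ c i = a)
          = ((Finset.Nat.antidiagonalTuple (J+3) m).filter
          fun c => c i = a ∧ (fun d : Fin (J+2) → ℕ => d jl ∈ F) (i.removeNth c)) := by
        apply Finset.filter_congr
        intro c _
        have hrm : i.removeNth c jl = c l := by
          show c (i.succAbove jl) = c l
          rw [hjl]
        simp only []
        rw [show (i.removeNth c jl ∈ F) = (c l ∈ F) by rw [hrm]]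
        constructor
        · rintro ⟨⟨_, h2⟩, h3⟩; exact ⟨h3, h2⟩
        · rintro ⟨h1, h2⟩; exact ⟨⟨h1 ▸ ha.2, h2⟩, h1⟩
      rw [hset, card_fiber (J+2) m a ha.1 i (fun d => d jl ∈ F)]
      rw [card_coordF (J+1) (m-a) jl]
      calc ∑ b ∈ (Finset.Iic (m-a)).filter (· ∈ F), T (J+1) (m - a - b)
          ≤ ∑ b ∈ (Finset.Iic (m-a)).filter (· ∈ F), T (J+1) m :=
            Finset.sum_le_sum fun b _ => T_mono J (by omega)
        _ = ((Finset.Iic (m-a)).filter (· ∈ F)).card * T (J+1) m := by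
            rw [Finset.sum_const, smul_eq_mul]
        _ ≤ ((Finset.Iic m).filter (· ∈ F)).card * T (J+1) m := by
            apply Nat.mul_le_mul_right
            apply Finset.card_le_card
            apply Finset.filter_subset_filter
            exact Finset.Iic_subset_Iic.mpr (by omega)
    calc ∑ a ∈ (Finset.Iic m).filter (· ∈ F), _ ≤
        ∑ a ∈ (Finset.Iic m).filter (· ∈ F),
          ((Finset.Iic m).filter (· ∈ F)).card * T (J+1) m :=
          Finset.sum_le_sum hstep
      _ = _ := by rw [Finset.sum_const, smul_eq_mul]
  · intro c hc
    simp only [Finset.mem_coe, Finset.mem_filter, Finset.Nat.mem_antidiagonalTuple] at hc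
    simp only [Finset.mem_coe, Finset.mem_filter, Finset.mem_Iic]
    refine ⟨?_, hc.2.1⟩
    have : c i ≤ ∑ x, c x := Finset.single_le_sum (fun x _ => Nat.zero_le _)
      (Finset.mem_univ i)
    omega

end FixedF

lemma eventually_small (C c : ℝ) (hC : 0 < C) (hc : 0 < c) (D : ℕ) :
    ∃ N : ℕ, ∀ n : ℕ, n ≥ N → ∀ fn : ℕ, (fn : ℝ) ≤ C * (Real.log n) ^ c →
      D * (fn + 1) ^ 2 < n := by
  set E : ℝ := C * (4 * c) ^ c + 1 with hE
  have hEpos : 1 ≤ E := by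
    have : 0 < C * (4 * c) ^ c := mul_pos hC (Real.rpow_pos_of_pos (by linarith) c)
    linarith
  set y : ℝ := D * E ^ 2 with hy
  have hypos : 0 ≤ y := by positivity
  set R : ℝ := max 3 (y ^ 2 + 1) with hR
  refine ⟨⌈R⌉₊, fun n hn fn hfn => ?_⟩
  have hxR : R ≤ (n : ℝ) := by
    rw [← Nat.ceil_le]
    exact_mod_cast hn
  set x : ℝ := (n : ℝ) with hx
  have hx3 : (3 : ℝ) ≤ x := le_trans (le_max_left _ _) hxR
  have hx1 : (1 : ℝ) ≤ x := by linarith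
  have hx0 : (0 : ℝ) < x := by linarith
  have hxy : y ^ 2 < x := by
    have := le_trans (le_max_right 3 (y ^ 2 + 1)) hxR
    linarith
  -- log x ≤ (4c) * x ^ (1/(4c))
  set ε : ℝ := 1 / (4 * c) with hε
  have hεpos : 0 < ε := by positivity
  have hlog : Real.log x ≤ (4 * c) * x ^ ε := by
    have h1 : Real.log (x ^ ε) = ε * Real.log x := Real.log_rpow hx0 ε
    have h2 : Real.log (x ^ ε) ≤ x ^ ε := by
      have := Real.log_le_sub_one_of_pos (Real.rpow_pos_of_pos hx0 ε)
      linarith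
    have h3 : Real.log x = (4 * c) * Real.log (x ^ ε) := by
      rw [h1, hε]
      field_simp
    rw [h3]
    have h4c : (0:ℝ) < 4 * c := by linarith
    nlinarith [h2, h4c]
  have hlognn : 0 ≤ Real.log x := Real.log_nonneg hx1
  have hpow : (Real.log x) ^ c ≤ (4 * c) ^ c * x ^ (ε * c) := by
    calc (Real.log x) ^ c ≤ ((4 * c) * x ^ ε) ^ c :=
          Real.rpow_le_rpow hlognn hlog (le_of_lt hc)
      _ = (4 * c) ^ c * (x ^ ε) ^ c := Real.mul_rpow (by linarith) (le_of_lt (Real.rpow_pos_of_pos hx0 ε))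
      _ = (4 * c) ^ c * x ^ (ε * c) := by rw [← Real.rpow_mul (le_of_lt hx0)]
  have hεc : ε * c = 1 / 4 := by
    rw [hε]; field_simp
  have hq : (0:ℝ) ≤ x ^ ((1:ℝ)/4) := le_of_lt (Real.rpow_pos_of_pos hx0 _)
  have hq1 : (1:ℝ) ≤ x ^ ((1:ℝ)/4) := Real.one_le_rpow hx1 (by norm_num)
  have hfn1 : (fn : ℝ) + 1 ≤ E * x ^ ((1:ℝ)/4) := by
    have h5 : (fn : ℝ) ≤ C * ((4 * c) ^ c * x ^ ((1:ℝ)/4)) := by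
      calc (fn : ℝ) ≤ C * (Real.log x) ^ c := hfn
        _ ≤ C * ((4 * c) ^ c * x ^ (ε * c)) := by
            apply mul_le_mul_of_nonneg_left hpow (le_of_lt hC)
        _ = C * ((4 * c) ^ c * x ^ ((1:ℝ)/4)) := by rw [hεc]
    have : E * x ^ ((1:ℝ)/4) = C * (4*c)^c * x ^ ((1:ℝ)/4) + x ^ ((1:ℝ)/4) := by
      rw [hE]; ring
    rw [this]
    have := mul_le_mul_of_nonneg_right (le_refl (C * (4*c)^c)) hq
    nlinarith [h5, hq1]
  have hhalf : (x ^ ((1:ℝ)/4)) ^ 2 = x ^ ((1:ℝ)/2) := by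
    rw [← Real.rpow_natCast (x ^ ((1:ℝ)/4)) 2, ← Real.rpow_mul (le_of_lt hx0)]
    norm_num
  have hsq : (0:ℝ) < x ^ ((1:ℝ)/2) := Real.rpow_pos_of_pos hx0 _
  have hyx : y < x ^ ((1:ℝ)/2) := by
    have h6 : (y ^ 2) ^ ((1:ℝ)/2) < x ^ ((1:ℝ)/2) :=
      Real.rpow_lt_rpow (by positivity) hxy (by norm_num)
    have h7 : (y ^ 2) ^ ((1:ℝ)/2) = y := by
      rw [← Real.rpow_natCast y 2, ← Real.rpow_mul hypos]
      norm_num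
    linarith [h6, h7 ▸ h6]
  have hxx : x ^ ((1:ℝ)/2) * x ^ ((1:ℝ)/2) = x := by
    rw [← Real.rpow_add hx0]
    norm_num
  have main : (D : ℝ) * ((fn : ℝ) + 1) ^ 2 < x := by
    calc (D : ℝ) * ((fn : ℝ) + 1) ^ 2
        ≤ (D : ℝ) * (E * x ^ ((1:ℝ)/4)) ^ 2 := by
          apply mul_le_mul_of_nonneg_left _ (Nat.cast_nonneg D)
          apply pow_le_pow_left₀ (by positivity) hfn1
      _ = y * x ^ ((1:ℝ)/2) := by rw [hy, mul_pow, hhalf]; ring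
      _ < x ^ ((1:ℝ)/2) * x ^ ((1:ℝ)/2) := by
          exact mul_lt_mul_of_pos_right hyx hsq
      _ = x := hxx
  have : ((D * (fn + 1) ^ 2 : ℕ) : ℝ) < (n : ℝ) := by
    push_cast
    exact main
  exact_mod_cast this

lemma arith_helper (g b g' b' t1 t2 e : ℕ) (h1 : g + b = t1) (h2 : g' + b' = t2 + t1)
    (h3 : b' ≤ b + e) (h4 : e < t2) : g < g' := by omega

end Chunks

theorem stmt_10 (k : ℕ) (hk : 3 ≤ k) (F : Set ℕ) (hF : 0 ∉ F)
    (f' : ℕ → ℕ) (hf' : ∀ n, f' n = (F ∩ Set.Iic n).ncard)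
    (C c : ℝ) (hC : 0 < C) (hc : 0 < c)
    (hbound : ∃ N : ℕ, ∀ n ≥ N, (f' n : ℝ) ≤ C * (Real.log n) ^ c)
    (A : Set ℕ) (hA : A = Set.univ \ F) :
    ∃ N : ℕ, ∀ n ≥ N, r k A n < r k A (n + 1) := by
  classical
  obtain ⟨K, rfl⟩ : ∃ K, k = K + 3 := ⟨k - 3, by omega⟩
  -- finite version of `f'`
  have hfn : ∀ m, ((Finset.Iic m).filter (· ∈ F)).card = f' m := by
    intro m
    rw [hf' m]
    have hset : F ∩ Set.Iic m = ↑((Finset.Iic m).filter (· ∈ F)) := by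
      ext x
      simp only [Set.mem_inter_iff, Set.mem_Iic, Finset.coe_filter, Finset.mem_Iic,
        Set.mem_setOf_eq]
      tauto
    rw [hset, Set.ncard_coe_finset]
  -- `r` as the cardinality of a filtered antidiagonal tuple finset
  have hr : ∀ m, r (K+3) A m
      = ((Finset.Nat.antidiagonalTuple (K+3) m).filter fun c => ∀ i, c i ∉ F).card := by
    intro m
    have hset : {c : Fin (K+3) → ℕ | (∀ i, c i ∈ A) ∧ ∑ i, c i = m}
        = ↑((Finset.Nat.antidiagonalTuple (K+3) m).filter fun c => ∀ i, c i ∉ F) := by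
      ext d
      simp only [Set.mem_setOf_eq, Finset.coe_filter, Finset.Nat.mem_antidiagonalTuple,
        hA, Set.mem_diff, Set.mem_univ, true_and]
      tauto
    rw [r, hset, Set.ncard_coe_finset]
  -- good + bad = total
  have hGB : ∀ m, ((Finset.Nat.antidiagonalTuple (K+3) m).filter fun c => ∀ i, c i ∉ F).card
      + ((Finset.Nat.antidiagonalTuple (K+3) m).filter fun c => ¬ ∀ i, c i ∉ F).card
      = T (K+3) m := fun m =>
    Finset.card_filter_add_card_filter_not
      (p := fun c : Fin (K+3) → ℕ => ∀ i, c i ∉ F)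
  -- first moment: sum of number of F-coordinates
  have hS1 : ∀ m, ∑ d ∈ Finset.Nat.antidiagonalTuple (K+3) m,
        (Finset.univ.filter fun i => d i ∈ F).card
      = (K+3) * ∑ a ∈ (Finset.Iic m).filter (· ∈ F), T (K+2) (m - a) := by
    intro m
    have hswap : ∑ d ∈ Finset.Nat.antidiagonalTuple (K+3) m,
          (Finset.univ.filter fun i => d i ∈ F).card
        = ∑ i : Fin (K+3),
          ((Finset.Nat.antidiagonalTuple (K+3) m).filter fun d => d i ∈ F).card := by
      simp only [Finset.card_filter]
      exact Finset.sum_comm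
    rw [hswap]
    have h2 : ∀ i : Fin (K+3),
        ((Finset.Nat.antidiagonalTuple (K+3) m).filter fun d => d i ∈ F).card
        = ∑ a ∈ (Finset.Iic m).filter (· ∈ F), T (K+2) (m - a) :=
      fun i => card_coordF (F := F) (K+2) m i
    rw [Finset.sum_congr rfl fun i _ => h2 i]
    rw [Finset.sum_const, Finset.card_univ, Fintype.card_fin, smul_eq_mul]
  -- lower bound of first moment by bad count
  have hBadLow : ∀ m, ((Finset.Nat.antidiagonalTuple (K+3) m).filter
        fun c => ¬ ∀ i, c i ∉ F).card
      ≤ ∑ d ∈ Finset.Nat.antidiagonalTuple (K+3) m,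
        (Finset.univ.filter fun i => d i ∈ F).card := by
    intro m
    rw [Finset.card_filter]
    apply Finset.sum_le_sum
    intro d _
    by_cases h : ∀ i, d i ∉ F
    · simp [h]
    · rw [if_pos h]
      push_neg at h
      obtain ⟨i, hi⟩ := h
      exact Finset.card_pos.mpr ⟨i, Finset.mem_filter.mpr ⟨Finset.mem_univ i, hi⟩⟩
  -- upper bound of first moment: bad count plus second moment
  have hBadHigh : ∀ m, ∑ d ∈ Finset.Nat.antidiagonalTuple (K+3) m,
        (Finset.univ.filter fun i => d i ∈ F).card
      ≤ ((Finset.Nat.antidiagonalTuple (K+3) m).filter fun c => ¬ ∀ i, c i ∉ F).card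
        + ∑ d ∈ Finset.Nat.antidiagonalTuple (K+3) m,
          ((Finset.univ.filter fun i => d i ∈ F).card
            * (Finset.univ.filter fun i => d i ∈ F).card
            - (Finset.univ.filter fun i => d i ∈ F).card) := by
    intro m
    rw [Finset.card_filter, ← Finset.sum_add_distrib]
    apply Finset.sum_le_sum
    intro d _
    by_cases h : ∀ i, d i ∉ F
    · have hempty : (Finset.univ.filter fun i => d i ∈ F) = ∅ := by
        apply Finset.filter_eq_empty_iff.mpr
        intro i _
        exact h i
      simp [hempty]
    · rw [if_pos h]
      push_neg at h
      obtain ⟨i, hi⟩ := h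
      have h1 : 1 ≤ (Finset.univ.filter fun i => d i ∈ F).card :=
        Finset.card_pos.mpr ⟨i, Finset.mem_filter.mpr ⟨Finset.mem_univ i, hi⟩⟩
      set u := (Finset.univ.filter fun i => d i ∈ F).card with hu
      have h2 : 2 * u ≤ 1 + u * u := by nlinarith
      omega
  -- second moment bound
  have hS2 : ∀ m, ∑ d ∈ Finset.Nat.antidiagonalTuple (K+3) m,
        ((Finset.univ.filter fun i => d i ∈ F).card
          * (Finset.univ.filter fun i => d i ∈ F).card
          - (Finset.univ.filter fun i => d i ∈ F).card)
      ≤ (K+3) * ((K+3) * (f' m * (f' m * T (K+1) m))) := by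
    intro m
    have hpt : ∀ d : Fin (K+3) → ℕ,
        (Finset.univ.filter fun i => d i ∈ F).card
          * (Finset.univ.filter fun i => d i ∈ F).card
          - (Finset.univ.filter fun i => d i ∈ F).card
        = ∑ p ∈ (Finset.univ : Finset (Fin (K+3))).offDiag,
            if d p.1 ∈ F ∧ d p.2 ∈ F then 1 else 0 := by
      intro d
      rw [← Finset.offDiag_card]
      have hod : (Finset.univ.filter fun i => d i ∈ F).offDiag
          = (Finset.univ : Finset (Fin (K+3))).offDiag.filter
            (fun p => d p.1 ∈ F ∧ d p.2 ∈ F) := by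
        ext p
        simp only [Finset.mem_offDiag, Finset.mem_filter, Finset.mem_univ, true_and]
        tauto
      rw [hod, Finset.card_filter]
    calc ∑ d ∈ Finset.Nat.antidiagonalTuple (K+3) m,
          ((Finset.univ.filter fun i => d i ∈ F).card
            * (Finset.univ.filter fun i => d i ∈ F).card
            - (Finset.univ.filter fun i => d i ∈ F).card)
        = ∑ d ∈ Finset.Nat.antidiagonalTuple (K+3) m,
            ∑ p ∈ (Finset.univ : Finset (Fin (K+3))).offDiag,
              if d p.1 ∈ F ∧ d p.2 ∈ F then 1 else 0 :=
          Finset.sum_congr rfl fun d _ => hpt d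
      _ = ∑ p ∈ (Finset.univ : Finset (Fin (K+3))).offDiag,
            ((Finset.Nat.antidiagonalTuple (K+3) m).filter
              fun d => d p.1 ∈ F ∧ d p.2 ∈ F).card := by
          rw [Finset.sum_comm]
          exact Finset.sum_congr rfl fun p _ => (Finset.card_filter _ _).symm
      _ ≤ ∑ p ∈ (Finset.univ : Finset (Fin (K+3))).offDiag,
            (f' m * (f' m * T (K+1) m)) := by
          apply Finset.sum_le_sum
          intro p hp
          have hne : p.1 ≠ p.2 := (Finset.mem_offDiag.mp hp).2.2
          have := card_twoCoordF (F := F) K m p.1 p.2 hne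
          rw [hfn] at this
          exact this
      _ ≤ (K+3) * ((K+3) * (f' m * (f' m * T (K+1) m))) := by
          rw [Finset.sum_const, smul_eq_mul]
          have hcard : (Finset.univ : Finset (Fin (K+3))).offDiag.card ≤ (K+3) * (K+3) := by
            rw [Finset.offDiag_card, Finset.card_univ, Fintype.card_fin]
            exact Nat.sub_le _ _
          calc (Finset.univ : Finset (Fin (K+3))).offDiag.card
                * (f' m * (f' m * T (K+1) m))
              ≤ ((K+3) * (K+3)) * (f' m * (f' m * T (K+1) m)) :=
                Nat.mul_le_mul_right _ hcard
            _ = (K+3) * ((K+3) * (f' m * (f' m * T (K+1) m))) := by ring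
  -- difference of the weighted sums
  have hW : ∀ n : ℕ, ∑ a ∈ (Finset.Iic (n+1)).filter (· ∈ F), T (K+2) (n+1-a)
      ≤ (∑ a ∈ (Finset.Iic n).filter (· ∈ F), T (K+2) (n-a))
        + (f' n * T (K+1) (n+1) + 1) := by
    intro n
    have hsub : (Finset.Iic (n+1)).filter (· ∈ F)
        ⊆ insert (n+1) ((Finset.Iic n).filter (· ∈ F)) := by
      intro a ha
      simp only [Finset.mem_filter, Finset.mem_Iic] at ha
      simp only [Finset.mem_insert, Finset.mem_filter, Finset.mem_Iic]
      by_cases hcase : a = n + 1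
      · exact Or.inl hcase
      · exact Or.inr ⟨by omega, ha.2⟩
    have hnot : (n+1) ∉ (Finset.Iic n).filter (· ∈ F) := by
      simp only [Finset.mem_filter, Finset.mem_Iic]
      intro h
      omega
    have hT0 : T (K+2) (n+1-(n+1)) = 1 := by
      simp only [Nat.sub_self]
      rw [T_eq]
      simp
    have hstep : ∀ a ∈ (Finset.Iic n).filter (· ∈ F),
        T (K+2) (n+1-a) ≤ T (K+2) (n-a) + T (K+1) (n+1) := by
      intro a ha
      simp only [Finset.mem_filter, Finset.mem_Iic] at ha
      have ha1 : 1 ≤ a := by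
        rcases Nat.eq_zero_or_pos a with h0 | h1
        · exact absurd (h0 ▸ ha.2) hF
        · exact h1
      have heq : n + 1 - a = (n - a) + 1 := by omega
      rw [heq, T_succ (K+1) (n-a)]
      have hsame : T (K+1+1) (n-a) = T (K+2) (n-a) := rfl
      have : T (K+1) (n-a+1) ≤ T (K+1) (n+1) := T_mono K (by omega)
      omega
    calc ∑ a ∈ (Finset.Iic (n+1)).filter (· ∈ F), T (K+2) (n+1-a)
        ≤ ∑ a ∈ insert (n+1) ((Finset.Iic n).filter (· ∈ F)), T (K+2) (n+1-a) :=
          Finset.sum_le_sum_of_subset hsub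
      _ = T (K+2) (n+1-(n+1)) + ∑ a ∈ (Finset.Iic n).filter (· ∈ F), T (K+2) (n+1-a) :=
          Finset.sum_insert hnot
      _ ≤ 1 + ∑ a ∈ (Finset.Iic n).filter (· ∈ F), (T (K+2) (n-a) + T (K+1) (n+1)) := by
          rw [hT0]
          exact Nat.add_le_add_left (Finset.sum_le_sum hstep) 1
      _ = 1 + ((∑ a ∈ (Finset.Iic n).filter (· ∈ F), T (K+2) (n-a))
            + ((Finset.Iic n).filter (· ∈ F)).card * T (K+1) (n+1)) := by
          rw [Finset.sum_add_distrib, Finset.sum_const, smul_eq_mul]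
      _ = (∑ a ∈ (Finset.Iic n).filter (· ∈ F), T (K+2) (n-a))
            + (f' n * T (K+1) (n+1) + 1) := by
          rw [hfn]
          ring
  -- the numeric threshold
  obtain ⟨N0, hN0⟩ := hbound
  obtain ⟨N1, hN1⟩ := eventually_small C c hC hc (2*(K+1)*(K+3)^2)
  refine ⟨max N0 N1, fun n hn => ?_⟩
  have hn0 : n ≥ N0 := le_trans (le_max_left _ _) hn
  have hn1 : n ≥ N1 := le_trans (le_max_right _ _) hn
  have hsmall : 2*(K+1)*(K+3)^2 * (f' n + 1) ^ 2 < n := hN1 n hn1 (f' n) (hN0 n hn0)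
  -- key inequality
  have hkey : (K+3) * ((K+3) * (f' n * (f' n * T (K+1) n)))
      + (K+3) * (f' n * T (K+1) (n+1) + 1) < T (K+2) (n+1) := by
    have hX1 : 1 ≤ T (K+1) (n+1) := by
      rw [T_eq]
      exact Nat.choose_pos (by omega)
    have hXm : T (K+1) n ≤ T (K+1) (n+1) := T_mono K (by omega)
    have hXY : ((n+1) + K + 1) * T (K+1) (n+1) = T (K+2) (n+1) * (K+1) := by
      rw [T_eq, T_eq]
      exact Nat.add_one_mul_choose_eq ((n+1) + K) K
    set f := f' n with hfdef
    set X := T (K+1) (n+1) with hXdef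
    set X' := T (K+1) n with hX'def
    apply Nat.lt_of_mul_lt_mul_left (a := K+1)
    have hle : (K+1) * ((K+3) * ((K+3) * (f * (f * X'))) + (K+3) * (f * X + 1))
        ≤ (2*(K+1)*(K+3)^2 * (f + 1) ^ 2) * X := by
      have e1 : f * X + 1 ≤ (f+1) * X := by nlinarith
      have e2 : f * (f * X') ≤ (f+1) * ((f+1) * X) :=
        Nat.mul_le_mul (by omega) (Nat.mul_le_mul (by omega) hXm)
      have e3 : (f + 1) * X ≤ (K+3) * ((f + 1) * ((f + 1) * X)) := by
        calc (f + 1) * X ≤ (f + 1) * ((f + 1) * X) :=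
              Nat.mul_le_mul_left _ (Nat.le_mul_of_pos_left X (by omega))
          _ ≤ (K+3) * ((f + 1) * ((f + 1) * X)) :=
              Nat.le_mul_of_pos_left _ (by omega)
      calc (K+1) * ((K+3) * ((K+3) * (f * (f * X'))) + (K+3) * (f * X + 1))
          ≤ (K+1) * ((K+3) * ((K+3) * ((f+1) * ((f+1) * X))) + (K+3) * ((f+1) * X)) := by
            apply Nat.mul_le_mul_left
            apply Nat.add_le_add
            · exact Nat.mul_le_mul_left _ (Nat.mul_le_mul_left _ e2)
            · exact Nat.mul_le_mul_left _ e1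
        _ ≤ (K+1) * ((K+3) * ((K+3) * ((f+1) * ((f+1) * X)))
              + (K+3) * ((K+3) * ((f+1) * ((f+1) * X)))) := by
            apply Nat.mul_le_mul_left
            apply Nat.add_le_add_left
            exact Nat.mul_le_mul_left _ e3
        _ = (2*(K+1)*(K+3)^2 * (f + 1) ^ 2) * X := by ring
    apply Nat.lt_of_le_of_lt hle
    have hlt : (2*(K+1)*(K+3)^2 * (f + 1) ^ 2) * X < ((n+1) + K + 1) * X :=
      (Nat.mul_lt_mul_right (by omega : 0 < X)).mpr (by omega)
    apply Nat.lt_of_lt_of_le hlt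
    rw [hXY]
    calc T (K+2) (n+1) * (K+1) = (K+1) * T (K+2) (n+1) := by ring
      _ ≤ (K+1) * T (K+2) (n+1) := le_refl _
  -- assemble the bad-count difference bound
  have hb' : ((Finset.Nat.antidiagonalTuple (K+3) (n+1)).filter
        fun c => ¬ ∀ i, c i ∉ F).card
      ≤ ((Finset.Nat.antidiagonalTuple (K+3) n).filter fun c => ¬ ∀ i, c i ∉ F).card
        + ((K+3) * ((K+3) * (f' n * (f' n * T (K+1) n)))
          + (K+3) * (f' n * T (K+1) (n+1) + 1)) := by
    have b1 := hBadLow (n+1)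
    rw [hS1 (n+1)] at b1
    have b2 : (K+3) * ∑ a ∈ (Finset.Iic (n+1)).filter (· ∈ F), T (K+2) (n+1-a)
        ≤ (K+3) * ((∑ a ∈ (Finset.Iic n).filter (· ∈ F), T (K+2) (n-a))
          + (f' n * T (K+1) (n+1) + 1)) :=
      Nat.mul_le_mul_left _ (hW n)
    have b3 := hBadHigh n
    rw [hS1 n] at b3
    have b4 := hS2 n
    have b5 : (K+3) * ((∑ a ∈ (Finset.Iic n).filter (· ∈ F), T (K+2) (n-a))
          + (f' n * T (K+1) (n+1) + 1))
        = (K+3) * (∑ a ∈ (Finset.Iic n).filter (· ∈ F), T (K+2) (n-a))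
          + (K+3) * (f' n * T (K+1) (n+1) + 1) := by ring
    linarith [b1, b2, b3, b4, b5]
  -- conclude
  have e1 := hGB n
  have e2 := hGB (n+1)
  have e3 : T (K+3) (n+1) = T (K+2) (n+1) + T (K+3) n := T_succ (K+2) n
  rw [hr n, hr (n+1)]
  exact arith_helper _ _ _ _ _ _ _ e1 (e3 ▸ e2) hb' hkey
end

section
/- Let F = {2^{m+2} − 1 : m ∈ ℕ} and A = ℕ \ F. Then the sequence (r(4,A,n))_{n≥0} is strictly increasing right from the start: r(4,A,0) ≥ 1 and r(4,A,n) < r(4,A,n+1) for all n ≥ 0. (This disproves Dombi's conjecture also in the case k = 4.) -/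
namespace DombiAux

def isFn (a : ℕ) : Prop := ∃ m : ℕ, a + 1 = 2 ^ (m + 2)

instance : DecidablePred isFn := fun a =>
  decidable_of_iff (∃ m < a + 1, a + 1 = 2 ^ (m + 2)) (by
    constructor
    · rintro ⟨m, _, h⟩; exact ⟨m, h⟩
    · rintro ⟨m, h⟩
      refine ⟨m, ?_, h⟩
      have := Nat.lt_two_pow_self (n := m + 2)
      omega)

lemma isFn_iff (a : ℕ) : (∃ m : ℕ, a = 2 ^ (m + 2) - 1) ↔ isFn a := by
  constructor <;> rintro ⟨m, hm⟩ <;>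
    exact ⟨m, by have : 1 ≤ 2 ^ (m + 2) := Nat.one_le_two_pow; omega⟩

def cf (a : ℕ) : ℕ := if isFn a then 0 else 1

lemma cf_le (a : ℕ) : cf a ≤ 1 := by unfold cf; split <;> omega

def q : ℕ → ℕ → ℕ
  | 0, n => if n = 0 then 1 else 0
  | (k+1), n => ∑ a ∈ Finset.range (n+1), cf a * q k (n - a)

lemma q_succ_def (k n : ℕ) : q (k+1) n = ∑ a ∈ Finset.range (n+1), cf a * q k (n - a) := rfl

def Nk (k n : ℕ) : ℕ :=
  ((Finset.Nat.antidiagonalTuple k n).filter (fun x => ∀ i, ¬ isFn (x i))).card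

lemma Nk_zero (n : ℕ) : Nk 0 n = q 0 n := by
  cases n with
  | zero =>
    rw [Nk, Finset.Nat.antidiagonalTuple_zero_zero]
    rw [Finset.filter_singleton, if_pos (fun i => i.elim0)]
    rfl
  | succ n =>
    rw [Nk, Finset.Nat.antidiagonalTuple_zero_succ]
    rfl

lemma Nk_succ (k n : ℕ) :
    Nk (k+1) n = ∑ a ∈ Finset.range (n+1), cf a * Nk k (n - a) := by
  rw [Nk]
  rw [Finset.card_eq_sum_card_fiberwise (f := fun x => x 0) (t := Finset.range (n+1))
    (fun x hx => by
      simp only [Finset.mem_coe, Finset.mem_filter, Finset.Nat.mem_antidiagonalTuple] at hx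
      have h0 : x 0 ≤ ∑ i, x i :=
        Finset.single_le_sum (f := x) (fun i _ => Nat.zero_le _) (Finset.mem_univ 0)
      simp only [Finset.coe_range, Set.mem_Iio]
      omega)]
  apply Finset.sum_congr rfl
  intro a ha
  have haa : a ≤ n := by simpa [Nat.lt_succ_iff] using ha
  by_cases hFa : isFn a
  · have : cf a = 0 := by simp [cf, hFa]
    rw [this, zero_mul, Finset.card_eq_zero, Finset.eq_empty_iff_forall_notMem]
    intro x hx
    simp only [Finset.mem_filter, Finset.Nat.mem_antidiagonalTuple] at hx
    exact hx.1.2 0 (hx.2 ▸ hFa)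
  · have : cf a = 1 := by simp [cf, hFa]
    rw [this, one_mul, Nk]
    apply Finset.card_bij (fun x _ => Fin.tail x)
    · intro x hx
      simp only [Finset.mem_filter, Finset.Nat.mem_antidiagonalTuple] at hx ⊢
      obtain ⟨⟨hsum, hmem⟩, h0⟩ := hx
      refine ⟨?_, fun i => hmem i.succ⟩
      have hs := Fin.sum_univ_succ x
      have ht : ∑ i : Fin k, Fin.tail x i = ∑ i : Fin k, x i.succ := rfl
      rw [ht]
      omega
    · intro x hx y hy hxy
      simp only [Finset.mem_filter] at hx hy
      have hx0 : x 0 = a := hx.2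
      have hy0 : y 0 = a := hy.2
      calc x = Fin.cons (x 0) (Fin.tail x) := (Fin.cons_self_tail x).symm
        _ = Fin.cons (y 0) (Fin.tail y) := by rw [hx0, hy0, hxy]
        _ = y := Fin.cons_self_tail y
    · intro y hy
      simp only [Finset.mem_filter, Finset.Nat.mem_antidiagonalTuple] at hy
      refine ⟨Fin.cons a y, ?_, rfl⟩
      simp only [Finset.mem_filter, Finset.Nat.mem_antidiagonalTuple]
      refine ⟨⟨?_, ?_⟩, rfl⟩
      · rw [Fin.sum_cons, hy.1]
        omega
      · intro i
        refine Fin.cases ?_ ?_ i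
        · simpa using hFa
        · intro j
          simpa using hy.2 j

lemma Nk_eq_q : ∀ k n, Nk k n = q k n := by
  intro k
  induction k with
  | zero => exact Nk_zero
  | succ k ih =>
    intro n
    rw [Nk_succ, q_succ_def]
    exact Finset.sum_congr rfl (fun a _ => by rw [ih])

lemma r_eq_q (k n : ℕ) :
    r k (Set.univ \ {x : ℕ | ∃ m : ℕ, x = 2 ^ (m + 2) - 1}) n = q k n := by
  rw [← Nk_eq_q, Nk, ← Set.ncard_coe_finset, r]
  congr 1
  ext x
  simp only [Finset.coe_filter, Set.mem_setOf_eq, Finset.Nat.mem_antidiagonalTuple,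
    Set.mem_diff, Set.mem_univ, true_and]
  constructor
  · rintro ⟨h1, h2⟩
    exact ⟨h2, fun i hF => h1 i ((isFn_iff (x i)).mpr hF)⟩
  · rintro ⟨h2, h1⟩
    exact ⟨fun i hF => h1 i ((isFn_iff (x i)).mp hF), h2⟩


def kap (n : ℕ) : ℕ := Nat.log 2 (n+1) - 1

def Phi (g : ℕ → ℕ) (n : ℕ) : ℕ := ∑ j ∈ Finset.range (kap n), g (n + 1 - 2 ^ (j + 2))

def Vv (n : ℕ) : ℕ := ∑ j ∈ Finset.range (kap n), (n + 2 - 2 ^ (j + 2))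
lemma kap_char {j n : ℕ} : j < kap n ↔ 2 ^ (j + 2) ≤ n + 1 := by
  rw [kap, ← Nat.le_log_iff_pow_le (by norm_num) (by omega)]
  rcases Nat.eq_zero_or_pos (Nat.log 2 (n+1)) with h | h <;> omega

lemma kap_mono : Monotone kap := fun a b h => by
  have := Nat.log_mono_right (b := 2) (show a + 1 ≤ b + 1 by omega)
  unfold kap; omega

lemma kap_succ (n : ℕ) :
    kap (n+1) = kap n ∨ (kap (n+1) = kap n + 1 ∧ 2 ^ (kap n + 2) = n + 2) := by
  have h1 : kap n ≤ kap (n+1) := kap_mono (Nat.le_succ n)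
  by_cases h : kap (n+1) ≤ kap n
  · left; omega
  · right
    push_neg at h
    have h2 : 2 ^ (kap n + 2) ≤ n + 2 := kap_char.mp h
    have h3 : ¬ (2 ^ (kap n + 2) ≤ n + 1) := fun hc => lt_irrefl _ (kap_char.mpr hc)
    have h4 : 2 ^ (kap n + 2) = n + 2 := by omega
    refine ⟨?_, h4⟩
    by_contra hc
    have h5 : kap n + 1 < kap (n+1) := by omega
    have h6 : 2 ^ (kap n + 1 + 2) ≤ n + 2 := kap_char.mp h5
    have h7 : 2 ^ (kap n + 2) < 2 ^ (kap n + 3) :=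
      Nat.pow_lt_pow_right one_lt_two (by omega)
    have h8 : kap n + 1 + 2 = kap n + 3 := by omega
    rw [h8] at h6
    omega

lemma sum_isF (h : ℕ → ℕ) (n : ℕ) :
    ∑ a ∈ Finset.range (n+1), (if isFn a then h (n - a) else 0)
      = ∑ j ∈ Finset.range (kap n), h (n + 1 - 2 ^ (j + 2)) := by
  rw [← Finset.sum_filter]
  refine Finset.sum_nbij' (i := fun a => Nat.log 2 (a+1) - 2) (j := fun j => 2 ^ (j + 2) - 1)
    ?_ ?_ ?_ ?_ ?_
  · intro a ha
    simp only [Finset.mem_filter, Finset.mem_range] at ha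
    obtain ⟨han, m, hm⟩ := ha
    rw [hm, Nat.log_pow one_lt_two]
    simp only [Finset.mem_range]
    have : 2 ^ (m + 2) ≤ n + 1 := by omega
    have h2 := kap_char.mpr this
    omega
  · intro j hj
    simp only [Finset.mem_range] at hj
    have h2 : 2 ^ (j + 2) ≤ n + 1 := kap_char.mp hj
    have h1 : 1 ≤ 2 ^ (j + 2) := Nat.one_le_two_pow
    simp only [Finset.mem_filter, Finset.mem_range]
    exact ⟨by omega, j, by omega⟩
  · intro a ha
    simp only [Finset.mem_filter, Finset.mem_range] at ha
    obtain ⟨han, m, hm⟩ := ha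
    rw [hm, Nat.log_pow one_lt_two]
    simp only [Nat.add_sub_cancel]
    have h1 : 1 ≤ 2 ^ (m + 2) := Nat.one_le_two_pow
    omega
  · intro j hj
    have h1 : 1 ≤ 2 ^ (j + 2) := Nat.one_le_two_pow
    have : 2 ^ (j + 2) - 1 + 1 = 2 ^ (j + 2) := by omega
    rw [this, Nat.log_pow one_lt_two]
    omega
  · intro a ha
    simp only [Finset.mem_filter, Finset.mem_range] at ha
    obtain ⟨han, m, hm⟩ := ha
    rw [hm, Nat.log_pow one_lt_two]
    simp only [Nat.add_sub_cancel]
    congr 1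
    have h1 : 1 ≤ 2 ^ (m + 2) := Nat.one_le_two_pow
    omega

lemma conv_identity (g : ℕ → ℕ) (n : ℕ) :
    (∑ a ∈ Finset.range (n+1), cf a * g (n - a)) + Phi g n
      = ∑ t ∈ Finset.range (n+1), g t := by
  have h1 : ∑ t ∈ Finset.range (n+1), g t = ∑ a ∈ Finset.range (n+1), g (n - a) := by
    have := Finset.sum_range_reflect g (n+1)
    simpa using this.symm
  rw [h1, Phi, ← sum_isF g n, ← Finset.sum_add_distrib]
  apply Finset.sum_congr rfl
  intro a _
  by_cases h : isFn a <;> simp [cf, h]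

lemma cf_zero : cf 0 = 1 := by
  have h : ¬ isFn 0 := by
    rintro ⟨m, hm⟩
    have : (2:ℕ)^2 ≤ 2 ^ (m+2) := Nat.pow_le_pow_right (by norm_num) (by omega)
    omega
  simp [cf, h]

lemma q_zero : ∀ k, q k 0 = 1 := by
  intro k
  induction k with
  | zero => rfl
  | succ k ih =>
    rw [q_succ_def, Finset.sum_range_one, cf_zero, Nat.sub_zero, ih]

lemma q_one (n : ℕ) : q 1 n = cf n := by
  rw [q_succ_def, Finset.sum_eq_single n]
  · show cf n * q 0 (n - n) = cf n
    rw [Nat.sub_self, q_zero, mul_one]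
  · intro a ha hne
    have haa : a ≤ n := by simpa [Nat.lt_succ_iff] using ha
    have h0 : n - a ≠ 0 := by omega
    show cf a * q 0 (n - a) = 0
    have : q 0 (n - a) = 0 := by simp [q, h0]
    rw [this, mul_zero]
  · intro h
    exact absurd (Finset.self_mem_range_succ n) h

lemma q_succ_identity (k n : ℕ) :
    q (k+1) n + Phi (q k) n = ∑ t ∈ Finset.range (n+1), q k t := by
  rw [q_succ_def]; exact conv_identity _ _

lemma Phi_cf_le (n : ℕ) : Phi cf n ≤ kap n := by
  calc Phi cf n ≤ ∑ _j ∈ Finset.range (kap n), 1 :=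
        Finset.sum_le_sum (fun j _ => cf_le _)
    _ = kap n := by simp

lemma sum_cf (n : ℕ) : (∑ a ∈ Finset.range (n+1), cf a) + kap n = n + 1 := by
  have h := conv_identity (fun _ => 1) n
  simp only [mul_one, Phi] at h
  simpa using h

lemma q_two_le (t : ℕ) : q 2 t ≤ t + 1 := by
  rw [q_succ_def]
  calc ∑ a ∈ Finset.range (t+1), cf a * q 1 (t - a)
      ≤ ∑ _a ∈ Finset.range (t+1), 1 := by
        refine Finset.sum_le_sum (fun a _ => ?_)
        rw [q_one]
        calc cf a * cf (t - a) ≤ 1 * 1 := Nat.mul_le_mul (cf_le a) (cf_le _)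
          _ = 1 := by norm_num
    _ = t + 1 := by simp

lemma hq1cf : q 1 = cf := funext q_one

lemma q_two_lower (t : ℕ) : t + 1 ≤ q 2 t + 2 * kap t := by
  have h1 := q_succ_identity 1 t
  rw [hq1cf] at h1
  norm_num at h1
  have h2 := sum_cf t
  have h3 := Phi_cf_le t
  omega

lemma q_two_dec (t : ℕ) : q 2 t ≤ q 2 (t+1) + kap (t+1) := by
  have h1 := q_succ_identity 1 t
  have h2 := q_succ_identity 1 (t+1)
  rw [hq1cf] at h1 h2
  norm_num at h1 h2
  rw [Finset.sum_range_succ] at h2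
  have h3 := Phi_cf_le (t+1)
  omega

lemma four_le_pow (j : ℕ) : (4:ℕ) ≤ 2 ^ (j + 2) := by
  calc (4:ℕ) = 2^2 := by norm_num
    _ ≤ 2 ^ (j+2) := Nat.pow_le_pow_right (by norm_num) (by omega)

lemma q3_diff (s : ℕ) : q 3 (s+1) ≤ q 3 s + (s + 2) + kap s * kap s := by
  have h1 := q_succ_identity 2 s
  have h2 := q_succ_identity 2 (s+1)
  norm_num at h1 h2
  rw [Finset.sum_range_succ] at h2
  have hphi : Phi (q 2) s ≤ Phi (q 2) (s+1) + kap s * kap s := by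
    have hterm : ∀ j ∈ Finset.range (kap s),
        q 2 (s + 1 - 2 ^ (j + 2)) ≤ q 2 (s + 1 + 1 - 2 ^ (j + 2)) + kap s := by
      intro j hj
      have hj' : 2 ^ (j + 2) ≤ s + 1 := kap_char.mp (Finset.mem_range.mp hj)
      have h4 := four_le_pow j
      have heq : s + 1 - 2 ^ (j + 2) + 1 = s + 1 + 1 - 2 ^ (j + 2) := by omega
      have hd := q_two_dec (s + 1 - 2 ^ (j + 2))
      rw [heq] at hd
      have hk : kap (s + 1 + 1 - 2 ^ (j + 2)) ≤ kap s := kap_mono (by omega)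
      omega
    calc Phi (q 2) s
        ≤ ∑ j ∈ Finset.range (kap s), (q 2 (s + 1 + 1 - 2 ^ (j + 2)) + kap s) :=
          Finset.sum_le_sum hterm
      _ = (∑ j ∈ Finset.range (kap s), q 2 (s + 1 + 1 - 2 ^ (j + 2))) + kap s * kap s := by
          rw [Finset.sum_add_distrib, Finset.sum_const, Finset.card_range, smul_eq_mul]
      _ ≤ Phi (q 2) (s+1) + kap s * kap s := by
          have hsub : Finset.range (kap s) ⊆ Finset.range (kap (s+1)) :=
            Finset.range_subset_range.mpr (kap_mono (Nat.le_succ s))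
          have hle : ∑ j ∈ Finset.range (kap s), q 2 (s + 1 + 1 - 2 ^ (j + 2))
              ≤ ∑ j ∈ Finset.range (kap (s+1)), q 2 (s + 1 + 1 - 2 ^ (j + 2)) :=
            Finset.sum_le_sum_of_subset hsub
          have hP : Phi (q 2) (s+1)
              = ∑ j ∈ Finset.range (kap (s+1)), q 2 (s + 1 + 1 - 2 ^ (j + 2)) := rfl
          omega
  have hq2 := q_two_le (s+1)
  omega

lemma V_succ (s : ℕ) : Vv (s+1) = Vv s + kap (s+1) := by
  have h0 : Vv (s+1) = ∑ j ∈ Finset.range (kap (s+1)), (s + 2 - 2 ^ (j + 2) + 1) := by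
    rw [Vv]
    refine Finset.sum_congr rfl (fun j hj => ?_)
    have hj' : 2 ^ (j + 2) ≤ s + 2 := kap_char.mp (Finset.mem_range.mp hj)
    omega
  rw [h0, Finset.sum_add_distrib, Finset.sum_const, Finset.card_range, smul_eq_mul, mul_one]
  congr 1
  rcases kap_succ s with h | ⟨h, hpow⟩
  · rw [h, Vv]
  · rw [h, Finset.sum_range_succ, hpow, Nat.sub_self, add_zero, Vv]

lemma V_eq_W : ∀ s, ∑ t ∈ Finset.range (s+1), kap t = Vv s := by
  intro s
  induction s with
  | zero =>
    simp [kap, Vv, Nat.log_one_right]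
  | succ s ih => rw [Finset.sum_range_succ, ih, V_succ]

lemma q3_lower (s : ℕ) : ∑ t ∈ Finset.range (s+1), (t+1) ≤ q 3 s + 3 * Vv s := by
  have h1 := q_succ_identity 2 s
  norm_num at h1
  have hup : ∑ t ∈ Finset.range (s+1), (t+1)
      ≤ (∑ t ∈ Finset.range (s+1), q 2 t) + 2 * ∑ t ∈ Finset.range (s+1), kap t := by
    rw [Finset.mul_sum, ← Finset.sum_add_distrib]
    exact Finset.sum_le_sum (fun t _ => q_two_lower t)
  have hW := V_eq_W s
  have hphi : Phi (q 2) s ≤ Vv s := by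
    rw [Phi, Vv]
    refine Finset.sum_le_sum (fun j hj => ?_)
    have hj' : 2 ^ (j + 2) ≤ s + 1 := kap_char.mp (Finset.mem_range.mp hj)
    have := q_two_le (s + 1 - 2 ^ (j + 2))
    omega
  omega

lemma geom : ∀ K : ℕ, (∑ j ∈ Finset.range K, 2 ^ (j+2)) + 4 = 2 ^ (K + 2) := by
  intro K
  induction K with
  | zero => norm_num
  | succ K ih =>
    rw [Finset.sum_range_succ]
    have h : (2:ℕ)^(K+1+2) = 2^(K+2) + 2^(K+2) := by ring
    omega

lemma V_formula (n : ℕ) : Vv n + 2 ^ (kap n + 2) = kap n * (n + 2) + 4 := by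
  have hsum : Vv n + ∑ j ∈ Finset.range (kap n), 2 ^ (j+2) = kap n * (n+2) := by
    rw [Vv, ← Finset.sum_add_distrib]
    have hcong : ∀ j ∈ Finset.range (kap n), (n + 2 - 2 ^ (j+2)) + 2 ^ (j+2) = n + 2 := by
      intro j hj
      have := kap_char.mp (Finset.mem_range.mp hj)
      omega
    rw [Finset.sum_congr rfl hcong, Finset.sum_const, Finset.card_range, smul_eq_mul]
  have hg := geom (kap n)
  omega

lemma gauss : ∀ n : ℕ, 2 * ∑ t ∈ Finset.range (n+2), (t+1) = (n+2) * (n+3)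
  | 0 => by simp [Finset.sum_range_succ]
  | (n+1) => by
    show 2 * ∑ t ∈ Finset.range ((n+2)+1), (t+1) = _
    rw [Finset.sum_range_succ, Nat.mul_add, gauss n]
    ring

lemma L1 : ∀ K : ℕ, 8 * K ≤ 2 ^ (K + 2)
  | 0 => by norm_num
  | (K+1) => by
    have ih := L1 K
    have h8 : (8:ℕ) ≤ 2 ^ (K + 1 + 2) := by
      calc (8:ℕ) = 2^3 := by norm_num
        _ ≤ 2 ^ (K+1+2) := Nat.pow_le_pow_right (by norm_num) (by omega)
    have hd : (2:ℕ) ^ (K + 1 + 2) = 2 ^ (K+2) + 2^(K+2) := by ring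
    omega

lemma L3 : ∀ K : ℕ, 4 ≤ K → 8 * K ≤ 2 ^ (K + 1) := by
  intro K
  induction K with
  | zero => omega
  | succ K ih =>
    intro h4
    rcases Nat.lt_or_ge K 4 with h | h
    · have : K = 3 := by omega
      subst this
      norm_num
    · have := ih h
      have h8 : (8:ℕ) ≤ 2 ^ (K + 1) := by
        calc (8:ℕ) = 2^3 := by norm_num
          _ ≤ 2 ^ (K+1) := Nat.pow_le_pow_right (by norm_num) (by omega)
      have hd : (2:ℕ) ^ (K + 1 + 1) = 2 ^ (K+1) + 2^(K+1) := by ring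
      omega

lemma cube_step (K : ℕ) (h : 1 ≤ K) : 6 * K^2 ≤ 2 * K^3 + 2*K + 24 := by
  rcases Nat.lt_or_ge K 3 with hs | hs
  · interval_cases K <;> norm_num
  · have h1 : 6 * K^2 ≤ (2*K) * K^2 := Nat.mul_le_mul_right (K^2) (by omega)
    have h2 : (2*K) * K^2 = 2 * K^3 := by ring
    omega

lemma L2' : ∀ K : ℕ, 1 ≤ K → 2 * K^3 + 8 * K + 34 ≤ 8 * 2 ^ (K + 2) := by
  intro K
  induction K with
  | zero => omega
  | succ K ih =>
    intro _
    rcases Nat.eq_zero_or_pos K with h0 | hK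
    · subst h0; norm_num
    · have ihh := ih hK
      have hd : (2:ℕ) ^ (K + 1 + 2) = 2 ^ (K+2) + 2^(K+2) := by ring
      have hc := cube_step K hK
      have hexp : (K+1)^3 = K^3 + 3*K^2 + 3*K + 1 := by ring
      omega

lemma L2 : ∀ K : ℕ, 1 ≤ K → 2 * K^3 + 8 * K + 42 ≤ 9 * 2 ^ (K + 2) := by
  intro K
  induction K with
  | zero => omega
  | succ K ih =>
    intro _
    rcases Nat.eq_zero_or_pos K with h0 | hK
    · subst h0; norm_num
    · have ihh := ih hK
      have hd : (2:ℕ) ^ (K + 1 + 2) = 2 ^ (K+2) + 2^(K+2) := by ring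
      have hc := cube_step K hK
      have hexp : (K+1)^3 = K^3 + 3*K^2 + 3*K + 1 := by ring
      omega

lemma arithA (n K V : ℕ) (hV : V + 2 ^ (K+2) = K * (n+2) + 4)
    (hn1 : 1 ≤ K → 2 ^ (K+1) ≤ n + 1) :
    8 * V + 8 * K + 2 * K^3 + 2 ≤ (n+2) * (n+3) := by
  rcases Nat.eq_zero_or_pos K with h0 | hK
  · subst h0
    have hV' : V = 0 := by norm_num at hV; omega
    have hp : (0:ℕ)^3 = 0 := by norm_num
    have h6 : 2 * 3 ≤ (n+2) * (n+3) := Nat.mul_le_mul (by omega) (by omega)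
    omega
  · have hm := hn1 hK
    have hL2' := L2' K hK
    rcases le_or_gt (8*K) (n+2) with hcase | hcase
    · have h1 : (8*K) * (n+2) ≤ (n+3) * (n+2) := Nat.mul_le_mul_right (n+2) (by omega)
      have h2 : (8*K) * (n+2) = 8 * (K * (n+2)) := by ring
      have h3 : (n+3) * (n+2) = (n+2) * (n+3) := Nat.mul_comm _ _
      omega
    · have hsmall : K ≤ 3 := by
        by_contra hc
        have h8 := L3 K (by omega)
        have h9 : 2 ^ (K+1) ≤ n + 1 := hm
        omega
      interval_cases K
      · norm_num at hV hm hcase ⊢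
        have hlo : 3 ≤ n := by omega
        have hhi : n ≤ 5 := by omega
        interval_cases n <;> omega
      · norm_num at hV hm hcase ⊢
        have hlo : 7 ≤ n := by omega
        have hhi : n ≤ 13 := by omega
        interval_cases n <;> omega
      · norm_num at hV hm hcase ⊢
        have hlo : 15 ≤ n := by omega
        have hhi : n ≤ 21 := by omega
        interval_cases n <;> omega

lemma arithB (n K V : ℕ) (hV : V + 2 ^ (K+2) = K * (n+2) + 4)
    (hpow : 2 ^ (K+2) = n + 2) :
    8 * V + 8 * K + 2 * K^3 + 10 ≤ (n+2) * (n+3) := by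
  rcases Nat.eq_zero_or_pos K with h0 | hK
  · subst h0
    norm_num at hV hpow
    have hn : n = 2 := by omega
    subst hn
    have hp : (0:ℕ)^3 = 0 := by norm_num
    omega
  · have hL1 := L1 K
    have hL2 := L2 K hK
    rw [hpow] at hL1 hL2 hV
    have hmul : (8*K) * (n+2) ≤ (n+2) * (n+2) := Nat.mul_le_mul_right (n+2) hL1
    have h2 : (8*K) * (n+2) = 8 * (K * (n+2)) := by ring
    have h3 : (n+2) * (n+3) = (n+2) * (n+2) + (n+2) := by ring
    omega

lemma hsum3 (n : ℕ) : ∑ j ∈ Finset.range (kap n), (n + 3 - 2 ^ (j + 2)) = Vv n + kap n := by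
  have hcong : ∀ j ∈ Finset.range (kap n), n + 3 - 2 ^ (j+2) = (n + 2 - 2 ^ (j+2)) + 1 := by
    intro j hj
    have := kap_char.mp (Finset.mem_range.mp hj); omega
  rw [Finset.sum_congr rfl hcong, Finset.sum_add_distrib, Finset.sum_const,
    Finset.card_range, smul_eq_mul, mul_one, Vv]

lemma key_ineq (n : ℕ) : Phi (q 3) (n+1) + 1 ≤ Phi (q 3) n + q 3 (n+1) := by
  have hT := q3_lower (n+1)
  have hVs := V_succ n
  have hVf := V_formula n
  have hn2 : n + 1 < 2 ^ (kap n + 2) := by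
    by_contra hc
    push_neg at hc
    exact absurd (kap_char.mpr hc) (lt_irrefl _)
  have hn1 : 1 ≤ kap n → 2 ^ (kap n + 1) ≤ n + 1 := by
    intro hK
    have h := kap_char.mp (show kap n - 1 < kap n by omega)
    have he : kap n - 1 + 2 = kap n + 1 := by omega
    rw [he] at h
    exact h
  have hG := gauss n
  have hTT : ∑ t ∈ Finset.range (n+1+1), (t+1) = ∑ t ∈ Finset.range (n+2), (t+1) := rfl
  have hS3 := hsum3 n
  have hterm : ∀ j ∈ Finset.range (kap n),
      q 3 (n + 2 - 2 ^ (j + 2))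
        ≤ q 3 (n + 1 - 2 ^ (j + 2)) + (n + 3 - 2 ^ (j + 2)) + kap n * kap n := by
    intro j hj
    have hj' : 2 ^ (j + 2) ≤ n + 1 := kap_char.mp (Finset.mem_range.mp hj)
    have h4 := four_le_pow j
    have hd := q3_diff (n + 1 - 2 ^ (j + 2))
    have heq : n + 1 - 2 ^ (j + 2) + 1 = n + 2 - 2 ^ (j + 2) := by omega
    rw [heq] at hd
    have heq2 : n + 1 - 2 ^ (j + 2) + 2 = n + 3 - 2 ^ (j + 2) := by omega
    rw [heq2] at hd
    have hk : kap (n + 1 - 2 ^ (j + 2)) ≤ kap n := kap_mono (by omega)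
    have hmul : kap (n + 1 - 2 ^ (j + 2)) * kap (n + 1 - 2 ^ (j + 2)) ≤ kap n * kap n :=
      Nat.mul_le_mul hk hk
    omega
  have hsum : ∑ j ∈ Finset.range (kap n), q 3 (n + 2 - 2 ^ (j + 2))
      ≤ Phi (q 3) n + (Vv n + kap n) + kap n * (kap n * kap n) := by
    calc ∑ j ∈ Finset.range (kap n), q 3 (n + 2 - 2 ^ (j + 2))
        ≤ ∑ j ∈ Finset.range (kap n),
            (q 3 (n + 1 - 2 ^ (j + 2)) + (n + 3 - 2 ^ (j + 2)) + kap n * kap n) :=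
          Finset.sum_le_sum hterm
      _ = Phi (q 3) n + (Vv n + kap n) + kap n * (kap n * kap n) := by
          rw [Finset.sum_add_distrib, Finset.sum_add_distrib, Finset.sum_const,
            Finset.card_range, smul_eq_mul, hS3]
          rfl
  have hc3 : (kap n)^3 = kap n * (kap n * kap n) := by ring
  rcases kap_succ n with hA | ⟨hB, hpow⟩
  · have hPhi : Phi (q 3) (n+1) = ∑ j ∈ Finset.range (kap n), q 3 (n + 2 - 2 ^ (j + 2)) := by
      rw [Phi, hA]
    have hM := arithA n (kap n) (Vv n) hVf hn1
    rw [hA] at hVs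
    omega
  · have hPhi : Phi (q 3) (n+1)
        = (∑ j ∈ Finset.range (kap n), q 3 (n + 2 - 2 ^ (j + 2))) + 1 := by
      have h0 : n + 1 + 1 - 2 ^ (kap n + 2) = 0 := by omega
      rw [Phi, hB, Finset.sum_range_succ, h0, q_zero]
    have hM := arithB n (kap n) (Vv n) hVf hpow
    rw [hB] at hVs
    omega

lemma q4_lt (n : ℕ) : q 4 n < q 4 (n+1) := by
  have h1 := q_succ_identity 3 n
  have h2 := q_succ_identity 3 (n+1)
  norm_num at h1 h2
  rw [Finset.sum_range_succ] at h2
  have hk := key_ineq n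
  omega


end DombiAux

theorem stmt_13 (F : Set ℕ) (hF : F = {x : ℕ | ∃ m : ℕ, x = 2 ^ (m + 2) - 1})
    (A : Set ℕ) (hA : A = Set.univ \ F) :
    1 ≤ r 4 A 0 ∧ ∀ n : ℕ, r 4 A n < r 4 A (n + 1) := by
  subst hF
  subst hA
  constructor
  · rw [DombiAux.r_eq_q, DombiAux.q_zero]
  · intro n
    rw [DombiAux.r_eq_q, DombiAux.r_eq_q]
    exact DombiAux.q4_lt n
end
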